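/- arXiv:2601.13602 — 6 statements merged into one kernel-verified Lean document; each statement's English description precedes it below -/
import Mathlib

section
/- Let k ≥ 1, let m₁,…,m_k > 0 and n₁,…,n_k > 0, and let U be a linear isometry equivalence of EuclideanSpace ℝ (Fin k) onto itself (an orthogonal transformation). Let P be the pushforward under U of the product measure ⨂_{ℓ} gaussianReal 0 m_ℓ (the product over ℓ ∈ Fin k of centered one-dimensional Gaussian measures with variance m_ℓ), and let Q be the pushforward under U of ⨂_{ℓ} gaussianReal 0 n_ℓ. Then the Kullback–Leibler divergence satisfies klDiv P Q = ENNReal.ofReal( (1/2) · Σ_{ℓ=1}^{k} ( m_ℓ/n_ℓ − Real.log(m_ℓ/n_ℓ) − 1 ) ). -/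
open MeasureTheory ProbabilityTheory Classical

/-- The Kullback–Leibler divergence of measures, valued in `ℝ≥0∞`. -/
noncomputable def klDiv {Ω : Type*} [MeasurableSpace Ω] (P Q : Measure Ω) : ENNReal :=
  if P ≪ Q ∧ Integrable (llr P Q) P then ENNReal.ofReal (∫ x, llr P Q x ∂P) else ⊤

section Aux

open Real Filter Set Topology


lemma integrable_sq_exp {b : ℝ} (hb : 0 < b) :
    Integrable (fun x : ℝ => x ^ 2 * Real.exp (-b * x ^ 2)) := by
  have h := integrable_rpow_mul_exp_neg_mul_sq hb (s := 2) (by norm_num)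
  have he : (fun x : ℝ => x ^ (2:ℝ) * Real.exp (-b * x ^ 2))
      = fun x : ℝ => x ^ 2 * Real.exp (-b * x ^ 2) := by
    funext x
    rw [show ((2:ℝ) = ((2:ℕ):ℝ)) by norm_num, Real.rpow_natCast]
  rwa [he] at h

lemma integral_sq_exp {b : ℝ} (hb : 0 < b) :
    ∫ x : ℝ, x ^ 2 * Real.exp (-b * x ^ 2) = Real.sqrt (π / b) / (2 * b) := by
  set g : ℝ → ℝ := fun x => x * Real.exp (-b * x ^ 2) with hg
  set g' : ℝ → ℝ := fun x => Real.exp (-b * x ^ 2) - 2 * b * (x ^ 2 * Real.exp (-b * x ^ 2)) with hg'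
  have hderiv : ∀ x : ℝ, HasDerivAt g (g' x) x := by
    intro x
    have h1 : HasDerivAt (fun x : ℝ => -b * x ^ 2) (-b * (2 * x)) x := by
      simpa using ((hasDerivAt_pow 2 x).const_mul (-b))
    have := (hasDerivAt_id x).mul h1.exp
    refine this.congr_deriv ?_
    simp only [hg', id]; ring
  have htop : Tendsto g atTop (𝓝 0) := by
    have h := rpow_mul_exp_neg_mul_sq_isLittleO_exp_neg hb 1
    have h2 : Tendsto (fun x : ℝ => Real.exp (-(1/2) * x)) atTop (𝓝 0) := by
      apply Real.tendsto_exp_atBot.comp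
      exact (tendsto_const_mul_atBot_of_neg (by norm_num)).mpr tendsto_id
    have h3 := h.trans_tendsto h2
    refine h3.congr' ?_
    filter_upwards with x
    rw [Real.rpow_one]
  have hbot : Tendsto g atBot (𝓝 0) := by
    have h1 : Tendsto (fun x : ℝ => g (-x)) atTop (𝓝 0) := by
      have he : (fun x : ℝ => g (-x)) = fun x => -g x := by
        funext x; show -x * Real.exp (-b * (-x) ^ 2) = -(x * Real.exp (-b * x ^ 2))
        rw [neg_sq]; ring
      rw [he]; simpa using htop.neg
    have h2 := h1.comp tendsto_neg_atBot_atTop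
    simpa [Function.comp_def] using h2
  have hint : Integrable g' := by
    exact (integrable_exp_neg_mul_sq hb).sub ((integrable_sq_exp hb).const_mul _)
  have hIoi : ∫ x in Ioi (0:ℝ), g' x = 0 - g 0 :=
    integral_Ioi_of_hasDerivAt_of_tendsto' (fun x _ => hderiv x) hint.integrableOn htop
  have hIic : ∫ x in Iic (0:ℝ), g' x = g 0 - 0 :=
    integral_Iic_of_hasDerivAt_of_tendsto' (fun x _ => hderiv x) hint.integrableOn hbot
  have htot : ∫ x : ℝ, g' x = 0 := by
    rw [← intervalIntegral.integral_Iic_add_Ioi hint.integrableOn hint.integrableOn, hIoi, hIic]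
    ring
  have hsub : ∫ x : ℝ, g' x = (∫ x : ℝ, Real.exp (-b * x ^ 2)) - 2 * b * ∫ x : ℝ, x ^ 2 * Real.exp (-b * x ^ 2) := by
    rw [hg']
    rw [integral_sub (integrable_exp_neg_mul_sq hb) (((integrable_sq_exp hb).const_mul _))]
    rw [integral_const_mul]
  rw [hsub, integral_gaussian] at htot
  have h2b : (2 * b) ≠ 0 := by positivity
  field_simp at htot ⊢
  linarith


lemma smul_aux {v : NNReal} (hv : 0 < v) (x : ℝ) :
    (gaussianPDFReal 0 v x).toNNReal • (x ^ 2)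
      = (Real.sqrt (2 * π * v))⁻¹ * (x ^ 2 * Real.exp (-(2 * (v:ℝ))⁻¹ * x ^ 2)) := by
  have hnn := gaussianPDFReal_nonneg 0 v x
  rw [NNReal.smul_def, smul_eq_mul, Real.coe_toNNReal _ hnn, gaussianPDFReal]
  have : -(x - 0) ^ 2 / (2 * (v:ℝ)) = -(2 * (v:ℝ))⁻¹ * x ^ 2 := by
    rw [sub_zero]; field_simp
  rw [this]; ring

lemma integrable_sq_gaussian {v : NNReal} (hv : 0 < v) :
    Integrable (fun x : ℝ => x ^ 2) (gaussianReal 0 v) := by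
  have hb : (0:ℝ) < (2 * (v:ℝ))⁻¹ := by positivity
  rw [gaussianReal_of_var_ne_zero 0 hv.ne']
  have hmeas : Measurable fun x => (gaussianPDFReal 0 v x).toNNReal :=
    (measurable_gaussianPDFReal 0 v).real_toNNReal
  have : (gaussianPDF 0 v) = fun x => ((gaussianPDFReal 0 v x).toNNReal : ENNReal) := rfl
  rw [this]
  rw [integrable_withDensity_iff_integrable_smul hmeas]
  have := ((integrable_sq_exp hb).const_mul (Real.sqrt (2 * π * v))⁻¹)
  exact this.congr (Filter.Eventually.of_forall fun x => (smul_aux hv x).symm)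

lemma integral_sq_gaussian {v : NNReal} (hv : 0 < v) :
    ∫ x : ℝ, x ^ 2 ∂(gaussianReal 0 v) = v := by
  have hb : (0:ℝ) < (2 * (v:ℝ))⁻¹ := by positivity
  rw [gaussianReal_of_var_ne_zero 0 hv.ne']
  have hmeas : Measurable fun x => (gaussianPDFReal 0 v x).toNNReal :=
    (measurable_gaussianPDFReal 0 v).real_toNNReal
  have h0 : (gaussianPDF 0 v) = fun x => ((gaussianPDFReal 0 v x).toNNReal : ENNReal) := rfl
  rw [h0, integral_withDensity_eq_integral_smul hmeas]
  calc ∫ x : ℝ, (gaussianPDFReal 0 v x).toNNReal • (x ^ 2)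
      = ∫ x : ℝ, (Real.sqrt (2 * π * v))⁻¹ * (x ^ 2 * Real.exp (-(2 * (v:ℝ))⁻¹ * x ^ 2)) := by
        exact integral_congr_ae (Filter.Eventually.of_forall fun x => smul_aux hv x)
    _ = (Real.sqrt (2 * π * v))⁻¹ * (Real.sqrt (π / (2 * (v:ℝ))⁻¹) / (2 * (2 * (v:ℝ))⁻¹)) := by
        rw [integral_const_mul, integral_sq_exp hb]
    _ = v := by
        rw [show π / (2 * (v:ℝ))⁻¹ = 2 * π * v by field_simp]
        have hs : Real.sqrt (2 * π * v) ≠ 0 := by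
          refine Real.sqrt_ne_zero'.mpr ?_
          have := pi_pos; positivity
        field_simp



lemma lintegral_fin_prod {n : ℕ} {E : Fin n → Type*} [∀ i, MeasurableSpace (E i)]
    (μ : ∀ i, Measure (E i)) [∀ i, SigmaFinite (μ i)]
    (f : ∀ i, E i → ENNReal) (hf : ∀ i, Measurable (f i)) :
    ∫⁻ x, ∏ i, f i (x i) ∂Measure.pi μ = ∏ i, ∫⁻ x, f i x ∂μ i := by
  induction n with
  | zero => simp [lintegral_const, Measure.pi_univ]
  | succ n ih =>
      have hmp := (measurePreserving_piFinSuccAbove μ 0).symm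
      rw [← hmp.lintegral_comp_emb (MeasurableEquiv.measurableEmbedding _)]
      simp_rw [MeasurableEquiv.piFinSuccAbove_symm_apply, Fin.insertNthEquiv,
        Equiv.coe_fn_mk, Fin.prod_univ_succ, Fin.insertNth_zero]
      simp only [Fin.zero_succAbove, cast_eq, Fin.cons_zero, Fin.cons_succ]
      have hg : Measurable fun (b : ∀ j : Fin n, E (Fin.succ j)) => ∏ i, f i.succ (b i) :=
        Finset.measurable_prod _ fun i _ => (hf i.succ).comp (measurable_pi_apply i)
      rw [← ih _ _ (fun i => hf _), ← lintegral_prod_mul (hf 0).aemeasurable hg.aemeasurable]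
      rfl

lemma pi_withDensity {n : ℕ} {E : Fin n → Type*} [∀ i, MeasurableSpace (E i)]
    (μ : ∀ i, Measure (E i)) [∀ i, SigmaFinite (μ i)]
    (f : ∀ i, E i → ENNReal) (hf : ∀ i, Measurable (f i))
    [∀ i, SigmaFinite ((μ i).withDensity (f i))] :
    Measure.pi (fun i => (μ i).withDensity (f i))
      = (Measure.pi μ).withDensity (fun x => ∏ i, f i (x i)) := by
  refine Measure.pi_eq (μ' := (Measure.pi μ).withDensity fun x => ∏ i, f i (x i))
    (μ := fun i => (μ i).withDensity (f i)) fun s hs => ?_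
  rw [withDensity_apply _ (MeasurableSet.univ_pi hs)]
  rw [← lintegral_indicator (MeasurableSet.univ_pi hs)]
  have heq : (Set.univ.pi s).indicator (fun x => ∏ i, f i (x i))
      = fun x => ∏ i, (s i).indicator (f i) (x i) := by
    funext x
    by_cases hx : x ∈ Set.univ.pi s
    · rw [Set.indicator_of_mem hx]
      exact Finset.prod_congr rfl fun i _ =>
        (Set.indicator_of_mem (hx i (Set.mem_univ i)) _).symm
    · rw [Set.indicator_of_notMem hx]
      have hex : ∃ i, x i ∉ s i := by
        by_contra hcon
        push_neg at hcon
        exact hx fun i _ => hcon i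
      obtain ⟨i, hi⟩ := hex
      exact (Finset.prod_eq_zero (Finset.mem_univ i)
        (Set.indicator_of_notMem hi _)).symm
  rw [heq, lintegral_fin_prod μ _ (fun i => (hf i).indicator (hs i))]
  exact Finset.prod_congr rfl fun i _ => by
    rw [lintegral_indicator (hs i), ← withDensity_apply _ (hs i)]

lemma pi_map_eval {n : ℕ} {E : Fin n → Type*} [∀ i, MeasurableSpace (E i)]
    (μ : ∀ i, Measure (E i)) [∀ i, IsProbabilityMeasure (μ i)] (i : Fin n) :
    (Measure.pi μ).map (Function.eval i) = μ i := by
  ext s hs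
  rw [Measure.map_apply (measurable_pi_apply i) hs]
  have : Function.eval i ⁻¹' s = Set.univ.pi (Function.update (fun j => Set.univ) i s) := by
    rw [Set.eval_preimage]
  rw [this, Measure.pi_pi]
  rw [Finset.prod_eq_single i (fun j _ hj => by
    rw [Function.update_of_ne hj]; exact measure_univ) (fun h => absurd (Finset.mem_univ i) h)]
  rw [Function.update_self]


lemma klDiv_map_equiv {α β : Type*} [MeasurableSpace α] [MeasurableSpace β]
    (e : α ≃ᵐ β) (μ ν : Measure α) [SigmaFinite μ] [SigmaFinite ν] :
    klDiv (μ.map e) (ν.map e) = klDiv μ ν := by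
  have hemb := e.measurableEmbedding
  have hAC : μ.map e ≪ ν.map e ↔ μ ≪ ν := by
    constructor
    · intro h
      have h2 := h.map e.symm.measurable
      rwa [Measure.map_map e.symm.measurable e.measurable, Measure.map_map e.symm.measurable
        e.measurable, show (⇑e.symm ∘ ⇑e) = id from funext fun x => e.symm_apply_apply x,
        Measure.map_id, Measure.map_id] at h2
    · intro h
      exact h.map e.measurable
  by_cases hμν : μ ≪ ν
  · have hrn : (fun x => (μ.map e).rnDeriv (ν.map e) (e x)) =ᵐ[μ] μ.rnDeriv ν :=
      hμν.ae_le (hemb.rnDeriv_map μ ν)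
    have hllr : (fun x => llr (μ.map e) (ν.map e) (e x)) =ᵐ[μ] llr μ ν := by
      filter_upwards [hrn] with x hx
      rw [llr, hx, llr]
    have hint : Integrable (llr (μ.map e) (ν.map e)) (μ.map e) ↔ Integrable (llr μ ν) μ := by
      rw [hemb.integrable_map_iff]
      exact ⟨fun h => h.congr hllr, fun h => h.congr hllr.symm⟩
    have hIeq : ∫ x, llr (μ.map e) (ν.map e) x ∂(μ.map e) = ∫ x, llr μ ν x ∂μ := by
      rw [integral_map_equiv]
      exact integral_congr_ae hllr
    rw [klDiv, klDiv, hIeq, if_congr (and_congr hAC hint) rfl rfl]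
  · rw [klDiv, klDiv, if_neg (fun h => hμν (hAC.mp h.1)), if_neg (fun h => hμν h.1)]

lemma phi_eq {v w : NNReal} (hv : 0 < v) (hw : 0 < w) :
    (fun y : ℝ => Real.log (gaussianPDFReal 0 v y) - Real.log (gaussianPDFReal 0 w y))
      = fun y : ℝ => (Real.log (Real.sqrt (2 * π * w)) - Real.log (Real.sqrt (2 * π * v)))
          + y ^ 2 * ((2 * (w:ℝ))⁻¹ - (2 * (v:ℝ))⁻¹) := by
  funext y
  have hlog : ∀ u : NNReal, 0 < u → Real.log (gaussianPDFReal 0 u y)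
      = -Real.log (Real.sqrt (2 * π * u)) - y ^ 2 * (2 * (u:ℝ))⁻¹ := by
    intro u hu
    rw [gaussianPDFReal]
    have hs : (0:ℝ) < Real.sqrt (2 * π * u) := by
      refine Real.sqrt_pos.mpr ?_
      have := pi_pos; positivity
    rw [Real.log_mul (by positivity) (Real.exp_ne_zero _), Real.log_inv, Real.log_exp, sub_zero]
    have : -y ^ 2 / (2 * (u:ℝ)) = -(y ^ 2 * (2 * (u:ℝ))⁻¹) := by field_simp
    rw [this]; ring
  rw [hlog v hv, hlog w hw]; ring

lemma integrable_phi {v w : NNReal} (hv : 0 < v) (hw : 0 < w) :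
    Integrable (fun y : ℝ => Real.log (gaussianPDFReal 0 v y)
      - Real.log (gaussianPDFReal 0 w y)) (gaussianReal 0 v) := by
  rw [phi_eq hv hw]
  exact (integrable_const _).add ((integrable_sq_gaussian hv).mul_const _)

lemma integral_phi {v w : NNReal} (hv : 0 < v) (hw : 0 < w) :
    ∫ y : ℝ, (Real.log (gaussianPDFReal 0 v y) - Real.log (gaussianPDFReal 0 w y))
        ∂(gaussianReal 0 v)
      = 1 / 2 * ((v:ℝ) / w - Real.log ((v:ℝ) / w) - 1) := by
  rw [phi_eq hv hw]
  rw [integral_add (integrable_const _) ((integrable_sq_gaussian hv).mul_const _)]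
  rw [integral_const, integral_mul_const, integral_sq_gaussian hv]
  have h2π : (0:ℝ) < 2 * π := by have := pi_pos; linarith
  have hv' : (0:ℝ) < v := hv
  have hw' : (0:ℝ) < w := hw
  rw [Real.log_sqrt (by positivity), Real.log_sqrt (by positivity)]
  rw [Real.log_mul h2π.ne' hw'.ne', Real.log_mul h2π.ne' hv'.ne',
    Real.log_div hv'.ne' hw'.ne']
  simp only [probReal_univ, smul_eq_mul, one_mul]
  field_simp
  ring


lemma klDiv_pi_gaussian {k : ℕ} (m n : Fin k → NNReal)
    (hm : ∀ ℓ, 0 < m ℓ) (hn : ∀ ℓ, 0 < n ℓ) :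
    klDiv (Measure.pi fun ℓ => gaussianReal 0 (m ℓ)) (Measure.pi fun ℓ => gaussianReal 0 (n ℓ))
      = ENNReal.ofReal (∑ ℓ : Fin k,
          1 / 2 * ((m ℓ : ℝ) / (n ℓ) - Real.log ((m ℓ : ℝ) / (n ℓ)) - 1)) := by
  set μ : Measure (Fin k → ℝ) := Measure.pi fun ℓ => gaussianReal 0 (m ℓ) with hμdef
  set ν : Measure (Fin k → ℝ) := Measure.pi fun ℓ => gaussianReal 0 (n ℓ) with hνdef
  haveI : ∀ i : Fin k, SigmaFinite ((volume : Measure ℝ).withDensity (gaussianPDF 0 (m i))) :=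
    fun i => by rw [← gaussianReal_of_var_ne_zero 0 (hm i).ne']; infer_instance
  haveI : ∀ i : Fin k, SigmaFinite ((volume : Measure ℝ).withDensity (gaussianPDF 0 (n i))) :=
    fun i => by rw [← gaussianReal_of_var_ne_zero 0 (hn i).ne']; infer_instance
  have hμ : μ = (Measure.pi fun _ : Fin k => (volume : Measure ℝ)).withDensity
      (fun x => ∏ i, gaussianPDF 0 (m i) (x i)) := by
    rw [hμdef]
    have he : (fun ℓ => gaussianReal 0 (m ℓ))
        = fun ℓ => (volume : Measure ℝ).withDensity (gaussianPDF 0 (m ℓ)) :=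
      funext fun ℓ => gaussianReal_of_var_ne_zero 0 (hm ℓ).ne'
    rw [he, pi_withDensity _ _ (fun i => measurable_gaussianPDF _ _)]
  have hν : ν = (Measure.pi fun _ : Fin k => (volume : Measure ℝ)).withDensity
      (fun x => ∏ i, gaussianPDF 0 (n i) (x i)) := by
    rw [hνdef]
    have he : (fun ℓ => gaussianReal 0 (n ℓ))
        = fun ℓ => (volume : Measure ℝ).withDensity (gaussianPDF 0 (n ℓ)) :=
      funext fun ℓ => gaussianReal_of_var_ne_zero 0 (hn ℓ).ne'
    rw [he, pi_withDensity _ _ (fun i => measurable_gaussianPDF _ _)]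
  set h : (Fin k → ℝ) → ENNReal :=
    fun x => ∏ i, gaussianPDF 0 (m i) (x i) / gaussianPDF 0 (n i) (x i) with hhdef
  have hhmeas : Measurable h :=
    Finset.measurable_prod _ fun i _ =>
      ((measurable_gaussianPDF _ _).comp (measurable_pi_apply i)).div
        ((measurable_gaussianPDF _ _).comp (measurable_pi_apply i))
  have hGmeas : Measurable fun x : Fin k → ℝ => ∏ i, gaussianPDF 0 (n i) (x i) :=
    Finset.measurable_prod _ fun i _ =>
      (measurable_gaussianPDF _ _).comp (measurable_pi_apply i)
  have hνh : ν.withDensity h = μ := by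
    rw [hν, ← withDensity_mul _ hGmeas hhmeas, hμ]
    congr 1
    funext x
    rw [Pi.mul_apply, hhdef, ← Finset.prod_mul_distrib]
    refine Finset.prod_congr rfl fun i _ => ?_
    exact ENNReal.mul_div_cancel
      (ENNReal.ofReal_pos.mpr (gaussianPDFReal_pos 0 (n i) (x i) (hn i).ne')).ne'
      ENNReal.ofReal_ne_top
  have hAC : μ ≪ ν := hνh ▸ withDensity_absolutelyContinuous ν h
  have hrn : μ.rnDeriv ν =ᵐ[μ] h := by
    have h1 : (ν.withDensity h).rnDeriv ν =ᵐ[ν] h := Measure.rnDeriv_withDensity ν hhmeas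
    rw [hνh] at h1
    exact hAC.ae_le h1
  set φ : Fin k → ℝ → ℝ := fun i y =>
    Real.log (gaussianPDFReal 0 (m i) y) - Real.log (gaussianPDFReal 0 (n i) y) with hφdef
  have hφmeas : ∀ i, Measurable (φ i) := fun i =>
    (Real.measurable_log.comp (measurable_gaussianPDFReal _ _)).sub
      (Real.measurable_log.comp (measurable_gaussianPDFReal _ _))
  have hllr : llr μ ν =ᵐ[μ] fun x => ∑ i, φ i (x i) := by
    filter_upwards [hrn] with x hx
    rw [llr, hx, hhdef]
    have hterm : ∀ i : Fin k, (gaussianPDF 0 (m i) (x i) / gaussianPDF 0 (n i) (x i)).toReal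
        = gaussianPDFReal 0 (m i) (x i) / gaussianPDFReal 0 (n i) (x i) := fun i => by
      rw [gaussianPDF, gaussianPDF, ENNReal.toReal_div,
        ENNReal.toReal_ofReal (gaussianPDFReal_nonneg _ _ _),
        ENNReal.toReal_ofReal (gaussianPDFReal_nonneg _ _ _)]
    rw [ENNReal.toReal_prod, Finset.prod_congr rfl fun i _ => hterm i,
      Real.log_prod (fun i _ => (div_pos (gaussianPDFReal_pos _ _ _ (hm i).ne')
        (gaussianPDFReal_pos _ _ _ (hn i).ne')).ne')]
    exact Finset.sum_congr rfl fun i _ => Real.log_div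
      (gaussianPDFReal_pos _ _ _ (hm i).ne').ne' (gaussianPDFReal_pos _ _ _ (hn i).ne').ne'
  have hφint : ∀ i : Fin k, Integrable (fun x : Fin k → ℝ => φ i (x i)) μ := by
    intro i
    have h1 : Integrable (φ i) (gaussianReal 0 (m i)) := integrable_phi (hm i) (hn i)
    rw [← pi_map_eval (fun ℓ => gaussianReal 0 (m ℓ)) i] at h1
    exact (integrable_map_measure (hφmeas i).aestronglyMeasurable
      (measurable_pi_apply i).aemeasurable).mp h1
  have hsumint : Integrable (fun x : Fin k → ℝ => ∑ i, φ i (x i)) μ :=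
    integrable_finset_sum _ fun i _ => hφint i
  have hint : Integrable (llr μ ν) μ := hsumint.congr hllr.symm
  have hI : ∫ x, llr μ ν x ∂μ
      = ∑ i : Fin k, 1 / 2 * ((m i : ℝ) / (n i) - Real.log ((m i : ℝ) / (n i)) - 1) := by
    rw [integral_congr_ae hllr, integral_finset_sum _ fun i _ => hφint i]
    refine Finset.sum_congr rfl fun i _ => ?_
    have := integral_phi (hm i) (hn i)
    rw [← this, ← pi_map_eval (fun ℓ => gaussianReal 0 (m ℓ)) i,
      integral_map (measurable_pi_apply i).aemeasurable (hφmeas i).aestronglyMeasurable]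
  rw [klDiv, if_pos ⟨hAC, hint⟩, hI]


end Aux

/-- Closed-form KL divergence between two zero-mean multivariate Gaussians whose
covariance matrices are simultaneously diagonalized by the same orthogonal
transformation `U`, with eigenvalues `(m ℓ)` and `(n ℓ)`. -/
theorem stmt_2 (k : ℕ) (hk : 1 ≤ k) (m n : Fin k → NNReal)
    (hm : ∀ ℓ, 0 < m ℓ) (hn : ∀ ℓ, 0 < n ℓ)
    (U : EuclideanSpace ℝ (Fin k) ≃ₗᵢ[ℝ] EuclideanSpace ℝ (Fin k))
    (P Q : Measure (EuclideanSpace ℝ (Fin k)))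
    (hP : P = Measure.map U (Measure.map (MeasurableEquiv.toLp 2 (Fin k → ℝ)) (Measure.pi fun ℓ => gaussianReal 0 (m ℓ))))
    (hQ : Q = Measure.map U (Measure.map (MeasurableEquiv.toLp 2 (Fin k → ℝ)) (Measure.pi fun ℓ => gaussianReal 0 (n ℓ)))) :
    klDiv P Q = ENNReal.ofReal ((1 / 2) * ∑ ℓ : Fin k,
      ((m ℓ : ℝ) / (n ℓ : ℝ) - Real.log ((m ℓ : ℝ) / (n ℓ : ℝ)) - 1)) := by
  let e : EuclideanSpace ℝ (Fin k) ≃ᵐ EuclideanSpace ℝ (Fin k) :=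
    U.toHomeomorph.toMeasurableEquiv
  have hUe : (⇑U : EuclideanSpace ℝ (Fin k) → EuclideanSpace ℝ (Fin k)) = ⇑e := rfl
  haveI : SigmaFinite (Measure.map (MeasurableEquiv.toLp 2 (Fin k → ℝ))
      (Measure.pi fun ℓ => gaussianReal 0 (m ℓ))) :=
    inferInstance
  haveI : SigmaFinite (Measure.map (MeasurableEquiv.toLp 2 (Fin k → ℝ))
      (Measure.pi fun ℓ => gaussianReal 0 (n ℓ))) :=
    inferInstance
  rw [hP, hQ, hUe, klDiv_map_equiv e _ _, klDiv_map_equiv (MeasurableEquiv.toLp 2 (Fin k → ℝ)) _ _, klDiv_pi_gaussian m n hm hn, Finset.mul_sum]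
end

section
/- Let μ > 0 and let α, σ : ℝ → ℝ be three times continuously differentiable on an open interval containing [0,1], with α(t)²·μ + σ(t)² > 0 for all t ∈ [0,1]. Then there exist a constant C > 0 and N₀ ∈ ℕ such that for all N ≥ N₀: every argument α((j−1)/N)·α(j/N)·μ + σ((j−1)/N)·σ(j/N) appearing in S_N(μ) is positive, and | S_N(μ) − Σ_{j=1}^{N} ( F_μ(j/N)·(1/N) + G_μ(j/N)·(1/N²) ) | ≤ C/N². -/
open Set

theorem hasDerivAt_congr_d {f : ℝ → ℝ} {a b x : ℝ} (h : HasDerivAt f a x) (e : a = b) :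
    HasDerivAt f b x := e ▸ h

def qf (α σ f g : ℝ → ℝ) (μ : ℝ) (p : ℝ × ℝ) : ℝ :=
  f (p.1 - p.2) * (α p.1 * μ) + g (p.1 - p.2) * σ p.1

theorem qf_contOn {α σ f g : ℝ → ℝ} {μ : ℝ} {J : Set ℝ} {K : Set (ℝ × ℝ)}
    (hα : ContinuousOn α J) (hσ : ContinuousOn σ J)
    (hf : ContinuousOn f J) (hg : ContinuousOn g J)
    (h1 : ∀ p ∈ K, p.1 ∈ J) (h2 : ∀ p ∈ K, p.1 - p.2 ∈ J) :
    ContinuousOn (qf α σ f g μ) K := by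
  apply ContinuousOn.add
  · exact (hf.comp (continuous_fst.sub continuous_snd).continuousOn h2).mul
      ((hα.comp continuous_fst.continuousOn h1).mul continuousOn_const)
  · exact (hg.comp (continuous_fst.sub continuous_snd).continuousOn h2).mul
      (hσ.comp continuous_fst.continuousOn h1)

theorem qf_hasDerivAt {α σ f g f' g' : ℝ → ℝ} {μ t u : ℝ}
    (hf : HasDerivAt f (f' (t - u)) (t - u)) (hg : HasDerivAt g (g' (t - u)) (t - u)) :
    HasDerivAt (fun v => qf α σ f g μ (t, v)) (-(qf α σ f' g' μ (t, u))) u := by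
  have hsub : HasDerivAt (fun v : ℝ => t - v) (-1) u := (hasDerivAt_id u).const_sub t
  have h1 : HasDerivAt (fun v => f (t - v)) (-(f' (t - u))) u := by
    simpa [Function.comp_def] using hf.comp u hsub
  have h2 : HasDerivAt (fun v => g (t - v)) (-(g' (t - u))) u := by
    simpa [Function.comp_def] using hg.comp u hsub
  have h3 := (h1.mul_const (α t * μ)).add (h2.mul_const (σ t))
  exact hasDerivAt_congr_d h3 (by simp only [qf]; ring)

theorem taylor3_aux {f0 f1 f2 f3 : ℝ → ℝ} {x M : ℝ} (hx : 0 ≤ x)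
    (h0 : ∀ u ∈ Set.Icc (0:ℝ) x, HasDerivAt f0 (f1 u) u)
    (h1 : ∀ u ∈ Set.Icc (0:ℝ) x, HasDerivAt f1 (f2 u) u)
    (h2 : ∀ u ∈ Set.Icc (0:ℝ) x, HasDerivAt f2 (f3 u) u)
    (hM : ∀ u ∈ Set.Icc (0:ℝ) x, |f3 u| ≤ M) :
    |f0 x - f0 0 - f1 0 * x - f2 0 / 2 * x ^ 2| ≤ M / 6 * x ^ 3 := by
  have hlin : ∀ (c u : ℝ), HasDerivAt (fun y : ℝ => c * y) c u := fun c u => by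
    simpa using (hasDerivAt_id u).const_mul c
  have d2 : ∀ u ∈ Set.Icc (0:ℝ) x, HasDerivAt (fun u => f2 u - f2 0) (f3 u) u :=
    fun u hu => (h2 u hu).sub_const _
  have d1 : ∀ u ∈ Set.Icc (0:ℝ) x,
      HasDerivAt (fun u => f1 u - f1 0 - f2 0 * u) (f2 u - f2 0) u :=
    fun u hu => ((h1 u hu).sub_const _).sub (hlin (f2 0) u)
  have d0 : ∀ u ∈ Set.Icc (0:ℝ) x,
      HasDerivAt (fun u => f0 u - f0 0 - f1 0 * u - f2 0 / 2 * u ^ 2)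
        (f1 u - f1 0 - f2 0 * u) u := by
    intro u hu
    have hp : HasDerivAt (fun y : ℝ => f2 0 / 2 * y ^ 2) (f2 0 * u) u :=
      hasDerivAt_congr_d ((hasDerivAt_pow 2 u).const_mul (f2 0 / 2)) (by ring)
    exact hasDerivAt_congr_d ((((h0 u hu).sub_const _).sub (hlin (f1 0) u)).sub hp) (by ring)
  have hA : ∀ u ∈ Set.Icc (0:ℝ) x, |f2 u - f2 0| ≤ M * u := by
    have := image_norm_le_of_norm_deriv_right_le_deriv_boundary
      (f := fun u => f2 u - f2 0) (f' := f3) (a := 0) (b := x)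
      (fun u hu => (d2 u hu).continuousAt.continuousWithinAt)
      (fun u hu => (d2 u (mem_Icc_of_Ico hu)).hasDerivWithinAt)
      (B := fun u => M * u) (B' := fun _ => M)
      (by simp)
      (fun u => hlin M u)
      (fun u hu => by simpa [Real.norm_eq_abs] using hM u (mem_Icc_of_Ico hu))
    intro u hu
    simpa [Real.norm_eq_abs] using this hu
  have hB : ∀ u ∈ Set.Icc (0:ℝ) x, |f1 u - f1 0 - f2 0 * u| ≤ M * u ^ 2 / 2 := by
    have := image_norm_le_of_norm_deriv_right_le_deriv_boundary
      (f := fun u => f1 u - f1 0 - f2 0 * u) (f' := fun u => f2 u - f2 0) (a := 0) (b := x)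
      (fun u hu => (d1 u hu).continuousAt.continuousWithinAt)
      (fun u hu => (d1 u (mem_Icc_of_Ico hu)).hasDerivWithinAt)
      (B := fun u => M * u ^ 2 / 2) (B' := fun u => M * u)
      (by simp)
      (fun u => hasDerivAt_congr_d ((hasDerivAt_pow 2 u).const_mul M |>.div_const 2) (by ring))
      (fun u hu => by simpa [Real.norm_eq_abs] using hA u (mem_Icc_of_Ico hu))
    intro u hu
    simpa [Real.norm_eq_abs] using this hu
  have hC := image_norm_le_of_norm_deriv_right_le_deriv_boundary
      (f := fun u => f0 u - f0 0 - f1 0 * u - f2 0 / 2 * u ^ 2)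
      (f' := fun u => f1 u - f1 0 - f2 0 * u) (a := 0) (b := x)
      (fun u hu => (d0 u hu).continuousAt.continuousWithinAt)
      (fun u hu => (d0 u (mem_Icc_of_Ico hu)).hasDerivWithinAt)
      (B := fun u => M / 6 * u ^ 3) (B' := fun u => M * u ^ 2 / 2)
      (by simp)
      (fun u => hasDerivAt_congr_d ((hasDerivAt_pow 3 u).const_mul (M / 6)) (by ring))
      (fun u hu => by simpa [Real.norm_eq_abs] using hB u (mem_Icc_of_Ico hu))
  have := hC (right_mem_Icc.mpr hx)
  simpa [Real.norm_eq_abs] using this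


/-- Taylor/Euler–Maclaurin-type expansion of the discretized reverse-sampling
log-variance sum `S_N(μ)` to second order, with uniform `O(1/N²)` error. -/
theorem stmt_3 (μ : ℝ) (hμ : 0 < μ) (α σ : ℝ → ℝ) (s : Set ℝ) (hs : IsOpen s)
    (hsub : Set.Icc (0 : ℝ) 1 ⊆ s)
    (hα : ContDiffOn ℝ 3 α s) (hσ : ContDiffOn ℝ 3 σ s)
    (hpos : ∀ t ∈ Set.Icc (0 : ℝ) 1, 0 < (α t) ^ 2 * μ + (σ t) ^ 2)
    (S : ℕ → ℝ)
    (hS : ∀ N : ℕ, S N = ∑ j ∈ Finset.Icc 1 N,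
      Real.log ((α (((j : ℝ) - 1) / (N : ℝ)) * α ((j : ℝ) / (N : ℝ)) * μ
          + σ (((j : ℝ) - 1) / (N : ℝ)) * σ ((j : ℝ) / (N : ℝ)))
        / ((α ((j : ℝ) / (N : ℝ))) ^ 2 * μ + (σ ((j : ℝ) / (N : ℝ))) ^ 2)))
    (F G : ℝ → ℝ)
    (hF : ∀ t, F t = -(α t * deriv α t * μ + σ t * deriv σ t)
        / ((α t) ^ 2 * μ + (σ t) ^ 2))
    (hG : ∀ t, G t = (α t * deriv (deriv α) t * μ + σ t * deriv (deriv σ) t)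
          / (2 * ((α t) ^ 2 * μ + (σ t) ^ 2))
        - (α t * deriv α t * μ + σ t * deriv σ t) ^ 2
          / (2 * ((α t) ^ 2 * μ + (σ t) ^ 2) ^ 2)) :
    ∃ C > 0, ∃ N₀ : ℕ, ∀ N ≥ N₀,
      (∀ j ∈ Finset.Icc 1 N,
        0 < α (((j : ℝ) - 1) / (N : ℝ)) * α ((j : ℝ) / (N : ℝ)) * μ
          + σ (((j : ℝ) - 1) / (N : ℝ)) * σ ((j : ℝ) / (N : ℝ))) ∧
      |S N - ∑ j ∈ Finset.Icc 1 N,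
          (F ((j : ℝ) / (N : ℝ)) * (1 / (N : ℝ)) + G ((j : ℝ) / (N : ℝ)) * (1 / (N : ℝ) ^ 2))|
        ≤ C / (N : ℝ) ^ 2 := by
  classical
  -- smoothness package
  have hαd : DifferentiableOn ℝ α s := hα.differentiableOn (by norm_num)
  have hσd : DifferentiableOn ℝ σ s := hσ.differentiableOn (by norm_num)
  have hα1 : ContDiffOn ℝ 2 (deriv α) s := hα.deriv_of_isOpen hs (by norm_num)
  have hσ1 : ContDiffOn ℝ 2 (deriv σ) s := hσ.deriv_of_isOpen hs (by norm_num)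
  have hα2 : ContDiffOn ℝ 1 (deriv (deriv α)) s := hα1.deriv_of_isOpen hs (by norm_num)
  have hσ2 : ContDiffOn ℝ 1 (deriv (deriv σ)) s := hσ1.deriv_of_isOpen hs (by norm_num)
  have hα3' : ContDiffOn ℝ 0 (deriv (deriv (deriv α))) s := hα2.deriv_of_isOpen hs (by norm_num)
  have hσ3' : ContDiffOn ℝ 0 (deriv (deriv (deriv σ))) s := hσ2.deriv_of_isOpen hs (by norm_num)
  have hα3 : ContinuousOn (deriv (deriv (deriv α))) s := hα3'.continuousOn
  have hσ3 : ContinuousOn (deriv (deriv (deriv σ))) s := hσ3'.continuousOn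
  have dA : ∀ y ∈ s, HasDerivAt α (deriv α y) y := fun y hy =>
    (hαd.differentiableAt (hs.mem_nhds hy)).hasDerivAt
  have dB : ∀ y ∈ s, HasDerivAt σ (deriv σ y) y := fun y hy =>
    (hσd.differentiableAt (hs.mem_nhds hy)).hasDerivAt
  have dA1 : ∀ y ∈ s, HasDerivAt (deriv α) (deriv (deriv α) y) y := fun y hy =>
    ((hα1.differentiableOn (by norm_num)).differentiableAt (hs.mem_nhds hy)).hasDerivAt
  have dB1 : ∀ y ∈ s, HasDerivAt (deriv σ) (deriv (deriv σ) y) y := fun y hy =>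
    ((hσ1.differentiableOn (by norm_num)).differentiableAt (hs.mem_nhds hy)).hasDerivAt
  have dA2 : ∀ y ∈ s, HasDerivAt (deriv (deriv α)) (deriv (deriv (deriv α)) y) y := fun y hy =>
    ((hα2.differentiableOn (by norm_num)).differentiableAt (hs.mem_nhds hy)).hasDerivAt
  have dB2 : ∀ y ∈ s, HasDerivAt (deriv (deriv σ)) (deriv (deriv (deriv σ)) y) y := fun y hy =>
    ((hσ2.differentiableOn (by norm_num)).differentiableAt (hs.mem_nhds hy)).hasDerivAt
  -- the open set where the denominator is positive
  have hcont0 : ContinuousOn (fun t => α t ^ 2 * μ + σ t ^ 2) s :=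
    ((hα.continuousOn.pow 2).mul continuousOn_const).add (hσ.continuousOn.pow 2)
  set V := s ∩ (fun t => α t ^ 2 * μ + σ t ^ 2) ⁻¹' Ioi 0 with hVdef
  have hV : IsOpen V := hcont0.isOpen_inter_preimage hs isOpen_Ioi
  have hIV : Icc (0:ℝ) 1 ⊆ V := fun t ht => ⟨hsub ht, hpos t ht⟩
  obtain ⟨δ₀, hδ₀, hthick⟩ := isCompact_Icc.exists_thickening_subset_open hV hIV
  -- the compact interval J
  have hJV : Icc (-(δ₀/2)) (1 + δ₀/2) ⊆ V := by
    intro y hy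
    apply hthick
    rw [Metric.mem_thickening_iff]
    rcases le_total y 0 with h | h
    · refine ⟨0, ⟨le_refl 0, by norm_num⟩, ?_⟩
      rw [Real.dist_eq, sub_zero, abs_of_nonpos h]
      linarith [hy.1]
    · rcases le_total y 1 with h1 | h1
      · exact ⟨y, ⟨h, h1⟩, by simpa using hδ₀⟩
      · refine ⟨1, ⟨by norm_num, le_refl 1⟩, ?_⟩
        rw [Real.dist_eq, abs_of_nonneg (by linarith)]
        linarith [hy.2]
  have hJs : Icc (-(δ₀/2)) (1 + δ₀/2) ⊆ s := fun y hy => (hJV hy).1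
  have hJpos : ∀ y ∈ Icc (-(δ₀/2)) (1 + δ₀/2), 0 < α y ^ 2 * μ + σ y ^ 2 :=
    fun y hy => (hJV hy).2
  have hJne : (Icc (-(δ₀/2)) (1 + δ₀/2)).Nonempty := ⟨0, by constructor <;> linarith⟩
  have h01J : Icc (0:ℝ) 1 ⊆ Icc (-(δ₀/2)) (1 + δ₀/2) := Icc_subset_Icc (by linarith) (by linarith)
  obtain ⟨z, hzJ, hzmin⟩ := isCompact_Icc.exists_isMinOn hJne (hcont0.mono hJs)
  set ε := α z ^ 2 * μ + σ z ^ 2 with hεdef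
  have hε : 0 < ε := hJpos z hzJ
  have hεmin : ∀ y ∈ Icc (-(δ₀/2)) (1 + δ₀/2), ε ≤ α y ^ 2 * μ + σ y ^ 2 :=
    fun y hy => hzmin hy
  -- uniform continuity of the two-variable product on J × J
  have cJα : ContinuousOn α (Icc (-(δ₀/2)) (1 + δ₀/2)) := hα.continuousOn.mono hJs
  have cJσ : ContinuousOn σ (Icc (-(δ₀/2)) (1 + δ₀/2)) := hσ.continuousOn.mono hJs
  have hgg : ContinuousOn (fun p : ℝ × ℝ => α p.1 * (α p.2 * μ) + σ p.1 * σ p.2)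
      (Icc (-(δ₀/2)) (1 + δ₀/2) ×ˢ Icc (-(δ₀/2)) (1 + δ₀/2)) := by
    apply ContinuousOn.add
    · exact (cJα.comp continuous_fst.continuousOn (fun p hp => hp.1)).mul
        ((cJα.comp continuous_snd.continuousOn (fun p hp => hp.2)).mul continuousOn_const)
    · exact (cJσ.comp continuous_fst.continuousOn (fun p hp => hp.1)).mul
        (cJσ.comp continuous_snd.continuousOn (fun p hp => hp.2))
  have hUC := (isCompact_Icc.prod isCompact_Icc).uniformContinuousOn_of_continuous hgg
  rw [Metric.uniformContinuousOn_iff] at hUC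
  obtain ⟨δ₁, hδ₁, hUC⟩ := hUC (ε/2) (by positivity)
  set δ := min (δ₀/2) (δ₁/2) with hδdef
  have hδ : 0 < δ := lt_min (by linarith) (by linarith)
  have keypos : ∀ t' ∈ Icc (-(δ₀/2)) (1 + δ₀/2), ∀ s' ∈ Icc (-(δ₀/2)) (1 + δ₀/2),
      |s' - t'| ≤ δ → ε/2 ≤ α s' * (α t' * μ) + σ s' * σ t' := by
    intro t' ht' s' hs' hd
    have hdd : |s' - t'| < δ₁ :=
      lt_of_le_of_lt hd (lt_of_le_of_lt (min_le_right _ _) (by linarith))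
    have hdist : dist ((s', t') : ℝ × ℝ) (t', t') < δ₁ := by
      rw [Prod.dist_eq]
      simp only [Real.dist_eq, sub_self, abs_zero]
      exact max_lt hdd hδ₁
    have h2 := hUC _ (Set.mk_mem_prod hs' ht') _ (Set.mk_mem_prod ht' ht') hdist
    rw [Real.dist_eq] at h2
    have h3 := abs_lt.mp h2
    have h4 : ε ≤ α t' * (α t' * μ) + σ t' * σ t' := by
      have := hεmin t' ht'
      nlinarith [this]
    simp only at h3
    linarith [h3.1, h3.2]
  -- the compact rectangle and the bound M on the third derivative
  set K2 := Icc (0:ℝ) 1 ×ˢ Icc (0:ℝ) δ with hK2def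
  have hK2c : IsCompact K2 := isCompact_Icc.prod isCompact_Icc
  have hK2ne : K2.Nonempty := ⟨(0,0), Set.mk_mem_prod ⟨le_refl 0, by norm_num⟩ ⟨le_refl 0, hδ.le⟩⟩
  have hmem1 : ∀ p ∈ K2, p.1 ∈ Icc (-(δ₀/2)) (1 + δ₀/2) := fun p hp => h01J hp.1
  have hmem2 : ∀ p ∈ K2, p.1 - p.2 ∈ Icc (-(δ₀/2)) (1 + δ₀/2) := by
    intro p hp
    have h1 := hp.1
    have h2 := hp.2
    have hδ2 : δ ≤ δ₀/2 := min_le_left _ _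
    exact ⟨by linarith [h1.1, h2.2], by linarith [h1.2, h2.1]⟩
  have cJα1 : ContinuousOn (deriv α) (Icc (-(δ₀/2)) (1 + δ₀/2)) := hα1.continuousOn.mono hJs
  have cJσ1 : ContinuousOn (deriv σ) (Icc (-(δ₀/2)) (1 + δ₀/2)) := hσ1.continuousOn.mono hJs
  have cJα2 : ContinuousOn (deriv (deriv α)) (Icc (-(δ₀/2)) (1 + δ₀/2)) :=
    hα2.continuousOn.mono hJs
  have cJσ2 : ContinuousOn (deriv (deriv σ)) (Icc (-(δ₀/2)) (1 + δ₀/2)) :=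
    hσ2.continuousOn.mono hJs
  have cJα3 : ContinuousOn (deriv (deriv (deriv α))) (Icc (-(δ₀/2)) (1 + δ₀/2)) := hα3.mono hJs
  have cJσ3 : ContinuousOn (deriv (deriv (deriv σ))) (Icc (-(δ₀/2)) (1 + δ₀/2)) := hσ3.mono hJs
  have cq0 : ContinuousOn (qf α σ α σ μ) K2 := qf_contOn cJα cJσ cJα cJσ hmem1 hmem2
  have cq1 : ContinuousOn (qf α σ (deriv α) (deriv σ) μ) K2 :=
    qf_contOn cJα cJσ cJα1 cJσ1 hmem1 hmem2
  have cq2 : ContinuousOn (qf α σ (deriv (deriv α)) (deriv (deriv σ)) μ) K2 :=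
    qf_contOn cJα cJσ cJα2 cJσ2 hmem1 hmem2
  have cq3 : ContinuousOn (qf α σ (deriv (deriv (deriv α))) (deriv (deriv (deriv σ))) μ) K2 :=
    qf_contOn cJα cJσ cJα3 cJσ3 hmem1 hmem2
  have hq0posK : ∀ p ∈ K2, ε/2 ≤ qf α σ α σ μ p := by
    intro p hp
    have habs : |p.1 - p.2 - p.1| ≤ δ := by
      rw [show p.1 - p.2 - p.1 = -p.2 by ring, abs_neg, abs_of_nonneg hp.2.1]
      exact hp.2.2
    have := keypos p.1 (hmem1 p hp) (p.1 - p.2) (hmem2 p hp) habs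
    simpa [qf] using this
  set Ψ3 : ℝ × ℝ → ℝ := fun p =>
    ((-(qf α σ (deriv (deriv (deriv α))) (deriv (deriv (deriv σ))) μ p) * qf α σ α σ μ p
        + qf α σ (deriv α) (deriv σ) μ p * qf α σ (deriv (deriv α)) (deriv (deriv σ)) μ p)
        * (qf α σ α σ μ p) ^ 2
      + (qf α σ (deriv (deriv α)) (deriv (deriv σ)) μ p * qf α σ α σ μ p
          - qf α σ (deriv α) (deriv σ) μ p * qf α σ (deriv α) (deriv σ) μ p)
        * (2 * qf α σ α σ μ p * qf α σ (deriv α) (deriv σ) μ p))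
      / ((qf α σ α σ μ p ^ 2) ^ 2) with hΨ3def
  have cΨ3 : ContinuousOn Ψ3 K2 := by
    apply ContinuousOn.div
    · exact ((cq3.neg.mul cq0).add (cq1.mul cq2)).mul (cq0.pow 2) |>.add
        (((cq2.mul cq0).sub (cq1.mul cq1)).mul ((continuousOn_const.mul cq0).mul cq1))
    · exact (cq0.pow 2).pow 2
    · intro p hp
      have := hq0posK p hp
      have h0 : 0 < qf α σ α σ μ p := by linarith
      positivity
  obtain ⟨pM, hpM, hMmax⟩ := hK2c.exists_isMaxOn hK2ne cΨ3.abs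
  set M := |Ψ3 pM| with hMdef
  have hM0 : 0 ≤ M := abs_nonneg _
  have hMb : ∀ p ∈ K2, |Ψ3 p| ≤ M := fun p hp => hMmax hp
  refine ⟨M/6 + 1, by positivity, ⌈1/δ⌉₊ + 1, ?_⟩
  intro N hN
  have hN1 : 1 ≤ N := le_trans (Nat.le_add_left 1 _) hN
  have hNR : (1:ℝ) ≤ (N:ℝ) := by exact_mod_cast hN1
  have hNpos : (0:ℝ) < N := by linarith
  have hxδ : 1/(N:ℝ) ≤ δ := by
    have h1 : 1/δ ≤ (⌈1/δ⌉₊ : ℝ) := Nat.le_ceil _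
    have h2 : ((⌈1/δ⌉₊ : ℝ) + 1) ≤ (N:ℝ) := by exact_mod_cast hN
    rw [div_le_iff₀ hNpos]
    rw [div_le_iff₀ hδ] at h1
    nlinarith
  have key : ∀ j ∈ Finset.Icc 1 N,
      (0 < α (((j : ℝ) - 1) / (N : ℝ)) * α ((j : ℝ) / (N : ℝ)) * μ
          + σ (((j : ℝ) - 1) / (N : ℝ)) * σ ((j : ℝ) / (N : ℝ))) ∧
      |Real.log ((α (((j : ℝ) - 1) / (N : ℝ)) * α ((j : ℝ) / (N : ℝ)) * μ
          + σ (((j : ℝ) - 1) / (N : ℝ)) * σ ((j : ℝ) / (N : ℝ)))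
        / ((α ((j : ℝ) / (N : ℝ))) ^ 2 * μ + (σ ((j : ℝ) / (N : ℝ))) ^ 2))
        - (F ((j : ℝ) / (N : ℝ)) * (1 / (N : ℝ)) + G ((j : ℝ) / (N : ℝ)) * (1 / (N : ℝ) ^ 2))|
        ≤ M/6 * (1/(N:ℝ))^3 := by
    intro j hj
    rw [Finset.mem_Icc] at hj
    have hj1 : (1:ℝ) ≤ (j:ℝ) := by exact_mod_cast hj.1
    have hjN : (j:ℝ) ≤ (N:ℝ) := by exact_mod_cast hj.2
    set t := (j:ℝ)/(N:ℝ) with htdef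
    set x := 1/(N:ℝ) with hxdef
    have hx0 : 0 < x := by rw [hxdef]; positivity
    have ht0 : 0 ≤ t := by rw [htdef]; positivity
    have ht1 : t ≤ 1 := by rw [htdef, div_le_one hNpos]; exact hjN
    have hxt : x ≤ t := by rw [htdef, hxdef]; gcongr
    have ht01 : t ∈ Icc (0:ℝ) 1 := ⟨ht0, ht1⟩
    have hKmem : ∀ u ∈ Icc (0:ℝ) x, ((t, u) : ℝ × ℝ) ∈ K2 := fun u hu =>
      Set.mk_mem_prod ht01 ⟨hu.1, le_trans hu.2 hxδ⟩
    have htus : ∀ u ∈ Icc (0:ℝ) x, t - u ∈ s := fun u hu => hJs (hmem2 _ (hKmem u hu))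
    have hq0pos : ∀ u ∈ Icc (0:ℝ) x, 0 < qf α σ α σ μ (t, u) := fun u hu =>
      lt_of_lt_of_le (by linarith) (hq0posK _ (hKmem u hu))
    have dψ0 : ∀ u ∈ Icc (0:ℝ) x, HasDerivAt (fun v => Real.log (qf α σ α σ μ (t, v)))
        (-(qf α σ (deriv α) (deriv σ) μ (t, u)) / qf α σ α σ μ (t, u)) u := by
      intro u hu
      exact (qf_hasDerivAt (dA _ (htus u hu)) (dB _ (htus u hu))).log (ne_of_gt (hq0pos u hu))
    have dψ1 : ∀ u ∈ Icc (0:ℝ) x, HasDerivAt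
        (fun v => -(qf α σ (deriv α) (deriv σ) μ (t, v)) / qf α σ α σ μ (t, v))
        ((qf α σ (deriv (deriv α)) (deriv (deriv σ)) μ (t, u) * qf α σ α σ μ (t, u)
          - qf α σ (deriv α) (deriv σ) μ (t, u) * qf α σ (deriv α) (deriv σ) μ (t, u))
          / (qf α σ α σ μ (t, u)) ^ 2) u := by
      intro u hu
      have h1 := (qf_hasDerivAt (α := α) (σ := σ) (μ := μ) (dA1 _ (htus u hu)) (dB1 _ (htus u hu))).neg
      have h0 := qf_hasDerivAt (α := α) (σ := σ) (μ := μ) (dA _ (htus u hu)) (dB _ (htus u hu))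
      exact hasDerivAt_congr_d (h1.div h0 (ne_of_gt (hq0pos u hu))) (by simp only [Pi.neg_apply, Pi.mul_apply, Pi.sub_apply, Pi.pow_apply]; ring)
    have dψ2 : ∀ u ∈ Icc (0:ℝ) x, HasDerivAt
        (fun v => (qf α σ (deriv (deriv α)) (deriv (deriv σ)) μ (t, v) * qf α σ α σ μ (t, v)
          - qf α σ (deriv α) (deriv σ) μ (t, v) * qf α σ (deriv α) (deriv σ) μ (t, v))
          / (qf α σ α σ μ (t, v)) ^ 2)
        (Ψ3 (t, u)) u := by
      intro u hu
      have h0 := qf_hasDerivAt (α := α) (σ := σ) (μ := μ) (dA _ (htus u hu)) (dB _ (htus u hu))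
      have h1 := qf_hasDerivAt (α := α) (σ := σ) (μ := μ) (dA1 _ (htus u hu)) (dB1 _ (htus u hu))
      have h2 := qf_hasDerivAt (α := α) (σ := σ) (μ := μ) (dA2 _ (htus u hu)) (dB2 _ (htus u hu))
      have hnum := (h2.mul h0).sub (h1.mul h1)
      have hden := h0.pow 2
      have hne : (qf α σ α σ μ (t, u)) ^ 2 ≠ 0 := pow_ne_zero 2 (ne_of_gt (hq0pos u hu))
      exact hasDerivAt_congr_d (hnum.div hden hne) (by rw [hΨ3def]; simp only [Pi.neg_apply, Pi.mul_apply, Pi.sub_apply, Pi.pow_apply]; ring)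
    have hbound3 : ∀ u ∈ Icc (0:ℝ) x, |Ψ3 (t, u)| ≤ M := fun u hu => hMb _ (hKmem u hu)
    have htay := taylor3_aux hx0.le dψ0 dψ1 dψ2 hbound3
    have hApos : 0 < qf α σ α σ μ (t, x) := hq0pos x (right_mem_Icc.mpr hx0.le)
    have hBpos : 0 < qf α σ α σ μ (t, 0) := hq0pos 0 (left_mem_Icc.mpr hx0.le)
    have hAeq : α (((j : ℝ) - 1) / (N : ℝ)) * α t * μ + σ (((j : ℝ) - 1) / (N : ℝ)) * σ t
        = qf α σ α σ μ (t, x) := by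
      have e1 : ((j:ℝ) - 1)/(N:ℝ) = t - x := by rw [htdef, hxdef]; ring
      simp only [qf, e1]
      ring
    have hBeq : (α t) ^ 2 * μ + (σ t) ^ 2 = qf α σ α σ μ (t, 0) := by
      simp only [qf, sub_zero]
      ring
    have hFeq : F t = -(qf α σ (deriv α) (deriv σ) μ (t, 0)) / qf α σ α σ μ (t, 0) := by
      rw [hF t]
      simp only [qf, sub_zero]
      congr 1 <;> ring
    have hGeq : G t = ((qf α σ (deriv (deriv α)) (deriv (deriv σ)) μ (t, 0) * qf α σ α σ μ (t, 0)
        - qf α σ (deriv α) (deriv σ) μ (t, 0) * qf α σ (deriv α) (deriv σ) μ (t, 0))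
        / (qf α σ α σ μ (t, 0)) ^ 2) / 2 := by
      rw [hG t]
      have hne : (α t) ^ 2 * μ + (σ t) ^ 2 ≠ 0 := (hpos t ht01).ne'
      simp only [qf, sub_zero]
      have h2 : α t * (α t * μ) + σ t * σ t = (α t) ^ 2 * μ + (σ t) ^ 2 := by ring
      rw [h2]
      field_simp
    constructor
    · rw [hAeq]; exact hApos
    · have e2 : 1/(N:ℝ) ^ 2 = x ^ 2 := by rw [hxdef]; ring
      rw [hAeq, hBeq, Real.log_div (ne_of_gt hApos) (ne_of_gt hBpos), hFeq, hGeq, e2]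
      have harg : Real.log (qf α σ α σ μ (t, x)) - Real.log (qf α σ α σ μ (t, 0))
          - (-(qf α σ (deriv α) (deriv σ) μ (t, 0)) / qf α σ α σ μ (t, 0) * x
            + (qf α σ (deriv (deriv α)) (deriv (deriv σ)) μ (t, 0) * qf α σ α σ μ (t, 0)
              - qf α σ (deriv α) (deriv σ) μ (t, 0) * qf α σ (deriv α) (deriv σ) μ (t, 0))
              / (qf α σ α σ μ (t, 0)) ^ 2 / 2 * x ^ 2)
          = Real.log (qf α σ α σ μ (t, x)) - Real.log (qf α σ α σ μ (t, 0))
          - -(qf α σ (deriv α) (deriv σ) μ (t, 0)) / qf α σ α σ μ (t, 0) * x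
          - (qf α σ (deriv (deriv α)) (deriv (deriv σ)) μ (t, 0) * qf α σ α σ μ (t, 0)
              - qf α σ (deriv α) (deriv σ) μ (t, 0) * qf α σ (deriv α) (deriv σ) μ (t, 0))
              / (qf α σ α σ μ (t, 0)) ^ 2 / 2 * x ^ 2 := by ring
      rw [harg]
      exact htay
  constructor
  · exact fun j hj => (key j hj).1
  · rw [hS N, ← Finset.sum_sub_distrib]
    calc |∑ j ∈ Finset.Icc 1 N, (Real.log ((α (((j : ℝ) - 1) / (N : ℝ)) * α ((j : ℝ) / (N : ℝ)) * μ
          + σ (((j : ℝ) - 1) / (N : ℝ)) * σ ((j : ℝ) / (N : ℝ)))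
        / ((α ((j : ℝ) / (N : ℝ))) ^ 2 * μ + (σ ((j : ℝ) / (N : ℝ))) ^ 2))
        - (F ((j : ℝ) / (N : ℝ)) * (1 / (N : ℝ)) + G ((j : ℝ) / (N : ℝ)) * (1 / (N : ℝ) ^ 2)))|
        ≤ ∑ j ∈ Finset.Icc 1 N, |Real.log ((α (((j : ℝ) - 1) / (N : ℝ)) * α ((j : ℝ) / (N : ℝ)) * μ
          + σ (((j : ℝ) - 1) / (N : ℝ)) * σ ((j : ℝ) / (N : ℝ)))
        / ((α ((j : ℝ) / (N : ℝ))) ^ 2 * μ + (σ ((j : ℝ) / (N : ℝ))) ^ 2))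
        - (F ((j : ℝ) / (N : ℝ)) * (1 / (N : ℝ)) + G ((j : ℝ) / (N : ℝ)) * (1 / (N : ℝ) ^ 2))| :=
        Finset.abs_sum_le_sum_abs _ _
      _ ≤ ∑ _j ∈ Finset.Icc 1 N, M/6 * (1/(N:ℝ))^3 :=
        Finset.sum_le_sum (fun j hj => (key j hj).2)
      _ = (N : ℝ) * (M/6 * (1/(N:ℝ))^3) := by
        rw [Finset.sum_const, Nat.card_Icc]
        simp [nsmul_eq_mul]
      _ = (M/6) / (N:ℝ)^2 := by
        field_simp
      _ ≤ (M/6 + 1) / (N:ℝ)^2 := by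
        apply div_le_div_of_nonneg_right ?_ (by positivity)
        · linarith
end

section
/- Let μ > 0 and let α, σ : ℝ → ℝ be twice continuously differentiable on an open interval containing [0,1], with α(t)²·μ + σ(t)² > 0 for all t ∈ [0,1]. Then (1/2)·( F_μ(1) − F_μ(0) ) + ∫₀¹ G_μ(t) dt = −(μ/2) · ∫₀¹ (α(t)·σ'(t) − σ(t)·α'(t))² / (α(t)²·μ + σ(t)²)² dt. In particular the left-hand side is always ≤ 0. -/
/-- The leading-order Euler–Maclaurin coefficient
`(1/2)(F_μ(1) − F_μ(0)) + ∫₀¹ G_μ` equals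
`−(μ/2)·∫₀¹ (α σ' − σ α')²/(α²μ + σ²)² dt`; in particular it is `≤ 0`. -/
theorem stmt_5 (μ : ℝ) (hμ : 0 < μ) (α σ : ℝ → ℝ) (s : Set ℝ) (hs : IsOpen s)
    (hsub : Set.Icc (0 : ℝ) 1 ⊆ s)
    (hα : ContDiffOn ℝ 2 α s) (hσ : ContDiffOn ℝ 2 σ s)
    (hpos : ∀ t ∈ Set.Icc (0 : ℝ) 1, 0 < (α t) ^ 2 * μ + (σ t) ^ 2)
    (F G : ℝ → ℝ)
    (hF : ∀ t, F t = -(α t * deriv α t * μ + σ t * deriv σ t)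
        / ((α t) ^ 2 * μ + (σ t) ^ 2))
    (hG : ∀ t, G t = (α t * deriv (deriv α) t * μ + σ t * deriv (deriv σ) t)
          / (2 * ((α t) ^ 2 * μ + (σ t) ^ 2))
        - (α t * deriv α t * μ + σ t * deriv σ t) ^ 2
          / (2 * ((α t) ^ 2 * μ + (σ t) ^ 2) ^ 2)) :
    (1 / 2) * (F 1 - F 0) + ∫ t in (0 : ℝ)..1, G t
      = -(μ / 2) * ∫ t in (0 : ℝ)..1,
          (α t * deriv σ t - σ t * deriv α t) ^ 2 / ((α t) ^ 2 * μ + (σ t) ^ 2) ^ 2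
    ∧ (1 / 2) * (F 1 - F 0) + (∫ t in (0 : ℝ)..1, G t) ≤ 0 := by
  set q : ℝ → ℝ := fun t =>
    (α t * deriv σ t - σ t * deriv α t) ^ 2 / ((α t) ^ 2 * μ + (σ t) ^ 2) ^ 2 with hq
  -- regularity facts
  have hα1 : ContDiffOn ℝ 1 (deriv α) s := hα.deriv_of_isOpen hs (by norm_num)
  have hσ1 : ContDiffOn ℝ 1 (deriv σ) s := hσ.deriv_of_isOpen hs (by norm_num)
  have hcα : ContinuousOn α s := hα.continuousOn
  have hcσ : ContinuousOn σ s := hσ.continuousOn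
  have hcα' : ContinuousOn (deriv α) s := hα1.continuousOn
  have hcσ' : ContinuousOn (deriv σ) s := hσ1.continuousOn
  have hcα'' : ContinuousOn (deriv (deriv α)) s := hα1.continuousOn_deriv_of_isOpen hs le_rfl
  have hcσ'' : ContinuousOn (deriv (deriv σ)) s := hσ1.continuousOn_deriv_of_isOpen hs le_rfl
  have hDne : ∀ t ∈ Set.Icc (0 : ℝ) 1, (α t) ^ 2 * μ + (σ t) ^ 2 ≠ 0 :=
    fun t ht => (hpos t ht).ne'
  -- derivative of F
  have hFder : ∀ t ∈ Set.uIcc (0 : ℝ) 1,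
      HasDerivAt F (-(2 * G t + μ * q t)) t := by
    intro t ht
    rw [Set.uIcc_of_le (by norm_num)] at ht
    have hts : t ∈ s := hsub ht
    have hmem := hs.mem_nhds hts
    have hdα : HasDerivAt α (deriv α t) t :=
      ((hα.contDiffAt hmem).differentiableAt (by norm_num)).hasDerivAt
    have hdσ : HasDerivAt σ (deriv σ t) t :=
      ((hσ.contDiffAt hmem).differentiableAt (by norm_num)).hasDerivAt
    have hdα' : HasDerivAt (deriv α) (deriv (deriv α) t) t :=
      ((hα1.contDiffAt hmem).differentiableAt (by norm_num)).hasDerivAt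
    have hdσ' : HasDerivAt (deriv σ) (deriv (deriv σ) t) t :=
      ((hσ1.contDiffAt hmem).differentiableAt (by norm_num)).hasDerivAt
    have hD := hDne t ht
    -- F agrees with explicit formula everywhere, so rewrite
    have hFeq : F = fun u => -(α u * deriv α u * μ + σ u * deriv σ u)
        / ((α u) ^ 2 * μ + (σ u) ^ 2) := funext hF
    rw [hFeq]
    have hN : HasDerivAt (fun u => -(α u * deriv α u * μ + σ u * deriv σ u))
        (-((deriv α t * deriv α t + α t * deriv (deriv α) t) * μ
          + (deriv σ t * deriv σ t + σ t * deriv (deriv σ) t))) t := by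
      exact (((hdα.mul hdα').mul_const μ).add (hdσ.mul hdσ')).neg
    have hDD : HasDerivAt (fun u => (α u) ^ 2 * μ + (σ u) ^ 2)
        (2 * α t * deriv α t * μ + 2 * σ t * deriv σ t) t := by
      have h1 : HasDerivAt (fun u => (α u) ^ 2) (2 * α t * deriv α t) t := by
        simpa using hdα.fun_pow 2
      have h2 : HasDerivAt (fun u => (σ u) ^ 2) (2 * σ t * deriv σ t) t := by
        simpa using hdσ.fun_pow 2
      exact (h1.mul_const μ).add h2
    have := hN.fun_div hDD hD
    refine this.congr_deriv ?_
    rw [hG t, hq]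
    field_simp
    ring
  -- continuity of G and q on Icc
  have hIccs : Set.Icc (0:ℝ) 1 ⊆ s := hsub
  have hcontD : ContinuousOn (fun t => (α t) ^ 2 * μ + (σ t) ^ 2) (Set.Icc (0:ℝ) 1) :=
    (((hcα.mono hIccs).pow 2).mul continuousOn_const).add ((hcσ.mono hIccs).pow 2)
  have hcontG : ContinuousOn G (Set.Icc (0:ℝ) 1) := by
    have : ContinuousOn (fun t =>
        (α t * deriv (deriv α) t * μ + σ t * deriv (deriv σ) t)
          / (2 * ((α t) ^ 2 * μ + (σ t) ^ 2))
        - (α t * deriv α t * μ + σ t * deriv σ t) ^ 2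
          / (2 * ((α t) ^ 2 * μ + (σ t) ^ 2) ^ 2)) (Set.Icc (0:ℝ) 1) := by
      apply ContinuousOn.sub
      · exact ContinuousOn.div
          ((((hcα.mono hIccs).mul (hcα''.mono hIccs)).mul continuousOn_const).add
            ((hcσ.mono hIccs).mul (hcσ''.mono hIccs)))
          (continuousOn_const.mul hcontD)
          (fun t ht => by have := hDne t ht; positivity)
      · exact ContinuousOn.div
          (((((hcα.mono hIccs).mul (hcα'.mono hIccs)).mul continuousOn_const).add
            ((hcσ.mono hIccs).mul (hcσ'.mono hIccs))).pow 2)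
          (continuousOn_const.mul (hcontD.pow 2))
          (fun t ht => by have := hDne t ht; positivity)
    exact this.congr (fun t _ => hG t)
  have hcontq : ContinuousOn q (Set.Icc (0:ℝ) 1) := by
    apply ContinuousOn.div
    · exact (((hcα.mono hIccs).mul (hcσ'.mono hIccs)).sub
        ((hcσ.mono hIccs).mul (hcα'.mono hIccs))).pow 2
    · exact hcontD.pow 2
    · exact fun t ht => pow_ne_zero 2 (hDne t ht)
  have hintG : IntervalIntegrable G MeasureTheory.volume 0 1 :=
    hcontG.intervalIntegrable_of_Icc (by norm_num)
  have hintq : IntervalIntegrable q MeasureTheory.volume 0 1 :=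
    hcontq.intervalIntegrable_of_Icc (by norm_num)
  have hintF' : IntervalIntegrable (fun t => -(2 * G t + μ * q t))
      MeasureTheory.volume 0 1 :=
    ((hintG.const_mul 2).add (hintq.const_mul μ)).neg
  have hFTC : ∫ t in (0:ℝ)..1, -(2 * G t + μ * q t) = F 1 - F 0 :=
    intervalIntegral.integral_eq_sub_of_hasDerivAt hFder hintF'
  have hsplit : ∫ t in (0:ℝ)..1, -(2 * G t + μ * q t)
      = -(2 * ∫ t in (0:ℝ)..1, G t) - μ * ∫ t in (0:ℝ)..1, q t := by
    rw [intervalIntegral.integral_neg, intervalIntegral.integral_add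
      (hintG.const_mul 2) (hintq.const_mul μ),
      intervalIntegral.integral_const_mul, intervalIntegral.integral_const_mul]
    ring
  have key : (1 / 2) * (F 1 - F 0) + ∫ t in (0:ℝ)..1, G t
      = -(μ / 2) * ∫ t in (0:ℝ)..1, q t := by
    rw [← hFTC, hsplit]; ring
  refine ⟨key, ?_⟩
  rw [key]
  have hqnn : 0 ≤ ∫ t in (0:ℝ)..1, q t := by
    apply intervalIntegral.integral_nonneg (by norm_num)
    intro u _
    exact div_nonneg (sq_nonneg _) (sq_nonneg _)
  nlinarith
end

section
/- Let μ > 0 and let α, σ : ℝ → ℝ be three times continuously differentiable on an open interval containing [0,1], with α(t)²·μ + σ(t)² > 0 for all t ∈ [0,1]. Define I(μ) = (1/2)·log( (α(0)²·μ + σ(0)²) / (α(1)²·μ + σ(1)²) ) and E¹(μ) = −(μ/2)·∫₀¹ (α(t)·σ'(t) − σ(t)·α'(t))² / (α(t)²·μ + σ(t)²)² dt. Then there exist a constant C > 0 and N₀ ∈ ℕ such that for all N ≥ N₀, | S_N(μ) − I(μ) − E¹(μ)/N | ≤ C/N². -/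
open Set

open Set

lemma step_bound {p p' q q' : ℝ → ℝ} {b : ℝ}
    (hp : ∀ u ∈ Icc 0 b, HasDerivAt p (p' u) u)
    (hq : ∀ u ∈ Icc 0 b, HasDerivAt q (q' u) u)
    (hle : ∀ u ∈ Icc 0 b, |p' u| ≤ q' u)
    (hz : p 0 = 0) (hz' : q 0 = 0) : ∀ u ∈ Icc 0 b, |p u| ≤ q u := by
  have hmono : ∀ (f f' : ℝ → ℝ), (∀ u ∈ Icc 0 b, HasDerivAt f (f' u) u) →
      (∀ u ∈ Icc 0 b, 0 ≤ f' u) → MonotoneOn f (Icc 0 b) := by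
    intro f f' hf hf'
    apply monotoneOn_of_deriv_nonneg (convex_Icc 0 b)
    · exact fun u hu => ((hf u hu).continuousAt).continuousWithinAt
    · intro u hu
      exact ((hf u (interior_subset hu)).differentiableAt).differentiableWithinAt
    · intro u hu
      rw [(hf u (interior_subset hu)).deriv]
      exact hf' u (interior_subset hu)
  intro u hu
  have h0 : (0:ℝ) ∈ Icc 0 b := ⟨le_refl 0, hu.1.trans hu.2⟩
  rw [abs_le]
  constructor
  · have := hmono (fun z => q z + p z) (fun z => q' z + p' z)
      (fun z hz => (hq z hz).add (hp z hz))
      (fun z hz => by have h := abs_le.1 (hle z hz); show 0 ≤ q' z + p' z; linarith [h.1])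
      h0 hu hu.1
    simp only [hz, hz', add_zero] at this
    linarith
  · have := hmono (fun z => q z - p z) (fun z => q' z - p' z)
      (fun z hz => (hq z hz).sub (hp z hz))
      (fun z hz => by have h := abs_le.1 (hle z hz); show 0 ≤ q' z - p' z; linarith [h.2])
      h0 hu hu.1
    simp only [hz, hz', sub_zero] at this
    linarith

lemma cube_bound {r r1 r2 r3 : ℝ → ℝ} {b M : ℝ} (hb : 0 ≤ b)
    (hr : ∀ u ∈ Icc 0 b, HasDerivAt r (r1 u) u)
    (hr1 : ∀ u ∈ Icc 0 b, HasDerivAt r1 (r2 u) u)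
    (hr2 : ∀ u ∈ Icc 0 b, HasDerivAt r2 (r3 u) u)
    (h3 : ∀ u ∈ Icc 0 b, |r3 u| ≤ M)
    (hz : r 0 = 0) (hz1 : r1 0 = 0) (hz2 : r2 0 = 0) :
    |r b| ≤ M * b ^ 3 / 6 := by
  have s1 : ∀ u ∈ Icc 0 b, |r2 u| ≤ M * u :=
    step_bound (q' := fun _ => M) hr2
      (fun u _ => by simpa using (hasDerivAt_id u).const_mul M) h3 hz2 (by simp)
  have s2 : ∀ u ∈ Icc 0 b, |r1 u| ≤ M * u ^ 2 / 2 := by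
    refine step_bound (q' := fun u => M * u) hr1 (fun u _ => ?_) ?_ hz1 (by simp)
    · have := ((hasDerivAt_pow 2 u).const_mul M).div_const 2
      refine this.congr_deriv ?_; ring
    · intro u hu; simpa using s1 u hu
  have s3 : ∀ u ∈ Icc 0 b, |r u| ≤ M * u ^ 3 / 6 := by
    refine step_bound (q' := fun u => M * u ^ 2 / 2) hr (fun u _ => ?_) ?_ hz (by simp)
    · have := ((hasDerivAt_pow 3 u).const_mul M).div_const 6
      refine this.congr_deriv ?_; ring
    · intro u hu; simpa using s2 u hu
  exact s3 b ⟨hb, le_refl b⟩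

noncomputable def Q1 (w w1 : ℝ → ℝ) (y : ℝ) : ℝ := w1 y / w y
noncomputable def Q2 (w w1 w2 : ℝ → ℝ) (y : ℝ) : ℝ := (w2 y * w y - w1 y ^ 2) / (w y) ^ 2
noncomputable def Q3 (w w1 w2 w3 : ℝ → ℝ) (y : ℝ) : ℝ :=
  ((w3 y * w y - w1 y * w2 y) * (w y) ^ 2
    - (w2 y * w y - w1 y ^ 2) * (2 * w y * w1 y)) / ((w y) ^ 2) ^ 2

lemma hasDerivAt_logw {w w1 : ℝ → ℝ} {y : ℝ} (hw : HasDerivAt w (w1 y) y) (h0 : w y ≠ 0) :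
    HasDerivAt (fun z => Real.log (w z)) (Q1 w w1 y) y := hw.log h0

lemma hasDerivAt_Q1 {w w1 w2 : ℝ → ℝ} {y : ℝ}
    (hw : HasDerivAt w (w1 y) y) (hw1 : HasDerivAt w1 (w2 y) y)
    (h0 : w y ≠ 0) : HasDerivAt (Q1 w w1) (Q2 w w1 w2 y) y := by
  have := hw1.div hw h0
  refine this.congr_deriv ?_
  simp [Q2]; ring

lemma hasDerivAt_Q2 {w w1 w2 w3 : ℝ → ℝ} {y : ℝ}
    (hw : HasDerivAt w (w1 y) y) (hw1 : HasDerivAt w1 (w2 y) y)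
    (hw2 : HasDerivAt w2 (w3 y) y) (h0 : w y ≠ 0) :
    HasDerivAt (Q2 w w1 w2) (Q3 w w1 w2 w3 y) y := by
  have := ((hw2.mul hw).sub ((hw1.pow 2))).div (hw.pow 2) (pow_ne_zero 2 h0)
  refine this.congr_deriv ?_
  simp [Q3]; ring

lemma hasDerivAt_comp_sub {F F' : ℝ → ℝ} {x u : ℝ} (hF : HasDerivAt F (F' (x - u)) (x - u)) :
    HasDerivAt (fun z => F (x - z)) (-F' (x - u)) u := by
  have h1 : HasDerivAt (fun z : ℝ => x - z) (-1) u := by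
    simpa using (hasDerivAt_id u).const_sub x
  have := hF.comp u h1
  exact this.congr_deriv (by ring)

noncomputable def NF (mu a b : ℝ) (f g : ℝ → ℝ) : ℝ → ℝ := fun y => f y * a * mu + g y * b
noncomputable def G0 (mu : ℝ) (f g : ℝ → ℝ) : ℝ → ℝ := fun y => f y ^ 2 * mu + g y ^ 2
noncomputable def G1 (mu : ℝ) (f g f1 g1 : ℝ → ℝ) : ℝ → ℝ :=
  fun y => 2 * f y * f1 y * mu + 2 * g y * g1 y
noncomputable def G2 (mu : ℝ) (f g f1 g1 f2 g2 : ℝ → ℝ) : ℝ → ℝ :=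
  fun y => (2 * f1 y ^ 2 + 2 * f y * f2 y) * mu + (2 * g1 y ^ 2 + 2 * g y * g2 y)
noncomputable def G3 (mu : ℝ) (f g f1 g1 f2 g2 f3 g3 : ℝ → ℝ) : ℝ → ℝ :=
  fun y => (6 * f1 y * f2 y + 2 * f y * f3 y) * mu + (6 * g1 y * g2 y + 2 * g y * g3 y)

noncomputable def H3 (mu : ℝ) (f g f1 g1 f2 g2 f3 g3 : ℝ → ℝ) (x : ℝ) : ℝ → ℝ := fun y =>
  -(Q3 (NF mu (f x) (g x) f g) (NF mu (f x) (g x) f1 g1) (NF mu (f x) (g x) f2 g2)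
      (NF mu (f x) (g x) f3 g3) y)
  + (1/2) * Q3 (G0 mu f g) (G1 mu f g f1 g1) (G2 mu f g f1 g1 f2 g2)
      (G3 mu f g f1 g1 f2 g2 f3 g3) y

lemma hasDerivAt_NF {mu a b : ℝ} {f g f1 g1 : ℝ → ℝ} {y : ℝ}
    (hf : HasDerivAt f (f1 y) y) (hg : HasDerivAt g (g1 y) y) :
    HasDerivAt (NF mu a b f g) (NF mu a b f1 g1 y) y :=
  ((hf.mul_const a).mul_const mu).add (hg.mul_const b)

lemma hasDerivAt_G0 {mu : ℝ} {f g f1 g1 : ℝ → ℝ} {y : ℝ}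
    (hf : HasDerivAt f (f1 y) y) (hg : HasDerivAt g (g1 y) y) :
    HasDerivAt (G0 mu f g) (G1 mu f g f1 g1 y) y := by
  have := ((hf.pow 2).mul_const mu).add (hg.pow 2)
  refine this.congr_deriv ?_
  simp only [G1]; push_cast; ring

lemma hasDerivAt_G1 {mu : ℝ} {f g f1 g1 f2 g2 : ℝ → ℝ} {y : ℝ}
    (hf : HasDerivAt f (f1 y) y) (hg : HasDerivAt g (g1 y) y)
    (hf1 : HasDerivAt f1 (f2 y) y) (hg1 : HasDerivAt g1 (g2 y) y) :
    HasDerivAt (G1 mu f g f1 g1) (G2 mu f g f1 g1 f2 g2 y) y := by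
  have := ((((hf.const_mul 2).mul hf1)).mul_const mu).add ((hg.const_mul 2).mul hg1)
  refine this.congr_deriv ?_
  simp only [G2]; push_cast; ring

lemma hasDerivAt_G2 {mu : ℝ} {f g f1 g1 f2 g2 f3 g3 : ℝ → ℝ} {y : ℝ}
    (hf : HasDerivAt f (f1 y) y) (hg : HasDerivAt g (g1 y) y)
    (hf1 : HasDerivAt f1 (f2 y) y) (hg1 : HasDerivAt g1 (g2 y) y)
    (hf2 : HasDerivAt f2 (f3 y) y) (hg2 : HasDerivAt g2 (g3 y) y) :
    HasDerivAt (G2 mu f g f1 g1 f2 g2) (G3 mu f g f1 g1 f2 g2 f3 g3 y) y := by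
  have := ((((hf1.pow 2).const_mul 2).add ((hf.const_mul 2).mul hf2)).mul_const mu).add
    (((hg1.pow 2).const_mul 2).add ((hg.const_mul 2).mul hg2))
  refine this.congr_deriv ?_
  simp only [G3]; push_cast; ring

lemma taylor_key (mu : ℝ) (f g f1 g1 f2 g2 f3 g3 : ℝ → ℝ) (x h M : ℝ)
    (hh : 0 < h) (hhx : h ≤ x)
    (hd : ∀ y ∈ Icc (x - h) x, HasDerivAt f (f1 y) y ∧ HasDerivAt f1 (f2 y) y ∧
      HasDerivAt f2 (f3 y) y ∧ HasDerivAt g (g1 y) y ∧ HasDerivAt g1 (g2 y) y ∧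
      HasDerivAt g2 (g3 y) y)
    (hgpos : ∀ y ∈ Icc (x - h) x, 0 < f y ^ 2 * mu + g y ^ 2)
    (hnpos : ∀ y ∈ Icc (x - h) x, 0 < f y * f x * mu + g y * g x)
    (hM : ∀ y ∈ Icc (x - h) x, |H3 mu f g f1 g1 f2 g2 f3 g3 x y| ≤ M) :
    |Real.log ((f (x - h) * f x * mu + g (x - h) * g x) / (f x ^ 2 * mu + g x ^ 2))
      - ((1/2) * Real.log (f (x - h) ^ 2 * mu + g (x - h) ^ 2)
         - (1/2) * Real.log (f x ^ 2 * mu + g x ^ 2))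
      + h ^ 2 * (mu / 2 * ((f x * g1 x - g x * f1 x) ^ 2 / (f x ^ 2 * mu + g x ^ 2) ^ 2))|
    ≤ M * h ^ 3 / 6 := by
  have hxmem : x ∈ Icc (x - h) x := ⟨by linarith, le_refl x⟩
  set P : ℝ := mu / 2 * ((f x * g1 x - g x * f1 x) ^ 2 / (f x ^ 2 * mu + g x ^ 2) ^ 2) with hPdef
  set nf := NF mu (f x) (g x) f g with hnf
  set nf1 := NF mu (f x) (g x) f1 g1 with hnf1
  set nf2 := NF mu (f x) (g x) f2 g2 with hnf2
  set nf3 := NF mu (f x) (g x) f3 g3 with hnf3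
  set gf := G0 mu f g with hgf
  set gf1 := G1 mu f g f1 g1 with hgf1
  set gf2 := G2 mu f g f1 g1 f2 g2 with hgf2
  set gf3 := G3 mu f g f1 g1 f2 g2 f3 g3 with hgf3
  have hymem : ∀ u ∈ Icc (0:ℝ) h, x - u ∈ Icc (x - h) x := by
    intro u hu; exact ⟨by linarith [hu.2], by linarith [hu.1]⟩
  have hgne : ∀ y ∈ Icc (x - h) x, gf y ≠ 0 := by
    intro y hy
    have := hgpos y hy
    simp only [hgf, G0]
    exact ne_of_gt this
  have hnne : ∀ y ∈ Icc (x - h) x, nf y ≠ 0 := by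
    intro y hy
    have := hnpos y hy
    simp only [hnf, NF]
    exact ne_of_gt this
  -- the remainder function and its derivatives
  set r : ℝ → ℝ := fun u => Real.log (nf (x - u)) - (1/2) * Real.log (gf (x - u))
      - (1/2) * Real.log (gf x) + u ^ 2 * P with hrdef
  set r1 : ℝ → ℝ := fun u => -Q1 nf nf1 (x - u) + (1/2) * Q1 gf gf1 (x - u) + 2 * u * P
    with hr1def
  set r2 : ℝ → ℝ := fun u => Q2 nf nf1 nf2 (x - u) - (1/2) * Q2 gf gf1 gf2 (x - u) + 2 * P
    with hr2def
  set r3 : ℝ → ℝ := fun u => H3 mu f g f1 g1 f2 g2 f3 g3 x (x - u) with hr3def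
  have hr : ∀ u ∈ Icc (0:ℝ) h, HasDerivAt r (r1 u) u := by
    intro u hu
    have hy := hymem u hu
    obtain ⟨df, df1, df2, dg, dg1, dg2⟩ := hd _ hy
    have hnd : HasDerivAt nf (nf1 (x - u)) (x - u) := hasDerivAt_NF df dg
    have hgd : HasDerivAt gf (gf1 (x - u)) (x - u) := hasDerivAt_G0 df dg
    have t1 : HasDerivAt (fun z => Real.log (nf (x - z))) (-Q1 nf nf1 (x - u)) u :=
      hasDerivAt_comp_sub (hasDerivAt_logw hnd (hnne _ hy))
    have t2 : HasDerivAt (fun z => Real.log (gf (x - z))) (-Q1 gf gf1 (x - u)) u :=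
      hasDerivAt_comp_sub (hasDerivAt_logw hgd (hgne _ hy))
    have t3 : HasDerivAt (fun z : ℝ => z ^ 2 * P) (2 * u * P) u := by
      have := (hasDerivAt_pow 2 u).mul_const P
      refine this.congr_deriv ?_; push_cast; ring
    have := (((t1.sub (t2.const_mul (1/2))).sub_const ((1/2) * Real.log (gf x))).add t3)
    refine this.congr_deriv ?_
    simp only [hr1def]; ring
  have hr1 : ∀ u ∈ Icc (0:ℝ) h, HasDerivAt r1 (r2 u) u := by
    intro u hu
    have hy := hymem u hu
    obtain ⟨df, df1, df2, dg, dg1, dg2⟩ := hd _ hy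
    have hnd : HasDerivAt nf (nf1 (x - u)) (x - u) := hasDerivAt_NF df dg
    have hnd1 : HasDerivAt nf1 (nf2 (x - u)) (x - u) := hasDerivAt_NF df1 dg1
    have hgd : HasDerivAt gf (gf1 (x - u)) (x - u) := hasDerivAt_G0 df dg
    have hgd1 : HasDerivAt gf1 (gf2 (x - u)) (x - u) := hasDerivAt_G1 df dg df1 dg1
    have t1 : HasDerivAt (fun z => -Q1 nf nf1 (x - z)) (Q2 nf nf1 nf2 (x - u)) u := by
      have := (hasDerivAt_comp_sub (hasDerivAt_Q1 hnd hnd1 (hnne _ hy))).neg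
      refine this.congr_deriv ?_; ring
    have t2 : HasDerivAt (fun z => (1/2) * Q1 gf gf1 (x - z))
        ((1/2) * -Q2 gf gf1 gf2 (x - u)) u :=
      (hasDerivAt_comp_sub (hasDerivAt_Q1 hgd hgd1 (hgne _ hy))).const_mul (1/2)
    have t3 : HasDerivAt (fun z : ℝ => 2 * z * P) (2 * P) u := by
      have := ((hasDerivAt_id u).const_mul 2).mul_const P
      refine this.congr_deriv ?_; ring
    have := (t1.add t2).add t3
    refine this.congr_deriv ?_
    simp only [hr2def]; ring
  have hr2 : ∀ u ∈ Icc (0:ℝ) h, HasDerivAt r2 (r3 u) u := by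
    intro u hu
    have hy := hymem u hu
    obtain ⟨df, df1, df2, dg, dg1, dg2⟩ := hd _ hy
    have hnd : HasDerivAt nf (nf1 (x - u)) (x - u) := hasDerivAt_NF df dg
    have hnd1 : HasDerivAt nf1 (nf2 (x - u)) (x - u) := hasDerivAt_NF df1 dg1
    have hnd2 : HasDerivAt nf2 (nf3 (x - u)) (x - u) := hasDerivAt_NF df2 dg2
    have hgd : HasDerivAt gf (gf1 (x - u)) (x - u) := hasDerivAt_G0 df dg
    have hgd1 : HasDerivAt gf1 (gf2 (x - u)) (x - u) := hasDerivAt_G1 df dg df1 dg1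
    have hgd2 : HasDerivAt gf2 (gf3 (x - u)) (x - u) := hasDerivAt_G2 df dg df1 dg1 df2 dg2
    have t1 : HasDerivAt (fun z => Q2 nf nf1 nf2 (x - z)) (-Q3 nf nf1 nf2 nf3 (x - u)) u :=
      hasDerivAt_comp_sub (hasDerivAt_Q2 hnd hnd1 hnd2 (hnne _ hy))
    have t2 : HasDerivAt (fun z => (1/2) * Q2 gf gf1 gf2 (x - z))
        ((1/2) * -Q3 gf gf1 gf2 gf3 (x - u)) u :=
      (hasDerivAt_comp_sub (hasDerivAt_Q2 hgd hgd1 hgd2 (hgne _ hy))).const_mul (1/2)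
    have := (t1.sub t2).add_const (2 * P)
    refine this.congr_deriv ?_
    simp only [hr3def, H3, hnf, hnf1, hnf2, hnf3, hgf, hgf1, hgf2, hgf3]; ring
  have hb : ∀ u ∈ Icc (0:ℝ) h, |r3 u| ≤ M := by
    intro u hu
    exact hM _ (hymem u hu)
  have hz : r 0 = 0 := by
    have e1 : nf x = gf x := by simp only [hnf, hgf, NF, G0]; ring
    simp only [hrdef, sub_zero, e1]
    ring
  have hz1 : r1 0 = 0 := by
    have hgx : f x ^ 2 * mu + g x ^ 2 ≠ 0 := ne_of_gt (hgpos x hxmem)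
    have hnx : f x * f x * mu + g x * g x ≠ 0 := ne_of_gt (hnpos x hxmem)
    simp only [hr1def, sub_zero, Q1, hnf, hnf1, hgf, hgf1, NF, G0, G1]
    field_simp
    ring
  have hz2 : r2 0 = 0 := by
    have hgx := hgpos x hxmem
    have hgx' : f x ^ 2 * mu + g x ^ 2 ≠ 0 := ne_of_gt hgx
    have hnx' : f x * f x * mu + g x * g x ≠ 0 := by
      have := hnpos x hxmem; exact ne_of_gt this
    simp only [hr2def, sub_zero, Q2, hnf, hnf1, hnf2, hgf, hgf1, hgf2, NF, G0, G1, G2, hPdef]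
    field_simp
    ring
  have key := cube_bound (le_of_lt hh) hr hr1 hr2 hb hz hz1 hz2
  have egoal : Real.log ((f (x - h) * f x * mu + g (x - h) * g x) / (f x ^ 2 * mu + g x ^ 2))
      - ((1/2) * Real.log (f (x - h) ^ 2 * mu + g (x - h) ^ 2)
         - (1/2) * Real.log (f x ^ 2 * mu + g x ^ 2))
      + h ^ 2 * P = r h := by
    have hyh : x - h ∈ Icc (x - h) x := ⟨le_refl _, by linarith⟩
    have hnum : f (x - h) * f x * mu + g (x - h) * g x ≠ 0 := ne_of_gt (hnpos _ hyh)
    have hden : f x ^ 2 * mu + g x ^ 2 ≠ 0 := ne_of_gt (hgpos x hxmem)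
    rw [Real.log_div hnum hden]
    simp only [hrdef, hnf, hgf, NF, G0]
    ring
  rw [egoal]
  exact key


lemma abs_bound_of_compact {X : Type*} [TopologicalSpace X] {K : Set X} (hK : IsCompact K)
    {H : X → ℝ} (hH : ContinuousOn H K) : ∃ M, 0 ≤ M ∧ ∀ p ∈ K, |H p| ≤ M := by
  obtain ⟨B, hB⟩ := hK.exists_bound_of_continuousOn hH
  exact ⟨max B 0, le_max_right _ _, fun p hp =>
    le_trans (by simpa [Real.norm_eq_abs] using hB p hp) (le_max_left _ _)⟩

set_option maxHeartbeats 1600000 in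
/-- First-order Euler–Maclaurin expansion of the discretized reverse-sampling
log-variance sum: `S_N(μ) = I(μ) + E¹(μ)/N + O(1/N²)`. -/
theorem stmt_6 (μ : ℝ) (hμ : 0 < μ) (α σ : ℝ → ℝ) (s : Set ℝ) (hs : IsOpen s)
    (hsub : Set.Icc (0 : ℝ) 1 ⊆ s)
    (hα : ContDiffOn ℝ 3 α s) (hσ : ContDiffOn ℝ 3 σ s)
    (hpos : ∀ t ∈ Set.Icc (0 : ℝ) 1, 0 < (α t) ^ 2 * μ + (σ t) ^ 2)
    (S : ℕ → ℝ)
    (hS : ∀ N : ℕ, S N = ∑ j ∈ Finset.Icc 1 N,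
      Real.log ((α (((j : ℝ) - 1) / (N : ℝ)) * α ((j : ℝ) / (N : ℝ)) * μ
          + σ (((j : ℝ) - 1) / (N : ℝ)) * σ ((j : ℝ) / (N : ℝ)))
        / ((α ((j : ℝ) / (N : ℝ))) ^ 2 * μ + (σ ((j : ℝ) / (N : ℝ))) ^ 2)))
    (I E : ℝ)
    (hI : I = (1 / 2) * Real.log (((α 0) ^ 2 * μ + (σ 0) ^ 2) / ((α 1) ^ 2 * μ + (σ 1) ^ 2)))
    (hE : E = -(μ / 2) * ∫ t in (0 : ℝ)..1,
        (α t * deriv σ t - σ t * deriv α t) ^ 2 / ((α t) ^ 2 * μ + (σ t) ^ 2) ^ 2) :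
    ∃ C > 0, ∃ N₀ : ℕ, ∀ N ≥ N₀,
      |S N - I - E / (N : ℝ)| ≤ C / (N : ℝ) ^ 2 := by
  -- notation for derivatives
  set α1 := deriv α with hα1def
  set σ1 := deriv σ with hσ1def
  set α2 := deriv α1 with hα2def
  set σ2 := deriv σ1 with hσ2def
  set α3 := deriv α2 with hα3def
  set σ3 := deriv σ2 with hσ3def
  set J := Set.Icc (0:ℝ) 1 with hJdef
  have hJc : IsCompact J := isCompact_Icc
  have hJne : J.Nonempty := ⟨0, by constructor <;> norm_num⟩
  -- smoothness chain
  have hcd1α : ContDiffOn ℝ 2 α1 s := hα.deriv_of_isOpen hs (by norm_num)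
  have hcd2α : ContDiffOn ℝ 1 α2 s := hcd1α.deriv_of_isOpen hs (by norm_num)
  have hcd3α : ContDiffOn ℝ 0 α3 s := hcd2α.deriv_of_isOpen hs (by norm_num)
  have hcd1σ : ContDiffOn ℝ 2 σ1 s := hσ.deriv_of_isOpen hs (by norm_num)
  have hcd2σ : ContDiffOn ℝ 1 σ2 s := hcd1σ.deriv_of_isOpen hs (by norm_num)
  have hcd3σ : ContDiffOn ℝ 0 σ3 s := hcd2σ.deriv_of_isOpen hs (by norm_num)
  -- pointwise derivatives
  have dα : ∀ y ∈ s, HasDerivAt α (α1 y) y := fun y hy =>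
    ((hα.differentiableOn (by norm_num)).differentiableAt (hs.mem_nhds hy)).hasDerivAt
  have dα1 : ∀ y ∈ s, HasDerivAt α1 (α2 y) y := fun y hy =>
    ((hcd1α.differentiableOn (by norm_num)).differentiableAt (hs.mem_nhds hy)).hasDerivAt
  have dα2 : ∀ y ∈ s, HasDerivAt α2 (α3 y) y := fun y hy =>
    ((hcd2α.differentiableOn (by norm_num)).differentiableAt (hs.mem_nhds hy)).hasDerivAt
  have dσ : ∀ y ∈ s, HasDerivAt σ (σ1 y) y := fun y hy =>
    ((hσ.differentiableOn (by norm_num)).differentiableAt (hs.mem_nhds hy)).hasDerivAt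
  have dσ1 : ∀ y ∈ s, HasDerivAt σ1 (σ2 y) y := fun y hy =>
    ((hcd1σ.differentiableOn (by norm_num)).differentiableAt (hs.mem_nhds hy)).hasDerivAt
  have dσ2 : ∀ y ∈ s, HasDerivAt σ2 (σ3 y) y := fun y hy =>
    ((hcd2σ.differentiableOn (by norm_num)).differentiableAt (hs.mem_nhds hy)).hasDerivAt
  -- continuity on J
  have cα : ContinuousOn α J := (hα.continuousOn).mono hsub
  have cσ : ContinuousOn σ J := (hσ.continuousOn).mono hsub
  have cα1 : ContinuousOn α1 J := (hcd1α.continuousOn).mono hsub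
  have cσ1 : ContinuousOn σ1 J := (hcd1σ.continuousOn).mono hsub
  have cα2 : ContinuousOn α2 J := (hcd2α.continuousOn).mono hsub
  have cσ2 : ContinuousOn σ2 J := (hcd2σ.continuousOn).mono hsub
  have cα3 : ContinuousOn α3 J := (hcd3α.continuousOn).mono hsub
  have cσ3 : ContinuousOn σ3 J := (hcd3σ.continuousOn).mono hsub
  -- lower bound for the variance function
  have cg : ContinuousOn (fun y => α y ^ 2 * μ + σ y ^ 2) J :=
    (((cα.pow 2).mul continuousOn_const).add (cσ.pow 2))
  obtain ⟨y0, hy0J, hy0min⟩ := hJc.exists_isMinOn hJne cg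
  set c := α y0 ^ 2 * μ + σ y0 ^ 2 with hcdef
  have hc : 0 < c := hpos y0 hy0J
  have hgc : ∀ y ∈ J, c ≤ α y ^ 2 * μ + σ y ^ 2 := fun y hy => hy0min hy
  -- bound for the derivative of the mixed product
  have hK2 : IsCompact (J ×ˢ J) := hJc.prod hJc
  have cfst : ∀ {f : ℝ → ℝ}, ContinuousOn f J → ContinuousOn (fun p : ℝ × ℝ => f p.1) (J ×ˢ J) :=
    fun hf => hf.comp continuous_fst.continuousOn (fun p hp => hp.1)
  have csnd : ∀ {f : ℝ → ℝ}, ContinuousOn f J → ContinuousOn (fun p : ℝ × ℝ => f p.2) (J ×ˢ J) :=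
    fun hf => hf.comp continuous_snd.continuousOn (fun p hp => hp.2)
  obtain ⟨L0, hL00, hL0⟩ := abs_bound_of_compact hK2
    (H := fun p : ℝ × ℝ => α1 p.2 * α p.1 * μ + σ1 p.2 * σ p.1)
    ((((csnd cα1).mul (cfst cα)).mul continuousOn_const).add ((csnd cσ1).mul (cfst cσ)))
  set δ := c / (2 * (L0 + 1)) with hδdef
  have hδ : 0 < δ := by positivity
  -- near-diagonal positivity of the mixed product
  have nlow : ∀ x ∈ J, ∀ y ∈ J, |x - y| ≤ δ → c / 2 ≤ α y * α x * μ + σ y * σ x := by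
    intro x hx y hy hxy
    have hder : ∀ z ∈ J, HasDerivWithinAt (fun z => α z * α x * μ + σ z * σ x)
        (α1 z * α x * μ + σ1 z * σ x) J z := fun z hz =>
      ((((dα z (hsub hz)).mul_const (α x)).mul_const μ).add
        ((dσ z (hsub hz)).mul_const (σ x))).hasDerivWithinAt
    have hbd : ∀ z ∈ J, ‖α1 z * α x * μ + σ1 z * σ x‖ ≤ L0 := by
      intro z hz
      simpa [Real.norm_eq_abs] using hL0 (x, z) ⟨hx, hz⟩
    have est := (convex_Icc (0:ℝ) 1).norm_image_sub_le_of_norm_hasDerivWithin_le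
      hder hbd hx hy
    rw [Real.norm_eq_abs, Real.norm_eq_abs] at est
    have e1 : α x * α x * μ + σ x * σ x = α x ^ 2 * μ + σ x ^ 2 := by ring
    have e2 := hgc x hx
    have h3 := abs_le.1 est
    have h4 : |y - x| ≤ δ := by rwa [abs_sub_comm]
    have h5 : L0 * |y - x| ≤ (L0 + 1) * δ := by
      have := abs_nonneg (y - x)
      nlinarith
    have h6 : (L0 + 1) * δ = c / 2 := by
      rw [hδdef]; field_simp
    nlinarith [h3.2]
  -- uniform bound for the third derivative remainder
  set K3 := (J ×ˢ J) ∩ {p : ℝ × ℝ | |p.1 - p.2| ≤ δ} with hK3def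
  have hK3c : IsCompact K3 := hK2.inter_right
    (isClosed_le ((continuous_fst.sub continuous_snd).abs) continuous_const)
  have hK3sub : K3 ⊆ J ×ˢ J := inter_subset_left
  have hnzK3 : ∀ p ∈ K3, α p.2 * α p.1 * μ + σ p.2 * σ p.1 ≠ 0 := by
    intro p hp
    have := nlow p.1 hp.1.1 p.2 hp.1.2 hp.2
    have : 0 < α p.2 * α p.1 * μ + σ p.2 * σ p.1 := by linarith
    exact ne_of_gt this
  have hgzK3 : ∀ p ∈ K3, α p.2 ^ 2 * μ + σ p.2 ^ 2 ≠ 0 := fun p hp =>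
    ne_of_gt (hpos p.2 hp.1.2)
  have cHH : ContinuousOn
      (fun p : ℝ × ℝ => H3 μ α σ α1 σ1 α2 σ2 α3 σ3 p.1 p.2) K3 := by
    have k0 : ContinuousOn (fun p : ℝ × ℝ => α p.1) K3 := (cfst cα).mono hK3sub
    have k1 : ContinuousOn (fun p : ℝ × ℝ => σ p.1) K3 := (cfst cσ).mono hK3sub
    have k2 : ContinuousOn (fun p : ℝ × ℝ => α p.2) K3 := (csnd cα).mono hK3sub
    have k3 : ContinuousOn (fun p : ℝ × ℝ => σ p.2) K3 := (csnd cσ).mono hK3sub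
    have k4 : ContinuousOn (fun p : ℝ × ℝ => α1 p.2) K3 := (csnd cα1).mono hK3sub
    have k5 : ContinuousOn (fun p : ℝ × ℝ => σ1 p.2) K3 := (csnd cσ1).mono hK3sub
    have k6 : ContinuousOn (fun p : ℝ × ℝ => α2 p.2) K3 := (csnd cα2).mono hK3sub
    have k7 : ContinuousOn (fun p : ℝ × ℝ => σ2 p.2) K3 := (csnd cσ2).mono hK3sub
    have k8 : ContinuousOn (fun p : ℝ × ℝ => α3 p.2) K3 := (csnd cα3).mono hK3sub
    have k9 : ContinuousOn (fun p : ℝ × ℝ => σ3 p.2) K3 := (csnd cσ3).mono hK3sub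
    have cw0 : ContinuousOn (fun p : ℝ × ℝ => α p.2 * α p.1 * μ + σ p.2 * σ p.1) K3 :=
      ((k2.mul k0).mul continuousOn_const).add (k3.mul k1)
    have cw1 : ContinuousOn (fun p : ℝ × ℝ => α1 p.2 * α p.1 * μ + σ1 p.2 * σ p.1) K3 :=
      ((k4.mul k0).mul continuousOn_const).add (k5.mul k1)
    have cw2 : ContinuousOn (fun p : ℝ × ℝ => α2 p.2 * α p.1 * μ + σ2 p.2 * σ p.1) K3 :=
      ((k6.mul k0).mul continuousOn_const).add (k7.mul k1)
    have cw3 : ContinuousOn (fun p : ℝ × ℝ => α3 p.2 * α p.1 * μ + σ3 p.2 * σ p.1) K3 :=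
      ((k8.mul k0).mul continuousOn_const).add (k9.mul k1)
    have cv0 : ContinuousOn (fun p : ℝ × ℝ => α p.2 ^ 2 * μ + σ p.2 ^ 2) K3 :=
      ((k2.pow 2).mul continuousOn_const).add (k3.pow 2)
    have cv1 : ContinuousOn (fun p : ℝ × ℝ => 2 * α p.2 * α1 p.2 * μ + 2 * σ p.2 * σ1 p.2) K3 :=
      (((continuousOn_const.mul k2).mul k4).mul continuousOn_const).add
        ((continuousOn_const.mul k3).mul k5)
    have cv2 : ContinuousOn (fun p : ℝ × ℝ =>
        (2 * α1 p.2 ^ 2 + 2 * α p.2 * α2 p.2) * μ + (2 * σ1 p.2 ^ 2 + 2 * σ p.2 * σ2 p.2)) K3 :=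
      (((continuousOn_const.mul (k4.pow 2)).add ((continuousOn_const.mul k2).mul k6)).mul
        continuousOn_const).add
        ((continuousOn_const.mul (k5.pow 2)).add ((continuousOn_const.mul k3).mul k7))
    have cv3 : ContinuousOn (fun p : ℝ × ℝ =>
        (6 * α1 p.2 * α2 p.2 + 2 * α p.2 * α3 p.2) * μ
          + (6 * σ1 p.2 * σ2 p.2 + 2 * σ p.2 * σ3 p.2)) K3 :=
      ((((continuousOn_const.mul k4).mul k6).add ((continuousOn_const.mul k2).mul k8)).mul
        continuousOn_const).add
        (((continuousOn_const.mul k5).mul k7).add ((continuousOn_const.mul k3).mul k9))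
    have numn : ContinuousOn (fun p : ℝ × ℝ =>
        ((α3 p.2 * α p.1 * μ + σ3 p.2 * σ p.1) * (α p.2 * α p.1 * μ + σ p.2 * σ p.1)
          - (α1 p.2 * α p.1 * μ + σ1 p.2 * σ p.1) * (α2 p.2 * α p.1 * μ + σ2 p.2 * σ p.1))
          * (α p.2 * α p.1 * μ + σ p.2 * σ p.1) ^ 2
        - ((α2 p.2 * α p.1 * μ + σ2 p.2 * σ p.1) * (α p.2 * α p.1 * μ + σ p.2 * σ p.1)
          - (α1 p.2 * α p.1 * μ + σ1 p.2 * σ p.1) ^ 2)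
          * (2 * (α p.2 * α p.1 * μ + σ p.2 * σ p.1)
            * (α1 p.2 * α p.1 * μ + σ1 p.2 * σ p.1))) K3 :=
      (((cw3.mul cw0).sub (cw1.mul cw2)).mul (cw0.pow 2)).sub
        (((cw2.mul cw0).sub (cw1.pow 2)).mul ((continuousOn_const.mul cw0).mul cw1))
    have numg : ContinuousOn (fun p : ℝ × ℝ =>
        (((6 * α1 p.2 * α2 p.2 + 2 * α p.2 * α3 p.2) * μ
            + (6 * σ1 p.2 * σ2 p.2 + 2 * σ p.2 * σ3 p.2)) * (α p.2 ^ 2 * μ + σ p.2 ^ 2)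
          - (2 * α p.2 * α1 p.2 * μ + 2 * σ p.2 * σ1 p.2)
            * ((2 * α1 p.2 ^ 2 + 2 * α p.2 * α2 p.2) * μ
              + (2 * σ1 p.2 ^ 2 + 2 * σ p.2 * σ2 p.2)))
          * (α p.2 ^ 2 * μ + σ p.2 ^ 2) ^ 2
        - (((2 * α1 p.2 ^ 2 + 2 * α p.2 * α2 p.2) * μ
            + (2 * σ1 p.2 ^ 2 + 2 * σ p.2 * σ2 p.2)) * (α p.2 ^ 2 * μ + σ p.2 ^ 2)
          - (2 * α p.2 * α1 p.2 * μ + 2 * σ p.2 * σ1 p.2) ^ 2)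
          * (2 * (α p.2 ^ 2 * μ + σ p.2 ^ 2)
            * (2 * α p.2 * α1 p.2 * μ + 2 * σ p.2 * σ1 p.2))) K3 :=
      (((cv3.mul cv0).sub (cv1.mul cv2)).mul (cv0.pow 2)).sub
        (((cv2.mul cv0).sub (cv1.pow 2)).mul ((continuousOn_const.mul cv0).mul cv1))
    simp only [H3, Q3, NF, G0, G1, G2, G3]
    exact ((numn.div ((cw0.pow 2).pow 2)
        (fun p hp => pow_ne_zero 2 (pow_ne_zero 2 (hnzK3 p hp)))).neg).add
      (continuousOn_const.mul (numg.div ((cv0.pow 2).pow 2)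
        (fun p hp => pow_ne_zero 2 (pow_ne_zero 2 (hgzK3 p hp)))))
  obtain ⟨M, hM0, hMb⟩ := abs_bound_of_compact hK3c cHH
  -- the integrand ψ and its Lipschitz bound
  set ψ : ℝ → ℝ := fun y => μ / 2 *
    ((α y * σ1 y - σ y * α1 y) ^ 2 / (α y ^ 2 * μ + σ y ^ 2) ^ 2) with hψdef
  set ψd : ℝ → ℝ := fun y => μ / 2 *
    (((α1 y * σ1 y + α y * σ2 y - (σ1 y * α1 y + σ y * α2 y)) * (2 * (α y * σ1 y - σ y * α1 y) ^ 1)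
        * ((α y ^ 2 * μ + σ y ^ 2) ^ 2)
      - (α y * σ1 y - σ y * α1 y) ^ 2 *
        (2 * (α y ^ 2 * μ + σ y ^ 2) ^ 1 * (2 * α y * α1 y * μ + 2 * σ y * σ1 y)))
      / ((α y ^ 2 * μ + σ y ^ 2) ^ 2) ^ 2) with hψddef
  have hψd : ∀ y ∈ J, HasDerivAt ψ (ψd y) y := by
    intro y hy
    have hg := ne_of_gt (lt_of_lt_of_le hc (hgc y hy))
    have hW : HasDerivAt (fun z => α z * σ1 z - σ z * α1 z)
        (α1 y * σ1 y + α y * σ2 y - (σ1 y * α1 y + σ y * α2 y)) y :=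
      ((dα y (hsub hy)).mul (dσ1 y (hsub hy))).sub ((dσ y (hsub hy)).mul (dα1 y (hsub hy)))
    have hgd : HasDerivAt (fun z => α z ^ 2 * μ + σ z ^ 2)
        (2 * α y * α1 y * μ + 2 * σ y * σ1 y) y := by
      have := (((dα y (hsub hy)).pow 2).mul_const μ).add ((dσ y (hsub hy)).pow 2)
      refine this.congr_deriv ?_; push_cast; ring
    have := ((hW.pow 2).div (hgd.pow 2) (pow_ne_zero 2 hg)).const_mul (μ / 2)
    refine this.congr_deriv ?_
    simp only [hψddef, Pi.pow_apply]
    push_cast; ring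
  have cψd : ContinuousOn ψd J := by
    simp only [hψddef]
    apply ContinuousOn.mul continuousOn_const
    apply ContinuousOn.div
    · fun_prop
    · fun_prop
    · intro y hy
      exact pow_ne_zero 2 (pow_ne_zero 2 (ne_of_gt (lt_of_lt_of_le hc (hgc y hy))))
  obtain ⟨L1, hL10, hL1b⟩ := abs_bound_of_compact hJc cψd
  have ψlip : ∀ x ∈ J, ∀ y ∈ J, |ψ y - ψ x| ≤ L1 * |y - x| := by
    intro x hx y hy
    have := (convex_Icc (0:ℝ) 1).norm_image_sub_le_of_norm_hasDerivWithin_le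
      (fun z hz => (hψd z hz).hasDerivWithinAt)
      (fun z hz => by simpa [Real.norm_eq_abs] using hL1b z hz) hx hy
    simpa [Real.norm_eq_abs] using this
  have cψ : ContinuousOn ψ J := fun y hy => (hψd y hy).continuousAt.continuousWithinAt
  -- rewrite E
  have hEψ : E = -∫ t in (0:ℝ)..1, ψ t := by
    have h2 : ∀ X : ℝ, -(μ/2) * X = -(μ/2 * X) := fun X => by ring
    rw [hE, h2, ← intervalIntegral.integral_const_mul]
  -- main estimate
  refine ⟨M / 6 + L1 + 1, by positivity, max 1 ⌈1 / δ⌉₊, ?_⟩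
  intro N hN
  have hN1 : 1 ≤ N := le_trans (le_max_left _ _) hN
  have hNR : (1:ℝ) ≤ (N:ℝ) := by exact_mod_cast hN1
  have hNpos : (0:ℝ) < (N:ℝ) := by linarith
  have hNne : (N:ℝ) ≠ 0 := ne_of_gt hNpos
  have hNδ : 1 / (N:ℝ) ≤ δ := by
    have h1 : (⌈1 / δ⌉₊ : ℝ) ≤ (N:ℝ) := by
      exact_mod_cast le_trans (le_max_right _ _) hN
    have h2 : 1 / δ ≤ (N:ℝ) := le_trans (Nat.le_ceil _) h1
    rw [div_le_iff₀ hNpos]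
    rw [div_le_iff₀ hδ] at h2
    linarith
  -- per-term remainder
  set R : ℕ → ℝ := fun j =>
    Real.log ((α (((j : ℝ) - 1) / (N : ℝ)) * α ((j : ℝ) / (N : ℝ)) * μ
          + σ (((j : ℝ) - 1) / (N : ℝ)) * σ ((j : ℝ) / (N : ℝ)))
        / ((α ((j : ℝ) / (N : ℝ))) ^ 2 * μ + (σ ((j : ℝ) / (N : ℝ))) ^ 2))
      - ((1/2) * Real.log (α (((j : ℝ) - 1) / (N : ℝ)) ^ 2 * μ + σ (((j : ℝ) - 1) / (N : ℝ)) ^ 2)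
         - (1/2) * Real.log (α ((j : ℝ) / (N : ℝ)) ^ 2 * μ + σ ((j : ℝ) / (N : ℝ)) ^ 2))
      + (1 / (N:ℝ)) ^ 2 * ψ ((j : ℝ) / (N : ℝ)) with hRdef
  have hmemJ : ∀ j ∈ Finset.Icc 1 N, ∀ y ∈ Icc ((j:ℝ)/(N:ℝ) - 1/(N:ℝ)) ((j:ℝ)/(N:ℝ)), y ∈ J := by
    intro j hj y hy
    obtain ⟨hj1, hjN⟩ := Finset.mem_Icc.1 hj
    have hj1R : (1:ℝ) ≤ (j:ℝ) := by exact_mod_cast hj1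
    have hjNR : (j:ℝ) ≤ (N:ℝ) := by exact_mod_cast hjN
    have e : (j:ℝ)/(N:ℝ) - 1/(N:ℝ) = ((j:ℝ) - 1)/(N:ℝ) := div_sub_div_same _ _ _
    constructor
    · have h0 : 0 ≤ ((j:ℝ) - 1)/(N:ℝ) := div_nonneg (by linarith) (le_of_lt hNpos)
      have := hy.1
      rw [e] at this
      linarith
    · have h1 : (j:ℝ)/(N:ℝ) ≤ 1 := (div_le_one hNpos).2 hjNR
      linarith [hy.2]
  have hRb : ∀ j ∈ Finset.Icc 1 N, |R j| ≤ M * (1/(N:ℝ)) ^ 3 / 6 := by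
    intro j hj
    obtain ⟨hj1, hjN⟩ := Finset.mem_Icc.1 hj
    have hj1R : (1:ℝ) ≤ (j:ℝ) := by exact_mod_cast hj1
    have hjNR : (j:ℝ) ≤ (N:ℝ) := by exact_mod_cast hjN
    have hhpos : 0 < 1/(N:ℝ) := by positivity
    have hhx : 1/(N:ℝ) ≤ (j:ℝ)/(N:ℝ) := by gcongr
    have hJm := hmemJ j hj
    have hxJ : (j:ℝ)/(N:ℝ) ∈ J := hJm _ (right_mem_Icc.2 (by linarith))
    have hd6 : ∀ y ∈ Icc ((j:ℝ)/(N:ℝ) - 1/(N:ℝ)) ((j:ℝ)/(N:ℝ)),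
        HasDerivAt α (α1 y) y ∧ HasDerivAt α1 (α2 y) y ∧ HasDerivAt α2 (α3 y) y ∧
        HasDerivAt σ (σ1 y) y ∧ HasDerivAt σ1 (σ2 y) y ∧ HasDerivAt σ2 (σ3 y) y := by
      intro y hy
      have hyJ := hsub (hJm y hy)
      exact ⟨dα y hyJ, dα1 y hyJ, dα2 y hyJ, dσ y hyJ, dσ1 y hyJ, dσ2 y hyJ⟩
    have hgp : ∀ y ∈ Icc ((j:ℝ)/(N:ℝ) - 1/(N:ℝ)) ((j:ℝ)/(N:ℝ)),
        0 < α y ^ 2 * μ + σ y ^ 2 := fun y hy => hpos y (hJm y hy)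
    have hdist : ∀ y ∈ Icc ((j:ℝ)/(N:ℝ) - 1/(N:ℝ)) ((j:ℝ)/(N:ℝ)),
        |(j:ℝ)/(N:ℝ) - y| ≤ δ := by
      intro y hy
      rw [abs_of_nonneg (by linarith [hy.2])]
      linarith [hy.1, hNδ]
    have hnp : ∀ y ∈ Icc ((j:ℝ)/(N:ℝ) - 1/(N:ℝ)) ((j:ℝ)/(N:ℝ)),
        0 < α y * α ((j:ℝ)/(N:ℝ)) * μ + σ y * σ ((j:ℝ)/(N:ℝ)) := by
      intro y hy
      linarith [nlow _ hxJ y (hJm y hy) (hdist y hy), hc]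
    have hMy : ∀ y ∈ Icc ((j:ℝ)/(N:ℝ) - 1/(N:ℝ)) ((j:ℝ)/(N:ℝ)),
        |H3 μ α σ α1 σ1 α2 σ2 α3 σ3 ((j:ℝ)/(N:ℝ)) y| ≤ M := by
      intro y hy
      exact hMb ((j:ℝ)/(N:ℝ), y) ⟨⟨hxJ, hJm y hy⟩, hdist y hy⟩
    have tk := taylor_key μ α σ α1 σ1 α2 σ2 α3 σ3 ((j:ℝ)/(N:ℝ)) (1/(N:ℝ)) M
      hhpos hhx hd6 hgp hnp hMy
    have exh : (j:ℝ)/(N:ℝ) - 1/(N:ℝ) = ((j:ℝ) - 1)/(N:ℝ) := div_sub_div_same _ _ _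
    rw [exh] at tk
    simpa only [hRdef, hψdef] using tk
  -- telescoping sum
  have reidx : ∀ F : ℕ → ℝ, ∑ j ∈ Finset.Icc 1 N, F j = ∑ i ∈ Finset.range N, F (i+1) := by
    intro F
    rw [← Finset.Ico_add_one_right_eq_Icc, Finset.sum_Ico_eq_sum_range]
    simp [Nat.add_comm]
  have tele : (∑ j ∈ Finset.Icc 1 N,
      ((1/2) * Real.log (α (((j : ℝ) - 1) / (N : ℝ)) ^ 2 * μ + σ (((j : ℝ) - 1) / (N : ℝ)) ^ 2)
       - (1/2) * Real.log (α ((j : ℝ) / (N : ℝ)) ^ 2 * μ + σ ((j : ℝ) / (N : ℝ)) ^ 2))) = I := by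
    have h0J : (0:ℝ) ∈ J := ⟨le_refl 0, by norm_num⟩
    have h1J : (1:ℝ) ∈ J := ⟨by norm_num, le_refl 1⟩
    rw [hI, Real.log_div (ne_of_gt (hpos 0 h0J)) (ne_of_gt (hpos 1 h1J))]
    rw [reidx]
    have hcong : ∀ i ∈ Finset.range N,
        ((1/2) * Real.log (α (((↑(i+1) : ℝ) - 1) / (N : ℝ)) ^ 2 * μ
            + σ (((↑(i+1) : ℝ) - 1) / (N : ℝ)) ^ 2)
         - (1/2) * Real.log (α ((↑(i+1) : ℝ) / (N : ℝ)) ^ 2 * μ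
            + σ ((↑(i+1) : ℝ) / (N : ℝ)) ^ 2))
        = (fun i : ℕ => (1/2) * Real.log (α ((i:ℝ) / (N : ℝ)) ^ 2 * μ
            + σ ((i:ℝ) / (N : ℝ)) ^ 2)) i
          - (fun i : ℕ => (1/2) * Real.log (α ((i:ℝ) / (N : ℝ)) ^ 2 * μ
            + σ ((i:ℝ) / (N : ℝ)) ^ 2)) (i+1) := by
      intro i _
      have e1 : ((↑(i+1) : ℝ) - 1) / (N : ℝ) = (i:ℝ)/(N:ℝ) := by push_cast; ring
      rw [e1]
    rw [Finset.sum_congr rfl hcong, Finset.sum_range_sub']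
    have e0 : ((0:ℕ):ℝ)/(N:ℝ) = 0 := by norm_num
    have eN : ((N:ℕ):ℝ)/(N:ℝ) = 1 := div_self hNne
    rw [e0, eN]
    ring
  -- Riemann sum estimate
  have riemann : |(1/(N:ℝ)) * (∑ j ∈ Finset.Icc 1 N, ψ ((j:ℝ)/(N:ℝ)))
      - ∫ t in (0:ℝ)..1, ψ t| ≤ L1 * (1/(N:ℝ)) := by
    have hiJ : ∀ i : ℕ, i ≤ N → (i:ℝ)/(N:ℝ) ∈ J := by
      intro i hi
      have : (i:ℝ) ≤ (N:ℝ) := by exact_mod_cast hi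
      exact ⟨by positivity, (div_le_one hNpos).2 this⟩
    have hab : ∀ i : ℕ, (i:ℝ)/(N:ℝ) ≤ ((↑(i+1)):ℝ)/(N:ℝ) := by
      intro i
      have : (i:ℝ) ≤ ((↑(i+1)):ℝ) := by push_cast; linarith
      gcongr
    have hdiff : ∀ i : ℕ, ((↑(i+1)):ℝ)/(N:ℝ) - (i:ℝ)/(N:ℝ) = 1/(N:ℝ) := by
      intro i; push_cast; ring
    have hpiece : ∀ i : ℕ, i < N →
        IntervalIntegrable ψ MeasureTheory.volume ((i:ℝ)/(N:ℝ)) (((↑(i+1)):ℝ)/(N:ℝ)) := by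
      intro i hi
      apply ContinuousOn.intervalIntegrable
      apply cψ.mono
      rw [uIcc_of_le (hab i)]
      intro t ht
      exact ⟨le_trans (hiJ i (le_of_lt hi)).1 ht.1, le_trans ht.2 (hiJ (i+1) hi).2⟩
    have hsplit : ∫ t in (0:ℝ)..1, ψ t
        = ∑ i ∈ Finset.range N, ∫ t in ((i:ℝ)/(N:ℝ))..(((↑(i+1)):ℝ)/(N:ℝ)), ψ t := by
      have := intervalIntegral.sum_integral_adjacent_intervals
        (a := fun i : ℕ => (i:ℝ)/(N:ℝ)) (μ := MeasureTheory.volume) hpiece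
      have h2 := this.symm
      beta_reduce at h2
      rw [show ((0:ℕ):ℝ)/(N:ℝ) = 0 by norm_num, show ((N:ℕ):ℝ)/(N:ℝ) = 1 from div_self hNne]
        at h2
      exact h2
    have hmuls : (1/(N:ℝ)) * (∑ j ∈ Finset.Icc 1 N, ψ ((j:ℝ)/(N:ℝ)))
        = ∑ i ∈ Finset.range N, (1/(N:ℝ)) * ψ (((↑(i+1)):ℝ)/(N:ℝ)) := by
      rw [Finset.mul_sum, reidx (fun j => (1/(N:ℝ)) * ψ ((j:ℝ)/(N:ℝ)))]
    have hpp : ∀ i ∈ Finset.range N,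
        |(1/(N:ℝ)) * ψ (((↑(i+1)):ℝ)/(N:ℝ))
          - ∫ t in ((i:ℝ)/(N:ℝ))..(((↑(i+1)):ℝ)/(N:ℝ)), ψ t| ≤ L1 * (1/(N:ℝ)) * (1/(N:ℝ)) := by
      intro i hi
      have hiN := Finset.mem_range.1 hi
      have hbiJ : (((↑(i+1)):ℝ)/(N:ℝ)) ∈ J := hiJ (i+1) hiN
      have hconst : (1/(N:ℝ)) * ψ (((↑(i+1)):ℝ)/(N:ℝ))
          = ∫ _t in ((i:ℝ)/(N:ℝ))..(((↑(i+1)):ℝ)/(N:ℝ)), ψ (((↑(i+1)):ℝ)/(N:ℝ)) := by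
        rw [intervalIntegral.integral_const, smul_eq_mul, hdiff i]
      rw [hconst, ← intervalIntegral.integral_sub intervalIntegrable_const (hpiece i hiN)]
      have hbnd : ∀ t ∈ Set.uIoc ((i:ℝ)/(N:ℝ)) (((↑(i+1)):ℝ)/(N:ℝ)),
          ‖ψ (((↑(i+1)):ℝ)/(N:ℝ)) - ψ t‖ ≤ L1 * (1/(N:ℝ)) := by
        intro t ht
        rw [Set.uIoc_of_le (hab i)] at ht
        have htJ : t ∈ J := ⟨le_trans (hiJ i (le_of_lt hiN)).1 (le_of_lt ht.1),
          le_trans ht.2 hbiJ.2⟩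
        have h1 := ψlip t htJ (((↑(i+1)):ℝ)/(N:ℝ)) hbiJ
        have h2 : |(((↑(i+1)):ℝ)/(N:ℝ)) - t| ≤ 1/(N:ℝ) := by
          rw [abs_of_nonneg (by linarith [ht.2])]
          have := hdiff i
          linarith [ht.1]
        rw [Real.norm_eq_abs]
        calc |ψ (((↑(i+1)):ℝ)/(N:ℝ)) - ψ t| ≤ L1 * |(((↑(i+1)):ℝ)/(N:ℝ)) - t| := h1
          _ ≤ L1 * (1/(N:ℝ)) := mul_le_mul_of_nonneg_left h2 hL10
      have hb := intervalIntegral.norm_integral_le_of_norm_le_const hbnd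
      rw [Real.norm_eq_abs] at hb
      calc |∫ t in ((i:ℝ)/(N:ℝ))..(((↑(i+1)):ℝ)/(N:ℝ)),
            (ψ (((↑(i+1)):ℝ)/(N:ℝ)) - ψ t)|
          ≤ L1 * (1/(N:ℝ)) * |(((↑(i+1)):ℝ)/(N:ℝ)) - ((i:ℝ)/(N:ℝ))| := hb
        _ = L1 * (1/(N:ℝ)) * (1/(N:ℝ)) := by
            rw [hdiff i, abs_of_pos (by positivity)]
    calc |(1/(N:ℝ)) * (∑ j ∈ Finset.Icc 1 N, ψ ((j:ℝ)/(N:ℝ))) - ∫ t in (0:ℝ)..1, ψ t|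
        = |∑ i ∈ Finset.range N, ((1/(N:ℝ)) * ψ (((↑(i+1)):ℝ)/(N:ℝ))
            - ∫ t in ((i:ℝ)/(N:ℝ))..(((↑(i+1)):ℝ)/(N:ℝ)), ψ t)| := by
          rw [hmuls, hsplit, Finset.sum_sub_distrib]
      _ ≤ ∑ i ∈ Finset.range N, |(1/(N:ℝ)) * ψ (((↑(i+1)):ℝ)/(N:ℝ))
            - ∫ t in ((i:ℝ)/(N:ℝ))..(((↑(i+1)):ℝ)/(N:ℝ)), ψ t| :=
          Finset.abs_sum_le_sum_abs _ _
      _ ≤ ∑ _i ∈ Finset.range N, L1 * (1/(N:ℝ)) * (1/(N:ℝ)) := Finset.sum_le_sum hpp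
      _ = (N:ℝ) * (L1 * (1/(N:ℝ)) * (1/(N:ℝ))) := by
          rw [Finset.sum_const, Finset.card_range, nsmul_eq_mul]
      _ = L1 * (1/(N:ℝ)) := by field_simp
  -- assemble
  have hsum : S N = (∑ j ∈ Finset.Icc 1 N, R j)
      - (1/(N:ℝ)) ^ 2 * (∑ j ∈ Finset.Icc 1 N, ψ ((j:ℝ)/(N:ℝ))) + I := by
    rw [hS N, ← tele]
    rw [Finset.mul_sum, ← Finset.sum_sub_distrib, ← Finset.sum_add_distrib]
    apply Finset.sum_congr rfl
    intro j hj
    simp only [hRdef]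
    ring
  have hfinal : S N - I - E / (N:ℝ) = (∑ j ∈ Finset.Icc 1 N, R j)
      - (1/(N:ℝ)) * ((1/(N:ℝ)) * (∑ j ∈ Finset.Icc 1 N, ψ ((j:ℝ)/(N:ℝ)))
        - ∫ t in (0:ℝ)..1, ψ t) := by
    rw [hsum, hEψ]
    field_simp
    ring
  rw [hfinal]
  have habs1 : |∑ j ∈ Finset.Icc 1 N, R j| ≤ M / 6 / (N:ℝ) ^ 2 := by
    calc |∑ j ∈ Finset.Icc 1 N, R j| ≤ ∑ j ∈ Finset.Icc 1 N, |R j| :=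
          Finset.abs_sum_le_sum_abs _ _
      _ ≤ ∑ _j ∈ Finset.Icc 1 N, M * (1/(N:ℝ)) ^ 3 / 6 := Finset.sum_le_sum hRb
      _ = (N:ℝ) * (M * (1/(N:ℝ)) ^ 3 / 6) := by
          rw [Finset.sum_const, Nat.card_Icc]
          simp [nsmul_eq_mul]
      _ = M / 6 / (N:ℝ) ^ 2 := by
          field_simp
  have habs2 : |(1/(N:ℝ)) * ((1/(N:ℝ)) * (∑ j ∈ Finset.Icc 1 N, ψ ((j:ℝ)/(N:ℝ)))
      - ∫ t in (0:ℝ)..1, ψ t)| ≤ L1 / (N:ℝ) ^ 2 := by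
    rw [abs_mul]
    have h1 : |(1:ℝ)/(N:ℝ)| = 1/(N:ℝ) := abs_of_pos (by positivity)
    rw [h1]
    calc (1/(N:ℝ)) * |(1/(N:ℝ)) * (∑ j ∈ Finset.Icc 1 N, ψ ((j:ℝ)/(N:ℝ)))
          - ∫ t in (0:ℝ)..1, ψ t| ≤ (1/(N:ℝ)) * (L1 * (1/(N:ℝ))) := by
          apply mul_le_mul_of_nonneg_left riemann (by positivity)
      _ = L1 / (N:ℝ) ^ 2 := by field_simp
  calc |(∑ j ∈ Finset.Icc 1 N, R j)
      - (1/(N:ℝ)) * ((1/(N:ℝ)) * (∑ j ∈ Finset.Icc 1 N, ψ ((j:ℝ)/(N:ℝ)))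
        - ∫ t in (0:ℝ)..1, ψ t)|
      ≤ |∑ j ∈ Finset.Icc 1 N, R j|
        + |(1/(N:ℝ)) * ((1/(N:ℝ)) * (∑ j ∈ Finset.Icc 1 N, ψ ((j:ℝ)/(N:ℝ)))
          - ∫ t in (0:ℝ)..1, ψ t)| := abs_sub _ _
    _ ≤ M / 6 / (N:ℝ) ^ 2 + L1 / (N:ℝ) ^ 2 := add_le_add habs1 habs2
    _ ≤ (M / 6 + L1 + 1) / (N:ℝ) ^ 2 := by
        rw [← add_div]
        exact (div_le_div_iff_of_pos_right (by positivity)).2 (by linarith)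
end

section
/- Let μ > 0 and let α, σ : ℝ → ℝ be continuously differentiable on an open interval containing [0,1], with α(t)²·μ + σ(t)² > 0 for all t ∈ [0,1]. Then exp(2·S_N(μ)) tends to (α(0)²·μ + σ(0)²)/(α(1)²·μ + σ(1)²) as N → ∞. In particular, under the variance-preserving boundary conditions α(0) = 1, σ(0) = 0, α(1) = 0, σ(1) = 1, the generated variance exp(2·S_N(μ)) converges to the source variance μ, so the reverse sampling process is asymptotically consistent. -/
open Filter

lemma aux_lip_7 {f : ℝ → ℝ} {s : Set ℝ} (hs : IsOpen s) (hsub : Set.Icc (0:ℝ) 1 ⊆ s)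
    (hf : ContDiffOn ℝ 1 f s) :
    ∃ L : ℝ, 0 ≤ L ∧ ∀ a ∈ Set.Icc (0:ℝ) 1, ∀ b ∈ Set.Icc (0:ℝ) 1,
      |f a - f b| ≤ L * |a - b| := by
  have hd : ∀ x ∈ Set.Icc (0:ℝ) 1, DifferentiableAt ℝ f x := fun x hx =>
    (hf.contDiffAt (hs.mem_nhds (hsub hx))).differentiableAt one_ne_zero
  have hc : ContinuousOn (deriv f) (Set.Icc (0:ℝ) 1) :=
    (hf.continuousOn_deriv_of_isOpen hs le_rfl).mono hsub
  obtain ⟨M, hM⟩ := isCompact_Icc.exists_bound_of_continuousOn hc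
  have hb : ∀ x ∈ Set.Icc (0:ℝ) 1, ‖deriv f x‖₊ ≤ M.toNNReal := by
    intro x hx
    rw [← NNReal.coe_le_coe, coe_nnnorm]
    exact (hM x hx).trans (Real.le_coe_toNNReal M)
  have hlip := (convex_Icc (0:ℝ) 1).lipschitzOnWith_of_nnnorm_deriv_le hd hb
  refine ⟨M.toNNReal, NNReal.coe_nonneg _, fun a ha b hb' => ?_⟩
  have h2 := hlip.dist_le_mul a ha b hb'
  rwa [Real.dist_eq, Real.dist_eq] at h2

lemma aux_bdd_7 {f : ℝ → ℝ} {s : Set ℝ} (hsub : Set.Icc (0:ℝ) 1 ⊆ s)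
    (hf : ContinuousOn f s) :
    ∃ A : ℝ, 0 ≤ A ∧ ∀ t ∈ Set.Icc (0:ℝ) 1, |f t| ≤ A := by
  obtain ⟨C, hC⟩ := isCompact_Icc.exists_bound_of_continuousOn (hf.mono hsub)
  exact ⟨max C 0, le_max_right _ _, fun t ht => (hC t ht).trans (le_max_left _ _)⟩

lemma aux_eq_7 {p q1 q2 : ℝ} (hp : 0 < p) (hq1 : 0 < q1) (hq2 : 0 < q2) :
    2 * Real.log (p / q2) =
      Real.log (p ^ 2 / (q1 * q2)) + (Real.log q1 - Real.log q2) := by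
  rw [Real.log_div (pow_ne_zero 2 hp.ne') (mul_ne_zero hq1.ne' hq2.ne'),
    Real.log_div hp.ne' hq2.ne', Real.log_mul hq1.ne' hq2.ne', Real.log_pow]
  push_cast; ring

lemma aux_bound_7 {μ c p q1 q2 D : ℝ} (hμ : 0 < μ) (hc : 0 < c)
    (hq1 : c ≤ q1) (hq2 : c ≤ q2) (hp : c / 2 ≤ p) (hid : p ^ 2 = q1 * q2 - μ * D ^ 2) :
    |Real.log (p ^ 2 / (q1 * q2))| ≤ 4 * μ * D ^ 2 / c ^ 2 := by
  have hp0 : 0 < p := lt_of_lt_of_le (by positivity) hp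
  have hq10 : 0 < q1 := lt_of_lt_of_le hc hq1
  have hq20 : 0 < q2 := lt_of_lt_of_le hc hq2
  have hD : 0 ≤ μ * D ^ 2 := by positivity
  have hle : p ^ 2 ≤ q1 * q2 := by nlinarith
  have hr0 : 0 < p ^ 2 / (q1 * q2) := by positivity
  have hr1 : p ^ 2 / (q1 * q2) ≤ 1 := by
    rw [div_le_one (by positivity)]; exact hle
  rw [abs_of_nonpos (Real.log_nonpos hr0.le hr1), ← Real.log_inv]
  have h3 : (p ^ 2 / (q1 * q2))⁻¹ = q1 * q2 / p ^ 2 := by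
    rw [inv_div]
  rw [h3]
  have h4 := Real.log_le_sub_one_of_pos (show (0:ℝ) < q1 * q2 / p ^ 2 by positivity)
  refine h4.trans ?_
  have h5 : q1 * q2 / p ^ 2 - 1 = μ * D ^ 2 / p ^ 2 := by
    rw [div_sub_one (by positivity), hid]; ring_nf
  rw [h5]
  have hp2 : c ^ 2 / 4 ≤ p ^ 2 := by nlinarith
  rw [div_le_div_iff₀ (by positivity) (by positivity)]
  nlinarith

lemma aux_sum_Icc_7 (h : ℕ → ℝ) (N : ℕ) :
    ∑ j ∈ Finset.Icc 1 N, h j = ∑ i ∈ Finset.range N, h (i + 1) := by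
  rw [← Finset.Ico_add_one_right_eq_Icc, Finset.sum_Ico_eq_sum_range]
  simp [add_comm]

set_option maxHeartbeats 1000000 in
/-- The generated variance `exp(2·S_N(μ))` converges, as `N → ∞`, to
`(α(0)²μ + σ(0)²)/(α(1)²μ + σ(1)²)`; in particular, under the
variance-preserving boundary conditions it converges to the source variance
`μ`, so the reverse sampling process is asymptotically consistent. -/
theorem stmt_7 (μ : ℝ) (hμ : 0 < μ) (α σ : ℝ → ℝ) (s : Set ℝ) (hs : IsOpen s)
    (hsub : Set.Icc (0 : ℝ) 1 ⊆ s)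
    (hα : ContDiffOn ℝ 1 α s) (hσ : ContDiffOn ℝ 1 σ s)
    (hpos : ∀ t ∈ Set.Icc (0 : ℝ) 1, 0 < (α t) ^ 2 * μ + (σ t) ^ 2)
    (S : ℕ → ℝ)
    (hS : ∀ N : ℕ, S N = ∑ j ∈ Finset.Icc 1 N,
      Real.log ((α (((j : ℝ) - 1) / (N : ℝ)) * α ((j : ℝ) / (N : ℝ)) * μ
          + σ (((j : ℝ) - 1) / (N : ℝ)) * σ ((j : ℝ) / (N : ℝ)))
        / ((α ((j : ℝ) / (N : ℝ))) ^ 2 * μ + (σ ((j : ℝ) / (N : ℝ))) ^ 2))) :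
    Tendsto (fun N : ℕ => Real.exp (2 * S N)) atTop
      (nhds (((α 0) ^ 2 * μ + (σ 0) ^ 2) / ((α 1) ^ 2 * μ + (σ 1) ^ 2)))
    ∧ (α 0 = 1 → σ 0 = 0 → α 1 = 0 → σ 1 = 1 →
        Tendsto (fun N : ℕ => Real.exp (2 * S N)) atTop (nhds μ)) := by
  classical
  set g : ℝ → ℝ := fun t => α t ^ 2 * μ + σ t ^ 2 with hgdef
  have hposg : ∀ t ∈ Set.Icc (0:ℝ) 1, 0 < g t := hpos
  have hg0 : 0 < g 0 := hposg 0 (by constructor <;> norm_num)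
  have hg1 : 0 < g 1 := hposg 1 (by constructor <;> norm_num)
  -- minimum of g on [0,1]
  have hgc : ContinuousOn g (Set.Icc (0:ℝ) 1) := by
    apply ContinuousOn.add
    · exact ((hα.continuousOn.mono hsub).pow 2).mul continuousOn_const
    · exact (hσ.continuousOn.mono hsub).pow 2
  obtain ⟨t0, ht0, hmin⟩ := isCompact_Icc.exists_isMinOn (Set.nonempty_Icc.mpr zero_le_one) hgc
  set c := g t0 with hcdef
  have hc : 0 < c := hposg t0 ht0
  have hcle : ∀ t ∈ Set.Icc (0:ℝ) 1, c ≤ g t := fun t ht => hmin ht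
  clear_value g c
  -- bounds and Lipschitz constants
  obtain ⟨Aa, hAa0, hAa⟩ := aux_bdd_7 hsub hα.continuousOn
  obtain ⟨As, hAs0, hAs⟩ := aux_bdd_7 hsub hσ.continuousOn
  obtain ⟨La, hLa0, hLa⟩ := aux_lip_7 hs hsub hα
  obtain ⟨Ls, hLs0, hLs⟩ := aux_lip_7 hs hsub hσ
  set A := max Aa As + 1 with hAdef
  set L := max La Ls + 1 with hLdef
  have hA0 : 0 < A := by positivity
  have hL0 : 0 < L := by positivity
  have hAα : ∀ t ∈ Set.Icc (0:ℝ) 1, |α t| ≤ A := fun t ht =>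
    (hAa t ht).trans (by simp only [hAdef]; linarith [le_max_left Aa As])
  have hAσ : ∀ t ∈ Set.Icc (0:ℝ) 1, |σ t| ≤ A := fun t ht =>
    (hAs t ht).trans (by simp only [hAdef]; linarith [le_max_right Aa As])
  have hLα : ∀ a ∈ Set.Icc (0:ℝ) 1, ∀ b ∈ Set.Icc (0:ℝ) 1, |α a - α b| ≤ L * |a - b| :=
    fun a ha b hb => (hLa a ha b hb).trans
      (mul_le_mul_of_nonneg_right (by simp only [hLdef]; linarith [le_max_left La Ls])
        (abs_nonneg _))
  have hLσ : ∀ a ∈ Set.Icc (0:ℝ) 1, ∀ b ∈ Set.Icc (0:ℝ) 1, |σ a - σ b| ≤ L * |a - b| :=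
    fun a ha b hb => (hLs a ha b hb).trans
      (mul_le_mul_of_nonneg_right (by simp only [hLdef]; linarith [le_max_right La Ls])
        (abs_nonneg _))
  set C1 := A * L * (μ + 1) with hC1def
  have hC10 : 0 < C1 := by positivity
  set K := 16 * μ * A ^ 2 * L ^ 2 / c ^ 2 with hKdef
  have hK0 : 0 ≤ K := by positivity
  set N₀ : ℕ := ⌈2 * C1 / c⌉₊ + 1 with hN₀def
  clear_value A L C1 K
  -- main bound
  have hbound : ∀ N : ℕ, N₀ ≤ N →
      |2 * S N - (Real.log (g 0) - Real.log (g 1))| ≤ K / (N : ℝ) := by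
    intro N hN
    have hN1 : 1 ≤ N := le_trans (Nat.le_add_left 1 _) hN
    have hn1 : (1:ℝ) ≤ (N:ℝ) := by exact_mod_cast hN1
    have hn0 : (0:ℝ) < (N:ℝ) := lt_of_lt_of_le one_pos hn1
    have hnc : 2 * C1 / c ≤ (N:ℝ) := by
      calc 2 * C1 / c ≤ (⌈2 * C1 / c⌉₊ : ℝ) := Nat.le_ceil _
        _ ≤ (N:ℝ) := by exact_mod_cast le_trans (Nat.le_succ _) hN
    have h2c : 2 * C1 ≤ (N:ℝ) * c := by
      rw [div_le_iff₀ hc] at hnc; linarith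
    -- the per-term facts
    have key : ∀ j ∈ Finset.Icc 1 N,
        (2 * Real.log ((α (((j:ℝ) - 1) / (N:ℝ)) * α ((j:ℝ) / (N:ℝ)) * μ
            + σ (((j:ℝ) - 1) / (N:ℝ)) * σ ((j:ℝ) / (N:ℝ)))
          / ((α ((j:ℝ) / (N:ℝ))) ^ 2 * μ + (σ ((j:ℝ) / (N:ℝ))) ^ 2))
          = Real.log ((α (((j:ℝ) - 1) / (N:ℝ)) * α ((j:ℝ) / (N:ℝ)) * μ
              + σ (((j:ℝ) - 1) / (N:ℝ)) * σ ((j:ℝ) / (N:ℝ))) ^ 2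
              / (g (((j:ℝ) - 1) / (N:ℝ)) * g ((j:ℝ) / (N:ℝ))))
            + (Real.log (g (((j:ℝ) - 1) / (N:ℝ))) - Real.log (g ((j:ℝ) / (N:ℝ)))))
        ∧ |Real.log ((α (((j:ℝ) - 1) / (N:ℝ)) * α ((j:ℝ) / (N:ℝ)) * μ
              + σ (((j:ℝ) - 1) / (N:ℝ)) * σ ((j:ℝ) / (N:ℝ))) ^ 2
              / (g (((j:ℝ) - 1) / (N:ℝ)) * g ((j:ℝ) / (N:ℝ))))| ≤ K / (N:ℝ) ^ 2 := by
      intro j hj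
      obtain ⟨hj1, hjN⟩ := Finset.mem_Icc.mp hj
      have hj1' : (1:ℝ) ≤ (j:ℝ) := by exact_mod_cast hj1
      have hjN' : (j:ℝ) ≤ (N:ℝ) := by exact_mod_cast hjN
      set a : ℝ := ((j:ℝ) - 1) / (N:ℝ) with hadef
      set b : ℝ := (j:ℝ) / (N:ℝ) with hbdef
      have haI : a ∈ Set.Icc (0:ℝ) 1 := by
        constructor
        · exact div_nonneg (by linarith) hn0.le
        · rw [div_le_one hn0]; linarith
      have hbI : b ∈ Set.Icc (0:ℝ) 1 := by
        constructor
        · exact div_nonneg (by linarith) hn0.le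
        · rw [div_le_one hn0]; linarith
      have hba : b - a = 1 / (N:ℝ) := by
        rw [hadef, hbdef, div_sub_div_same]; ring_nf
      have habs : |b - a| = 1 / (N:ℝ) := by
        rw [hba]; exact abs_of_nonneg (by positivity)
      set p : ℝ := α a * α b * μ + σ a * σ b with hpdef
      set D : ℝ := α a * σ b - α b * σ a with hDdef
      have hq1 : c ≤ g a := hcle a haI
      have hq2 : c ≤ g b := hcle b hbI
      have hid : p ^ 2 = g a * g b - μ * D ^ 2 := by
        simp only [hpdef, hDdef, hgdef]; ring
      have hrwp : p - g a = α a * (α b - α a) * μ + σ a * (σ b - σ a) := by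
        simp only [hpdef, hgdef]; ring
      have hrwD : D = α a * (σ b - σ a) - σ a * (α b - α a) := by
        simp only [hDdef]; ring
      clear_value a b p D
      -- Lipschitz differences
      have eαa : |α a| ≤ A := hAα a haI
      have eσa : |σ a| ≤ A := hAσ a haI
      have eα : |α b - α a| ≤ L * (1 / (N:ℝ)) := by
        have := hLα b hbI a haI
        rwa [habs] at this
      have eσ : |σ b - σ a| ≤ L * (1 / (N:ℝ)) := by
        have := hLσ b hbI a haI
        rwa [habs] at this
      -- p is at least c/2
      have hpq : |p - g a| ≤ C1 * (1 / (N:ℝ)) := by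
        rw [hrwp]
        calc |α a * (α b - α a) * μ + σ a * (σ b - σ a)|
            ≤ |α a * (α b - α a) * μ| + |σ a * (σ b - σ a)| := abs_add_le _ _
          _ = |α a| * |α b - α a| * μ + |σ a| * |σ b - σ a| := by
              rw [abs_mul, abs_mul, abs_mul, abs_of_pos hμ]
          _ ≤ A * (L * (1 / (N:ℝ))) * μ + A * (L * (1 / (N:ℝ))) := by
              have h1 : |α a| * |α b - α a| ≤ A * (L * (1 / (N:ℝ))) :=
                mul_le_mul eαa eα (abs_nonneg _) hA0.le
              have h2 : |σ a| * |σ b - σ a| ≤ A * (L * (1 / (N:ℝ))) :=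
                mul_le_mul eσa eσ (abs_nonneg _) hA0.le
              have h1' := mul_le_mul_of_nonneg_right h1 hμ.le
              linarith
          _ = C1 * (1 / (N:ℝ)) := by rw [hC1def]; ring
      have hC1N : C1 * (1 / (N:ℝ)) ≤ c / 2 := by
        rw [mul_one_div, div_le_div_iff₀ hn0 two_pos]
        linarith
      have hp : c / 2 ≤ p := by
        have h7 := (abs_le.mp hpq).1
        linarith
      -- bound on D
      have hD : |D| ≤ 2 * A * L * (1 / (N:ℝ)) := by
        rw [hrwD]
        calc |α a * (σ b - σ a) - σ a * (α b - α a)|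
            ≤ |α a * (σ b - σ a)| + |σ a * (α b - α a)| := abs_sub _ _
          _ = |α a| * |σ b - σ a| + |σ a| * |α b - α a| := by rw [abs_mul, abs_mul]
          _ ≤ A * (L * (1 / (N:ℝ))) + A * (L * (1 / (N:ℝ))) := by
              have h1 : |α a| * |σ b - σ a| ≤ A * (L * (1 / (N:ℝ))) :=
                mul_le_mul eαa eσ (abs_nonneg _) hA0.le
              have h2 : |σ a| * |α b - α a| ≤ A * (L * (1 / (N:ℝ))) :=
                mul_le_mul eσa eα (abs_nonneg _) hA0.le
              linarith
          _ = 2 * A * L * (1 / (N:ℝ)) := by ring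
      have hp0 : 0 < p := lt_of_lt_of_le (by positivity) hp
      have hq10 : 0 < g a := lt_of_lt_of_le hc hq1
      have hq20 : 0 < g b := lt_of_lt_of_le hc hq2
      constructor
      · have hgb : α b ^ 2 * μ + σ b ^ 2 = g b := by rw [hgdef]
        rw [hgb]
        exact aux_eq_7 hp0 hq10 hq20
      · have hb1 := aux_bound_7 hμ hc hq1 hq2 hp hid
        refine hb1.trans ?_
        have hD2 : D ^ 2 ≤ 4 * A ^ 2 * L ^ 2 / (N:ℝ) ^ 2 := by
          have h6 : D ^ 2 ≤ (2 * A * L * (1 / (N:ℝ))) ^ 2 := by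
            rw [← sq_abs]
            exact pow_le_pow_left₀ (abs_nonneg D) hD 2
          calc D ^ 2 ≤ (2 * A * L * (1 / (N:ℝ))) ^ 2 := h6
            _ = 4 * A ^ 2 * L ^ 2 / (N:ℝ) ^ 2 := by field_simp; ring
        calc 4 * μ * D ^ 2 / c ^ 2 ≤ 4 * μ * (4 * A ^ 2 * L ^ 2 / (N:ℝ) ^ 2) / c ^ 2 := by
              gcongr
          _ = K / (N:ℝ) ^ 2 := by rw [hKdef]; field_simp; ring
    -- the sum identity
    set T : ℕ → ℝ := fun i => Real.log (g ((i:ℝ) / (N:ℝ))) with hTdef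
    have hsum : 2 * S N = (∑ j ∈ Finset.Icc 1 N,
        Real.log ((α (((j:ℝ) - 1) / (N:ℝ)) * α ((j:ℝ) / (N:ℝ)) * μ
            + σ (((j:ℝ) - 1) / (N:ℝ)) * σ ((j:ℝ) / (N:ℝ))) ^ 2
            / (g (((j:ℝ) - 1) / (N:ℝ)) * g ((j:ℝ) / (N:ℝ)))))
        + (Real.log (g 0) - Real.log (g 1)) := by
      rw [hS N, Finset.mul_sum]
      rw [Finset.sum_congr rfl (fun j hj => (key j hj).1), Finset.sum_add_distrib]
      congr 1
      have hcast : ∀ j ∈ Finset.Icc 1 N,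
          Real.log (g (((j:ℝ) - 1) / (N:ℝ))) - Real.log (g ((j:ℝ) / (N:ℝ)))
            = T (j - 1) - T j := by
        intro j hj
        obtain ⟨hj1, _⟩ := Finset.mem_Icc.mp hj
        simp only [hTdef]
        rw [Nat.cast_sub hj1]
        norm_num
      rw [Finset.sum_congr rfl hcast, aux_sum_Icc_7 (fun j => T (j - 1) - T j) N]
      simp only [Nat.add_sub_cancel]
      rw [Finset.sum_range_sub' T N]
      simp only [hTdef, Nat.cast_zero, zero_div, div_self hn0.ne']
    rw [hsum, add_sub_cancel_right]
    calc |∑ j ∈ Finset.Icc 1 N, Real.log ((α (((j:ℝ) - 1) / (N:ℝ)) * α ((j:ℝ) / (N:ℝ)) * μ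
            + σ (((j:ℝ) - 1) / (N:ℝ)) * σ ((j:ℝ) / (N:ℝ))) ^ 2
            / (g (((j:ℝ) - 1) / (N:ℝ)) * g ((j:ℝ) / (N:ℝ))))|
        ≤ ∑ j ∈ Finset.Icc 1 N, |Real.log ((α (((j:ℝ) - 1) / (N:ℝ)) * α ((j:ℝ) / (N:ℝ)) * μ
            + σ (((j:ℝ) - 1) / (N:ℝ)) * σ ((j:ℝ) / (N:ℝ))) ^ 2
            / (g (((j:ℝ) - 1) / (N:ℝ)) * g ((j:ℝ) / (N:ℝ))))| :=
          Finset.abs_sum_le_sum_abs _ _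
      _ ≤ ∑ _j ∈ Finset.Icc 1 N, K / (N:ℝ) ^ 2 :=
          Finset.sum_le_sum (fun j hj => (key j hj).2)
      _ = (N:ℝ) * (K / (N:ℝ) ^ 2) := by
          rw [Finset.sum_const, Nat.card_Icc]
          simp [Nat.add_sub_cancel]
      _ = K / (N:ℝ) := by field_simp
  -- conclude
  have hT2 : Tendsto (fun N : ℕ => 2 * S N) atTop
      (nhds (Real.log (g 0) - Real.log (g 1))) := by
    have h0 : Tendsto (fun N : ℕ => K / (N:ℝ)) atTop (nhds 0) :=
      tendsto_const_div_atTop_nhds_zero_nat K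
    have hsq : Tendsto (fun N : ℕ => 2 * S N - (Real.log (g 0) - Real.log (g 1))) atTop
        (nhds 0) := by
      apply squeeze_zero_norm' _ h0
      filter_upwards [eventually_ge_atTop N₀] with N hN
      rw [Real.norm_eq_abs]
      exact hbound N hN
    have := hsq.add_const (Real.log (g 0) - Real.log (g 1))
    simpa using this
  have hExp : Tendsto (fun N : ℕ => Real.exp (2 * S N)) atTop (nhds (g 0 / g 1)) := by
    have := (Real.continuous_exp.tendsto _).comp hT2
    simpa [Function.comp_def, Real.exp_sub, Real.exp_log hg0, Real.exp_log hg1] using this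
  constructor
  · simpa [hgdef] using hExp
  · intro h1 h2 h3 h4
    have hval : g 0 / g 1 = μ := by
      simp [hgdef, h1, h2, h3, h4]
    rw [hval] at hExp
    exact hExp
end

section
/- Let k ≥ 1 and μ₁,…,μ_k > 0, and let α, σ : ℝ → ℝ be three times continuously differentiable on an open interval containing [0,1] with α(t)²·μ_ℓ + σ(t)² > 0 for all t ∈ [0,1] and all ℓ, satisfying the variance-preserving boundary conditions α(0) = 1, σ(0) = 0, α(1) = 0, σ(1) = 1. For each ℓ define r_ℓ(N) = S_N(μ_ℓ) − (1/2)·log μ_ℓ and E¹(μ_ℓ) = −(μ_ℓ/2)·∫₀¹ (α(t)·σ'(t) − σ(t)·α'(t))² / (α(t)²·μ_ℓ + σ(t)²)² dt. Then there exist a constant C > 0 and N₀ ∈ ℕ such that for all N ≥ N₀, | (1/2)·Σ_{ℓ=1}^{k} ( exp(2·r_ℓ(N)) − 2·r_ℓ(N) − 1 ) − (1/N²)·Σ_{ℓ=1}^{k} E¹(μ_ℓ)² | ≤ C/N³. In particular the Kullback–Leibler divergence between the reverse-sampling output distribution and the source distribution, which equals (1/2)·Σ_ℓ (exp(2·r_ℓ(N))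 − 2·r_ℓ(N) − 1), is of order 1/N². -/
open Real Set


private lemma exp_cubic_bound {x : ℝ} (hx : |x| ≤ 1) :
    |Real.exp x - 1 - x - x ^ 2 / 2| ≤ |x| ^ 3 := by
  have h := Real.exp_bound hx (n := 3) (by norm_num)
  have hs : ∑ m ∈ Finset.range 3, x ^ m / m.factorial = 1 + x + x ^ 2 / 2 := by
    norm_num [Finset.sum_range_succ, Nat.factorial]
  rw [hs] at h
  have h2 : Real.exp x - (1 + x + x ^ 2 / 2) = Real.exp x - 1 - x - x ^ 2 / 2 := by ring
  rw [h2] at h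
  refine h.trans ?_
  have : ((3:ℕ).succ / ((3:ℕ).factorial * 3) : ℝ) ≤ 1 := by norm_num [Nat.factorial]
  nlinarith [abs_nonneg x, pow_nonneg (abs_nonneg x) 3]

private lemma hasDerivAt_log_triple {g g1 g2 g3 : ℝ → ℝ} {x : ℝ}
    (hg : HasDerivAt g (g1 x) x) (hg1 : HasDerivAt g1 (g2 x) x)
    (hg2 : HasDerivAt g2 (g3 x) x) (hx : g x ≠ 0) :
    HasDerivAt (fun s => Real.log (g s)) (g1 x / g x) x ∧
    HasDerivAt (fun s => g1 s / g s) (g2 x / g x - (g1 x / g x) ^ 2) x ∧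
    HasDerivAt (fun s => g2 s / g s - (g1 s / g s) ^ 2)
      (g3 x / g x - 3 * (g2 x * g1 x) / g x ^ 2 + 2 * (g1 x / g x) ^ 3) x := by
  refine ⟨?_, ?_, ?_⟩
  · have := (Real.hasDerivAt_log hx).comp x hg
    refine this.congr_deriv ?_
    field_simp
  · have := hg1.div hg hx
    refine this.congr_deriv ?_
    field_simp
  · have h1 := hg1.div hg hx
    have h2 := hg2.div hg hx
    have := h2.sub (h1.pow 2)
    refine this.congr_deriv ?_
    simp only [Pi.div_apply, Nat.cast_ofNat, Nat.add_one_sub_one, pow_one]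
    field_simp
    ring


private lemma taylor2_bound {f f1 f2 f3 : ℝ → ℝ} {t h M3 : ℝ} (hh : 0 ≤ h) (hM3 : 0 ≤ M3)
    (hd : ∀ x ∈ Icc (t - h) t,
      HasDerivAt f (f1 x) x ∧ HasDerivAt f1 (f2 x) x ∧ HasDerivAt f2 (f3 x) x)
    (hb : ∀ x ∈ Icc (t - h) t, |f3 x| ≤ M3)
    (hft : f t = 0) (hf1t : f1 t = 0) :
    |f (t - h) - f2 t * h ^ 2 / 2| ≤ M3 * h ^ 3 := by
  have htI : t ∈ Icc (t - h) t := by constructor <;> linarith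
  have hthI : t - h ∈ Icc (t - h) t := by constructor <;> linarith
  -- step 1 : |f2 x - f2 t| ≤ M3 * h on I
  have step1 : ∀ x ∈ Icc (t - h) t, |f2 x - f2 t| ≤ M3 * h := by
    intro x hx
    have := (convex_Icc (t - h) t).norm_image_sub_le_of_norm_hasDerivWithin_le
      (f' := f3) (fun y hy => ((hd y hy).2.2).hasDerivWithinAt)
      (fun y hy => by simpa using hb y hy) htI hx
    simp only [Real.norm_eq_abs] at this
    refine this.trans ?_
    have : |x - t| ≤ h := by
      rw [abs_sub_comm, abs_of_nonneg (by linarith [hx.2])]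
      linarith [hx.1]
    nlinarith
  -- step 2 : |f1 x - f2 t * (x - t)| ≤ (M3*h) * h on I
  have step2 : ∀ x ∈ Icc (t - h) t, |f1 x - f2 t * (x - t)| ≤ M3 * h * h := by
    intro x hx
    set q : ℝ → ℝ := fun y => f1 y - f2 t * (y - t) with hq
    have hqd : ∀ y ∈ Icc (t - h) t, HasDerivAt q (f2 y - f2 t) y := by
      intro y hy
      exact ((hd y hy).2.1).sub (((hasDerivAt_id y).sub_const t).const_mul (f2 t) |>.congr_deriv
        (by ring))
    have := (convex_Icc (t - h) t).norm_image_sub_le_of_norm_hasDerivWithin_le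
      (f' := fun y => f2 y - f2 t) (fun y hy => (hqd y hy).hasDerivWithinAt)
      (fun y hy => by simpa using step1 y hy) htI hx
    simp only [Real.norm_eq_abs, hq] at this
    have hqt : f1 t - f2 t * (t - t) = 0 := by rw [hf1t]; ring
    rw [hqt, sub_zero] at this
    refine this.trans ?_
    have hxt : |x - t| ≤ h := by
      rw [abs_sub_comm, abs_of_nonneg (by linarith [hx.2])]
      linarith [hx.1]
    nlinarith [mul_nonneg hM3 hh, abs_nonneg (x - t)]
  -- step 3
  set w : ℝ → ℝ := fun y => f y - f2 t * ((y - t) ^ 2 / 2) with hw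
  have hwd : ∀ y ∈ Icc (t - h) t, HasDerivAt w (f1 y - f2 t * (y - t)) y := by
    intro y hy
    refine ((hd y hy).1).sub ?_
    have h1 : HasDerivAt (fun z : ℝ => (z - t) ^ 2 / 2) (y - t) y := by
      have := ((hasDerivAt_id y).sub_const t).pow 2
      have h2 := this.div_const 2
      refine h2.congr_deriv ?_
      simp only [id_eq]
      ring
    exact (h1.const_mul (f2 t)).congr_deriv (by ring)
  have := (convex_Icc (t - h) t).norm_image_sub_le_of_norm_hasDerivWithin_le
    (f' := fun y => f1 y - f2 t * (y - t)) (fun y hy => (hwd y hy).hasDerivWithinAt)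
    (fun y hy => by simpa using step2 y hy) htI hthI
  simp only [Real.norm_eq_abs, hw] at this
  have hwt : f t - f2 t * ((t - t) ^ 2 / 2) = 0 := by rw [hft]; ring
  rw [hwt, sub_zero] at this
  have harg : f (t - h) - f2 t * ((t - h - t) ^ 2 / 2) = f (t - h) - f2 t * h ^ 2 / 2 := by
    ring
  rw [harg] at this
  refine this.trans ?_
  have : |t - h - t| = h := by rw [abs_of_nonpos (by linarith)]; ring
  rw [this]
  nlinarith


private lemma abs_ratio3_bound {u1 u2 u3 v Mu c : ℝ} (hc : 0 < c) (hcM : c ≤ Mu)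
    (h1 : |u1| ≤ Mu) (h2 : |u2| ≤ Mu) (h3 : |u3| ≤ Mu) (hv : c ≤ v) :
    |u3 / v - 3 * (u2 * u1) / v ^ 2 + 2 * (u1 / v) ^ 3| ≤ 6 * (Mu / c) ^ 3 := by
  have hv0 : 0 < v := lt_of_lt_of_le hc hv
  have hMu0 : 0 ≤ Mu := hc.le.trans hcM
  have hR : 1 ≤ Mu / c := (one_le_div hc).2 hcM
  have e1 : |u3 / v| ≤ Mu / c := by
    rw [abs_div, abs_of_pos hv0]
    exact div_le_div₀ hMu0 h3 hc hv
  have e1' : |u1| / v ≤ Mu / c := div_le_div₀ hMu0 h1 hc hv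
  have e2 : |3 * (u2 * u1) / v ^ 2| ≤ 3 * (Mu * Mu) / c ^ 2 := by
    rw [abs_div, abs_mul, abs_mul, abs_of_pos (pow_pos hv0 2),
      show |(3:ℝ)| = 3 by norm_num]
    exact div_le_div₀ (by positivity)
      (by nlinarith [mul_le_mul h2 h1 (abs_nonneg u1) hMu0])
      (pow_pos hc 2) (by nlinarith)
  have e3 : |2 * (u1 / v) ^ 3| ≤ 2 * (Mu / c) ^ 3 := by
    rw [abs_mul, abs_pow, abs_div, abs_of_pos hv0, show |(2:ℝ)| = 2 by norm_num]
    have := pow_le_pow_left₀ (by positivity) e1' 3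
    nlinarith [this]
  calc |u3 / v - 3 * (u2 * u1) / v ^ 2 + 2 * (u1 / v) ^ 3|
      ≤ |u3 / v - 3 * (u2 * u1) / v ^ 2| + |2 * (u1 / v) ^ 3| := abs_add_le _ _
    _ ≤ (|u3 / v| + |3 * (u2 * u1) / v ^ 2|) + |2 * (u1 / v) ^ 3| := by
        gcongr; exact abs_sub _ _
    _ ≤ (Mu / c + 3 * (Mu * Mu) / c ^ 2) + 2 * (Mu / c) ^ 3 :=
        add_le_add (add_le_add e1 e2) e3
    _ ≤ 6 * (Mu / c) ^ 3 := by
        have h2' : 3 * (Mu * Mu) / c ^ 2 = 3 * (Mu / c) ^ 2 := by field_simp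
        rw [h2']
        nlinarith [hR]

private lemma abs_comb {a b c d m M : ℝ} (hm : 0 ≤ m) (hM : 0 ≤ M)
    (ha : |a| ≤ M) (hb : |b| ≤ M) (hc : |c| ≤ M) (hd : |d| ≤ M) :
    |a * b * m + c * d| ≤ M ^ 2 * (m + 1) := by
  calc |a * b * m + c * d| ≤ |a| * |b| * m + |c| * |d| := by
        refine (abs_add_le _ _).trans ?_
        rw [abs_mul, abs_mul, abs_mul, abs_of_nonneg hm]
    _ ≤ M * M * m + M * M := by
        have := mul_le_mul ha hb (abs_nonneg b) hM
        have := mul_le_mul hc hd (abs_nonneg d) hM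
        nlinarith [abs_nonneg a, abs_nonneg c]
    _ = M ^ 2 * (m + 1) := by ring

private lemma riemann_bound {D : ℝ → ℝ} {LD : ℝ} (hLD : 0 ≤ LD)
    (hD : ContinuousOn D (Icc 0 1))
    (hlip : ∀ x ∈ Icc (0:ℝ) 1, ∀ y ∈ Icc (0:ℝ) 1, |D x - D y| ≤ LD * |x - y|)
    {N : ℕ} (hN : 1 ≤ N) :
    |(∑ i ∈ Finset.range N, (1 / (N:ℝ)) * D (((i:ℝ) + 1) / N)) - ∫ t in (0:ℝ)..1, D t|
      ≤ LD / N := by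
  have hN0 : (0:ℝ) < N := by exact_mod_cast hN
  set a : ℕ → ℝ := fun i => (i:ℝ) / N with ha
  have hmem : ∀ i : ℕ, i ≤ N → a i ∈ Icc (0:ℝ) 1 := by
    intro i hi
    constructor
    · positivity
    · rw [div_le_one hN0]; exact_mod_cast hi
  have hle : ∀ i : ℕ, a i ≤ a (i + 1) := by
    intro i
    simp only [ha]
    gcongr
    push_cast
    linarith
  have hsub : ∀ i : ℕ, i < N → Icc (a i) (a (i+1)) ⊆ Icc (0:ℝ) 1 := by
    intro i hi
    exact Icc_subset_Icc (hmem i hi.le).1 (hmem (i+1) hi).2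
  have hint : ∀ i : ℕ, i < N → IntervalIntegrable D MeasureTheory.volume (a i) (a (i+1)) := by
    intro i hi
    exact (hD.mono (by rw [uIcc_of_le (hle i)]; exact hsub i hi)).intervalIntegrable
  have htot := intervalIntegral.sum_integral_adjacent_intervals (μ := MeasureTheory.volume)
    (a := a) (n := N) hint
  have ha0 : a 0 = 0 := by simp [ha]
  have haN : a N = 1 := by simp only [ha]; field_simp
  rw [ha0, haN] at htot
  have hstep : ∀ i : ℕ, a (i+1) - a i = 1 / N := by
    intro i
    simp only [ha]
    push_cast
    field_simp
    ring
  have key : ∀ i : ℕ, i < N →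
      |(1 / (N:ℝ)) * D (((i:ℝ) + 1) / N) - ∫ x in a i..a (i+1), D x| ≤ LD / N ^ 2 := by
    intro i hi
    have hb : a (i+1) = ((i:ℝ) + 1) / N := by simp only [ha]; push_cast; ring
    have hconst : (1 / (N:ℝ)) * D (a (i+1)) = ∫ _ in a i..a (i+1), D (a (i+1)) := by
      rw [intervalIntegral.integral_const, hstep i, smul_eq_mul]
    rw [← hb, hconst, ← intervalIntegral.integral_sub intervalIntegrable_const (hint i hi)]
    have hbnd : ∀ x ∈ Set.uIoc (a i) (a (i+1)), ‖D (a (i+1)) - D x‖ ≤ LD * (1 / N) := by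
      intro x hx
      rw [Set.uIoc_of_le (hle i)] at hx
      have hx01 : x ∈ Icc (0:ℝ) 1 := hsub i hi ⟨hx.1.le, hx.2⟩
      have h1 := hlip (a (i+1)) (hmem (i+1) hi) x hx01
      rw [Real.norm_eq_abs]
      refine h1.trans ?_
      have : |a (i+1) - x| ≤ 1 / N := by
        rw [abs_of_nonneg (by linarith [hx.2])]
        have := hstep i
        linarith [hx.1]
      exact mul_le_mul_of_nonneg_left this hLD
    have := intervalIntegral.norm_integral_le_of_norm_le_const hbnd
    rw [Real.norm_eq_abs] at this
    refine this.trans ?_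
    rw [show a (i+1) - a i = 1 / N from hstep i, abs_of_pos (by positivity)]
    rw [show LD * (1/(N:ℝ)) * (1/N) = LD / N ^ 2 by ring]
  calc |(∑ i ∈ Finset.range N, (1 / (N:ℝ)) * D (((i:ℝ) + 1) / N)) - ∫ t in (0:ℝ)..1, D t|
      = |∑ i ∈ Finset.range N,
          ((1 / (N:ℝ)) * D (((i:ℝ) + 1) / N) - ∫ x in a i..a (i+1), D x)| := by
        rw [Finset.sum_sub_distrib, htot]
    _ ≤ ∑ i ∈ Finset.range N, |(1 / (N:ℝ)) * D (((i:ℝ) + 1) / N)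
          - ∫ x in a i..a (i+1), D x| := Finset.abs_sum_le_sum_abs _ _
    _ ≤ ∑ _i ∈ Finset.range N, LD / N ^ 2 := by
        exact Finset.sum_le_sum fun i hi => key i (Finset.mem_range.mp hi)
    _ = N * (LD / N ^ 2) := by rw [Finset.sum_const, Finset.card_range, nsmul_eq_mul]
    _ = LD / N := by field_simp

/-- Abstract combined Taylor estimate for `log g - (1/2) log p - (1/2) log (p t)`. -/
private lemma combine_taylor {g g1 g2 g3 p p1 p2 p3 : ℝ → ℝ} {t h Mall c : ℝ}
    (hh : 0 ≤ h) (hc : 0 < c) (hcM : c ≤ Mall)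
    (hgchain : ∀ x ∈ Icc (t-h) t, HasDerivAt g (g1 x) x ∧ HasDerivAt g1 (g2 x) x ∧
      HasDerivAt g2 (g3 x) x)
    (hpchain : ∀ x ∈ Icc (t-h) t, HasDerivAt p (p1 x) x ∧ HasDerivAt p1 (p2 x) x ∧
      HasDerivAt p2 (p3 x) x)
    (hgpos : ∀ x ∈ Icc (t-h) t, c ≤ g x) (hppos : ∀ x ∈ Icc (t-h) t, c ≤ p x)
    (hbnd : ∀ x ∈ Icc (t-h) t, |g1 x| ≤ Mall ∧ |g2 x| ≤ Mall ∧ |g3 x| ≤ Mall ∧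
      |p1 x| ≤ Mall ∧ |p2 x| ≤ Mall ∧ |p3 x| ≤ Mall)
    (hgt : g t = p t) (hg1t : 2 * g1 t = p1 t) (hht : t ∈ Icc (t-h) t) :
    |(Real.log (g (t-h)) - (1/2) * Real.log (p (t-h)) - (1/2) * Real.log (p t))
      - ((g2 t / p t - (g1 t / p t)^2) - (1/2) * (p2 t / p t - (p1 t / p t)^2)) * h^2 / 2|
    ≤ (9 * (Mall / c)^3) * h^3 := by
  have hfchain : ∀ x ∈ Icc (t-h) t,
      HasDerivAt (fun x => Real.log (g x) - (1/2) * Real.log (p x) - (1/2) * Real.log (p t))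
        (g1 x / g x - (1/2) * (p1 x / p x)) x ∧
      HasDerivAt (fun x => g1 x / g x - (1/2) * (p1 x / p x))
        ((g2 x / g x - (g1 x / g x)^2) - (1/2) * (p2 x / p x - (p1 x / p x)^2)) x ∧
      HasDerivAt (fun x => (g2 x / g x - (g1 x / g x)^2)
          - (1/2) * (p2 x / p x - (p1 x / p x)^2))
        ((g3 x / g x - 3 * (g2 x * g1 x) / g x ^ 2 + 2 * (g1 x / g x)^3)
          - (1/2) * (p3 x / p x - 3 * (p2 x * p1 x) / p x ^ 2 + 2 * (p1 x / p x)^3)) x := by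
    intro x hx
    obtain ⟨e1, e2, e3⟩ := hgchain x hx
    obtain ⟨q1, q2, q3⟩ := hpchain x hx
    obtain ⟨L1, L2, L3⟩ := hasDerivAt_log_triple e1 e2 e3 (lt_of_lt_of_le hc (hgpos x hx)).ne'
    obtain ⟨K1, K2, K3⟩ := hasDerivAt_log_triple q1 q2 q3 (lt_of_lt_of_le hc (hppos x hx)).ne'
    exact ⟨(L1.sub (K1.const_mul (1/2))).sub_const _,
      L2.sub (K2.const_mul (1/2)), L3.sub (K3.const_mul (1/2))⟩
  have hbf3 : ∀ x ∈ Icc (t-h) t,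
      |(g3 x / g x - 3 * (g2 x * g1 x) / g x ^ 2 + 2 * (g1 x / g x)^3)
        - (1/2) * (p3 x / p x - 3 * (p2 x * p1 x) / p x ^ 2 + 2 * (p1 x / p x)^3)|
      ≤ 9 * (Mall / c)^3 := by
    intro x hx
    obtain ⟨B1, B2, B3, B4, B5, B6⟩ := hbnd x hx
    have hGterm := abs_ratio3_bound hc hcM B1 B2 B3 (hgpos x hx)
    have hPterm := abs_ratio3_bound hc hcM B4 B5 B6 (hppos x hx)
    refine (abs_sub _ _).trans ?_
    rw [abs_mul, show |(1/2:ℝ)| = 1/2 by norm_num]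
    linarith [hGterm, hPterm]
  have hptpos : (0:ℝ) < p t := lt_of_lt_of_le hc (hppos t hht)
  have hft : Real.log (g t) - (1/2) * Real.log (p t) - (1/2) * Real.log (p t) = 0 := by
    rw [hgt]; ring
  have hf1t : g1 t / g t - (1/2) * (p1 t / p t) = 0 := by
    rw [hgt, ← hg1t]
    field_simp
    ring
  have hM30 : (0:ℝ) ≤ 9 * (Mall / c)^3 :=
    mul_nonneg (by norm_num) (pow_nonneg (div_nonneg (hc.le.trans hcM) hc.le) 3)
  have := taylor2_bound hh hM30 hfchain hbf3 hft hf1t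
  rw [hgt] at this
  exact this

set_option maxHeartbeats 1000000 in
private lemma psi_taylor {m : ℝ} (hm : 0 < m) {α σ A1 S1 A2 S2 A3 S3 : ℝ → ℝ}
    {s : Set ℝ} (hsub : Set.Icc (0 : ℝ) 1 ⊆ s)
    (hder : ∀ x ∈ s, HasDerivAt α (A1 x) x ∧ HasDerivAt A1 (A2 x) x ∧
      HasDerivAt A2 (A3 x) x ∧ HasDerivAt σ (S1 x) x ∧ HasDerivAt S1 (S2 x) x ∧
      HasDerivAt S2 (S3 x) x)
    {M m₀ : ℝ} (hM1 : 1 ≤ M) (hm₀ : 0 < m₀)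
    (hbM : ∀ x ∈ Icc (0:ℝ) 1, |α x| ≤ M ∧ |σ x| ≤ M ∧ |A1 x| ≤ M ∧ |S1 x| ≤ M ∧
      |A2 x| ≤ M ∧ |S2 x| ≤ M ∧ |A3 x| ≤ M ∧ |S3 x| ≤ M)
    (hφ : ∀ x ∈ Icc (0:ℝ) 1, m₀ ≤ (α x)^2 * m + (σ x)^2)
    {t h : ℝ} (ht : t ∈ Icc (0:ℝ) 1) (hth : t - h ∈ Icc (0:ℝ) 1) (hh : 0 ≤ h)
    (hg : ∀ x ∈ Icc (t-h) t, m₀/2 ≤ α x * α t * m + σ x * σ t) :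
    |Real.log (α (t-h) * α t * m + σ (t-h) * σ t)
      - (1/2) * Real.log ((α (t-h))^2 * m + (σ (t-h))^2)
      - (1/2) * Real.log ((α t)^2 * m + (σ t)^2)
      - (-m * ((α t * S1 t - σ t * A1 t)^2 / ((α t)^2 * m + (σ t)^2)^2)) * h^2 / 2|
    ≤ (9 * ((8 * M^2 * (m+1) + m₀) / (m₀/2))^3) * h^3 := by
  have hM0 : (0:ℝ) < M := lt_of_lt_of_le one_pos hM1
  have hMM : (0:ℝ) ≤ M^2 * (m+1) := by positivity
  have hIcc : Icc (t-h) t ⊆ Icc (0:ℝ) 1 := Icc_subset_Icc hth.1 ht.2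
  have hht : t ∈ Icc (t-h) t := by constructor <;> linarith [ht.1, ht.2]
  have key := combine_taylor (g := fun x => α x * α t * m + σ x * σ t)
    (g1 := fun x => A1 x * α t * m + S1 x * σ t)
    (g2 := fun x => A2 x * α t * m + S2 x * σ t)
    (g3 := fun x => A3 x * α t * m + S3 x * σ t)
    (p := fun x => (α x)^2 * m + (σ x)^2)
    (p1 := fun x => 2 * (α x * A1 x * m + σ x * S1 x))
    (p2 := fun x => 2 * (A1 x ^ 2 * m + α x * A2 x * m + S1 x ^ 2 + σ x * S2 x))
    (p3 := fun x => 2 * (3 * A1 x * A2 x * m + α x * A3 x * m + 3 * S1 x * S2 x + σ x * S3 x))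
    (t := t) (h := h) (Mall := 8 * M^2 * (m+1) + m₀) (c := m₀/2)
    hh (by positivity) (by nlinarith)
    (by
      intro x hx
      obtain ⟨d1, d2, d3, d4, d5, d6⟩ := hder x (hsub (hIcc hx))
      exact ⟨((d1.mul_const (α t)).mul_const m).add (d4.mul_const (σ t)),
        ((d2.mul_const (α t)).mul_const m).add (d5.mul_const (σ t)),
        ((d3.mul_const (α t)).mul_const m).add (d6.mul_const (σ t))⟩)
    (by
      intro x hx
      obtain ⟨d1, d2, d3, d4, d5, d6⟩ := hder x (hsub (hIcc hx))
      refine ⟨?_, ?_, ?_⟩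
      · exact (((d1.pow 2).mul_const m).add (d4.pow 2)).congr_deriv (by push_cast; ring)
      · exact ((((d1.mul d2).mul_const m).add (d4.mul d5)).const_mul 2).congr_deriv (by ring)
      · exact ((((((d2.pow 2).mul_const m).add ((d1.mul d3).mul_const m)).add
          ((d5.pow 2))).add (d4.mul d6)).const_mul 2).congr_deriv (by push_cast; ring))
    hg
    (fun x hx => le_trans (by linarith) (hφ x (hIcc hx)))
    (by
      intro x hx
      have hx01 := hIcc hx
      obtain ⟨b1, b2, b3, b4, b5, b6, b7, b8⟩ := hbM x hx01
      obtain ⟨c1, c2, c3, c4, c5, c6, c7, c8⟩ := hbM t ht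
      refine ⟨(abs_comb hm.le hM0.le b3 c1 b4 c2).trans (by nlinarith),
        (abs_comb hm.le hM0.le b5 c1 b6 c2).trans (by nlinarith),
        (abs_comb hm.le hM0.le b7 c1 b8 c2).trans (by nlinarith), ?_, ?_, ?_⟩
      · beta_reduce
        have i1 := abs_comb hm.le hM0.le b1 b3 b2 b4
        rw [abs_mul, show |(2:ℝ)| = 2 by norm_num]
        nlinarith
      · beta_reduce
        have e : 2 * (A1 x ^ 2 * m + α x * A2 x * m + S1 x ^ 2 + σ x * S2 x)
            = 2 * (A1 x * A1 x * m + S1 x * S1 x) + 2 * (α x * A2 x * m + σ x * S2 x) := by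
          ring
        rw [e]
        have i1 := abs_comb hm.le hM0.le b3 b3 b4 b4
        have i2 := abs_comb hm.le hM0.le b1 b5 b2 b6
        refine (abs_add_le _ _).trans ?_
        rw [abs_mul, abs_mul, show |(2:ℝ)| = 2 by norm_num]
        nlinarith
      · beta_reduce
        have e : 2 * (3 * A1 x * A2 x * m + α x * A3 x * m + 3 * S1 x * S2 x + σ x * S3 x)
            = 6 * (A1 x * A2 x * m + S1 x * S2 x) + 2 * (α x * A3 x * m + σ x * S3 x) := by
          ring
        rw [e]
        have i1 := abs_comb hm.le hM0.le b3 b5 b4 b6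
        have i2 := abs_comb hm.le hM0.le b1 b7 b2 b8
        refine (abs_add_le _ _).trans ?_
        rw [abs_mul, abs_mul, show |(6:ℝ)| = 6 by norm_num, show |(2:ℝ)| = 2 by norm_num]
        nlinarith)
    (by ring) (by ring) hht
  have hptpos : (0:ℝ) < (α t)^2 * m + (σ t)^2 := lt_of_lt_of_le hm₀ (hφ t ht)
  have hval : ((fun x => A2 x * α t * m + S2 x * σ t) t / ((α t)^2 * m + (σ t)^2)
        - ((fun x => A1 x * α t * m + S1 x * σ t) t / ((α t)^2 * m + (σ t)^2))^2)
      - (1/2) * ((fun x => 2 * (A1 x ^ 2 * m + α x * A2 x * m + S1 x ^ 2 + σ x * S2 x)) t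
          / ((α t)^2 * m + (σ t)^2)
        - ((fun x => 2 * (α x * A1 x * m + σ x * S1 x)) t / ((α t)^2 * m + (σ t)^2))^2)
      = -m * ((α t * S1 t - σ t * A1 t)^2 / ((α t)^2 * m + (σ t)^2)^2) := by
    simp only
    field_simp
    ring
  rw [hval] at key
  exact key

private lemma kl_term_bound {r e C n : ℝ} (hn : 1 ≤ n) (hC : 0 < C)
    (h1 : |r - e/n| ≤ C/n^2) (hbig : 2*(|e| + C) ≤ n) :
    |(1/2)*(Real.exp (2*r) - 2*r - 1) - e^2/n^2|
      ≤ (4*(|e| + C)^3 + C*(2*|e| + C))/n^3 := by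
  have hn0 : (0:ℝ) < n := lt_of_lt_of_le one_pos hn
  have heC : (0:ℝ) < |e| + C := by positivity
  have hediv : |e/n| = |e|/n := by rw [abs_div, abs_of_pos hn0]
  have hCn : C/n^2 ≤ C/n := by
    apply div_le_div_of_nonneg_left hC.le hn0
    nlinarith
  have hrb : |r| ≤ (|e| + C)/n := by
    have h2 : |r| ≤ |r - e/n| + |e/n| := by
      have := abs_add_le (r - e/n) (e/n)
      simpa using this
    rw [hediv] at h2
    have : |r - e/n| ≤ C/n := h1.trans hCn
    rw [add_div]
    linarith
  have hx : |2*r| ≤ 1 := by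
    rw [abs_mul, show |(2:ℝ)| = 2 by norm_num]
    have : 2*((|e| + C)/n) ≤ 1 := by
      rw [mul_div_assoc'] at *
      rw [div_le_one hn0]
      linarith
    calc 2*|r| ≤ 2*((|e| + C)/n) := by linarith
      _ ≤ 1 := this
  have hcube := exp_cubic_bound hx
  have hsplit : (1/2)*(Real.exp (2*r) - 2*r - 1) - e^2/n^2
      = (1/2)*(Real.exp (2*r) - 1 - 2*r - (2*r)^2/2) + (r - e/n)*(r + e/n) := by
    field_simp
    ring
  have hsum : |r + e/n| ≤ (2*|e| + C)/n := by
    have h2 : |r + e/n| ≤ |r| + |e/n| := abs_add_le _ _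
    rw [hediv] at h2
    rw [show (2*|e| + C)/n = (|e| + C)/n + |e|/n by ring]
    linarith
  have hB : |(r - e/n)*(r + e/n)| ≤ (C/n^2)*((2*|e| + C)/n) := by
    rw [abs_mul]
    exact mul_le_mul h1 hsum (abs_nonneg _) (by positivity)
  have hA : |(1/2)*(Real.exp (2*r) - 1 - 2*r - (2*r)^2/2)| ≤ 4*((|e| + C)/n)^3 := by
    rw [abs_mul, show |(1/2:ℝ)| = 1/2 by norm_num]
    have h3 : |2*r|^3 = 8*|r|^3 := by
      rw [abs_mul, show |(2:ℝ)| = 2 by norm_num]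
      ring
    have h4 : |r|^3 ≤ ((|e| + C)/n)^3 := pow_le_pow_left₀ (abs_nonneg r) hrb 3
    rw [h3] at hcube
    nlinarith [abs_nonneg (Real.exp (2*r) - 1 - 2*r - (2*r)^2/2)]
  rw [hsplit]
  refine (abs_add_le _ _).trans ?_
  have e1 : 4*((|e| + C)/n)^3 + (C/n^2)*((2*|e| + C)/n)
      = (4*(|e| + C)^3 + C*(2*|e| + C))/n^3 := by
    field_simp
  linarith [hA, hB]

set_option maxHeartbeats 2000000 in
private lemma key_estimate (m : ℝ) (hm : 0 < m) (α σ : ℝ → ℝ) (s : Set ℝ) (hs : IsOpen s)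
    (hsub : Set.Icc (0 : ℝ) 1 ⊆ s)
    (hα : ContDiffOn ℝ 3 α s) (hσ : ContDiffOn ℝ 3 σ s)
    (hpos : ∀ t ∈ Set.Icc (0 : ℝ) 1, 0 < (α t) ^ 2 * m + (σ t) ^ 2)
    (hα0 : α 0 = 1) (hσ0 : σ 0 = 0) (hα1 : α 1 = 0) (hσ1 : σ 1 = 1) :
    ∃ C > 0, ∃ N₀ : ℕ, 1 ≤ N₀ ∧ ∀ N, N₀ ≤ N →
      |(∑ j ∈ Finset.Icc 1 N, Real.log
          ((α (((j:ℝ)-1)/(N:ℝ)) * α ((j:ℝ)/(N:ℝ)) * m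
            + σ (((j:ℝ)-1)/(N:ℝ)) * σ ((j:ℝ)/(N:ℝ)))
          / ((α ((j:ℝ)/(N:ℝ)))^2 * m + (σ ((j:ℝ)/(N:ℝ)))^2)))
        - (1/2) * Real.log m
        - (-(m/2) * ∫ t in (0:ℝ)..1,
            (α t * deriv σ t - σ t * deriv α t)^2 / ((α t)^2 * m + (σ t)^2)^2) / N|
      ≤ C / (N:ℝ)^2 := by
  -- derivatives
  have hA1 : ContDiffOn ℝ 2 (deriv α) s := hα.deriv_of_isOpen hs (by norm_num)
  have hA2 : ContDiffOn ℝ 1 (deriv (deriv α)) s := hA1.deriv_of_isOpen hs (by norm_num)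
  have hA3c : ContinuousOn (deriv (deriv (deriv α))) s :=
    hA2.continuousOn_deriv_of_isOpen hs le_rfl
  have hS1 : ContDiffOn ℝ 2 (deriv σ) s := hσ.deriv_of_isOpen hs (by norm_num)
  have hS2 : ContDiffOn ℝ 1 (deriv (deriv σ)) s := hS1.deriv_of_isOpen hs (by norm_num)
  have hS3c : ContinuousOn (deriv (deriv (deriv σ))) s :=
    hS2.continuousOn_deriv_of_isOpen hs le_rfl
  have hda : ∀ (f : ℝ → ℝ), ContDiffOn ℝ 1 f s → ∀ x ∈ s, HasDerivAt f (deriv f x) x := by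
    intro f hf x hx
    exact ((hf.differentiableOn (by norm_num)).differentiableAt (hs.mem_nhds hx)).hasDerivAt
  have hder : ∀ x ∈ s, HasDerivAt α (deriv α x) x ∧
      HasDerivAt (deriv α) (deriv (deriv α) x) x ∧
      HasDerivAt (deriv (deriv α)) (deriv (deriv (deriv α)) x) x ∧
      HasDerivAt σ (deriv σ x) x ∧
      HasDerivAt (deriv σ) (deriv (deriv σ) x) x ∧
      HasDerivAt (deriv (deriv σ)) (deriv (deriv (deriv σ)) x) x := by
    intro x hx
    exact ⟨hda α (hα.of_le (by norm_num)) x hx, hda _ (hA1.of_le (by norm_num)) x hx,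
      hda _ hA2 x hx, hda σ (hσ.of_le (by norm_num)) x hx,
      hda _ (hS1.of_le (by norm_num)) x hx, hda _ hS2 x hx⟩
  -- uniform bounds
  obtain ⟨Ma, hMa⟩ := isCompact_Icc.exists_bound_of_continuousOn (hα.continuousOn.mono hsub)
  obtain ⟨Ms, hMs⟩ := isCompact_Icc.exists_bound_of_continuousOn (hσ.continuousOn.mono hsub)
  obtain ⟨Ma1, hMa1⟩ := isCompact_Icc.exists_bound_of_continuousOn (hA1.continuousOn.mono hsub)
  obtain ⟨Ms1, hMs1⟩ := isCompact_Icc.exists_bound_of_continuousOn (hS1.continuousOn.mono hsub)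
  obtain ⟨Ma2, hMa2⟩ := isCompact_Icc.exists_bound_of_continuousOn (hA2.continuousOn.mono hsub)
  obtain ⟨Ms2, hMs2⟩ := isCompact_Icc.exists_bound_of_continuousOn (hS2.continuousOn.mono hsub)
  obtain ⟨Ma3, hMa3⟩ := isCompact_Icc.exists_bound_of_continuousOn (hA3c.mono hsub)
  obtain ⟨Ms3, hMs3⟩ := isCompact_Icc.exists_bound_of_continuousOn (hS3c.mono hsub)
  obtain ⟨M, hM1, hbM⟩ : ∃ M : ℝ, 1 ≤ M ∧ ∀ x ∈ Icc (0:ℝ) 1,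
      |α x| ≤ M ∧ |σ x| ≤ M ∧ |deriv α x| ≤ M ∧ |deriv σ x| ≤ M ∧
      |deriv (deriv α) x| ≤ M ∧ |deriv (deriv σ) x| ≤ M ∧
      |deriv (deriv (deriv α)) x| ≤ M ∧ |deriv (deriv (deriv σ)) x| ≤ M := by
    refine ⟨1 + (|Ma| + |Ms| + |Ma1| + |Ms1| + |Ma2| + |Ms2| + |Ma3| + |Ms3|), by
      linarith [abs_nonneg Ma, abs_nonneg Ms, abs_nonneg Ma1, abs_nonneg Ms1,
        abs_nonneg Ma2, abs_nonneg Ms2, abs_nonneg Ma3, abs_nonneg Ms3], ?_⟩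
    intro x hx
    refine ⟨(hMa x hx).trans ?_, (hMs x hx).trans ?_, (hMa1 x hx).trans ?_,
      (hMs1 x hx).trans ?_, (hMa2 x hx).trans ?_, (hMs2 x hx).trans ?_,
      (hMa3 x hx).trans ?_, (hMs3 x hx).trans ?_⟩ <;>
    linarith [abs_nonneg Ma, abs_nonneg Ms, abs_nonneg Ma1, abs_nonneg Ms1,
      abs_nonneg Ma2, abs_nonneg Ms2, abs_nonneg Ma3, abs_nonneg Ms3,
      le_abs_self Ma, le_abs_self Ms, le_abs_self Ma1, le_abs_self Ms1,
      le_abs_self Ma2, le_abs_self Ms2, le_abs_self Ma3, le_abs_self Ms3]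
  have hM0 : (0:ℝ) < M := lt_of_lt_of_le one_pos hM1
  -- lower bound on φ
  have hφconts : ContinuousOn (fun t => (α t)^2 * m + (σ t)^2) s :=
    (((hα.continuousOn).pow 2).mul continuousOn_const).add ((hσ.continuousOn).pow 2)
  obtain ⟨x₀, hx₀, hminOn⟩ := isCompact_Icc.exists_isMinOn (Set.nonempty_Icc.mpr zero_le_one)
    (hφconts.mono hsub)
  obtain ⟨m₀, hm₀pos, hφlow⟩ : ∃ m₀ : ℝ, 0 < m₀ ∧
      ∀ x ∈ Icc (0:ℝ) 1, m₀ ≤ (α x)^2 * m + (σ x)^2 :=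
    ⟨(α x₀)^2 * m + (σ x₀)^2, hpos x₀ hx₀, fun x hx => isMinOn_iff.mp hminOn x hx⟩
  -- Lipschitz bounds for α, σ
  have hlipα : ∀ x ∈ Icc (0:ℝ) 1, ∀ y ∈ Icc (0:ℝ) 1, |α x - α y| ≤ M * |x - y| := by
    intro x hx y hy
    exact (convex_Icc (0:ℝ) 1).norm_image_sub_le_of_norm_hasDerivWithin_le
      (f' := deriv α) (fun z hz => ((hder z (hsub hz)).1).hasDerivWithinAt)
      (fun z hz => (hbM z hz).2.2.1) hy hx
  have hlipσ : ∀ x ∈ Icc (0:ℝ) 1, ∀ y ∈ Icc (0:ℝ) 1, |σ x - σ y| ≤ M * |x - y| := by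
    intro x hx y hy
    exact (convex_Icc (0:ℝ) 1).norm_image_sub_le_of_norm_hasDerivWithin_le
      (f' := deriv σ) (fun z hz => ((hder z (hsub hz)).2.2.2.1).hasDerivWithinAt)
      (fun z hz => (hbM z hz).2.2.2.1) hy hx
  obtain ⟨CL, hCL0, hCLdef⟩ : ∃ CL : ℝ, 0 < CL ∧ CL = M^2 * (m + 1) :=
    ⟨M^2 * (m + 1), by positivity, rfl⟩
  -- the D function and its Lipschitz bound on [0,1]
  obtain ⟨Df, hDdef⟩ : ∃ Df : ℝ → ℝ, Df = fun x => -m * ((α x * deriv σ x - σ x * deriv α x)^2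
      / ((α x)^2 * m + (σ x)^2)^2) := ⟨_, rfl⟩
  have hUopen : IsOpen (s ∩ (fun x => (α x)^2 * m + (σ x)^2) ⁻¹' (Ioi 0)) :=
    hφconts.isOpen_inter_preimage hs isOpen_Ioi
  have hUsub : Icc (0:ℝ) 1 ⊆ s ∩ (fun x => (α x)^2 * m + (σ x)^2) ⁻¹' (Ioi 0) :=
    fun x hx => ⟨hsub hx, hpos x hx⟩
  have hUs : s ∩ (fun x => (α x)^2 * m + (σ x)^2) ⁻¹' (Ioi 0) ⊆ s := Set.inter_subset_left
  have hDC1 : ContDiffOn ℝ 1 Df (s ∩ (fun x => (α x)^2 * m + (σ x)^2) ⁻¹' (Ioi 0)) := by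
    rw [hDdef]
    have h1 : ContDiffOn ℝ 1 α (s ∩ (fun x => (α x)^2 * m + (σ x)^2) ⁻¹' (Ioi 0)) := (hα.of_le (by norm_num)).mono hUs
    have h2 : ContDiffOn ℝ 1 σ (s ∩ (fun x => (α x)^2 * m + (σ x)^2) ⁻¹' (Ioi 0)) := (hσ.of_le (by norm_num)).mono hUs
    have h3 : ContDiffOn ℝ 1 (deriv α) (s ∩ (fun x => (α x)^2 * m + (σ x)^2) ⁻¹' (Ioi 0)) := (hA1.of_le (by norm_num)).mono hUs
    have h4 : ContDiffOn ℝ 1 (deriv σ) (s ∩ (fun x => (α x)^2 * m + (σ x)^2) ⁻¹' (Ioi 0)) := (hS1.of_le (by norm_num)).mono hUs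
    have hnum : ContDiffOn ℝ 1 (fun x => (α x * deriv σ x - σ x * deriv α x)^2) (s ∩ (fun x => (α x)^2 * m + (σ x)^2) ⁻¹' (Ioi 0)) :=
      ((h1.mul h4).sub (h2.mul h3)).pow 2
    have hden : ContDiffOn ℝ 1 (fun x => ((α x)^2 * m + (σ x)^2)^2) (s ∩ (fun x => (α x)^2 * m + (σ x)^2) ⁻¹' (Ioi 0)) :=
      (((h1.pow 2).mul contDiffOn_const).add (h2.pow 2)).pow 2
    have hq : ContDiffOn ℝ 1 (fun x => (α x * deriv σ x - σ x * deriv α x)^2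
        / ((α x)^2 * m + (σ x)^2)^2) (s ∩ (fun x => (α x)^2 * m + (σ x)^2) ⁻¹' (Ioi 0)) := by
      refine hnum.div hden ?_
      intro x hx
      exact pow_ne_zero 2 (ne_of_gt hx.2)
    exact contDiffOn_const.mul hq
  have hDcont : ContinuousOn Df (Icc 0 1) := (hDC1.continuousOn).mono hUsub
  have hDderiv : ∀ x ∈ s ∩ (fun x => (α x)^2 * m + (σ x)^2) ⁻¹' (Ioi 0),
      HasDerivAt Df (deriv Df x) x := fun x hx =>
    ((hDC1.differentiableOn (by norm_num)).differentiableAt (hUopen.mem_nhds hx)).hasDerivAt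
  obtain ⟨LD, hLD⟩ := isCompact_Icc.exists_bound_of_continuousOn
    ((hDC1.continuousOn_deriv_of_isOpen hUopen le_rfl).mono hUsub)
  have hLD0 : 0 ≤ LD := (norm_nonneg _).trans (hLD 0 ⟨le_rfl, zero_le_one⟩)
  have hDlip : ∀ x ∈ Icc (0:ℝ) 1, ∀ y ∈ Icc (0:ℝ) 1, |Df x - Df y| ≤ LD * |x - y| := by
    intro x hx y hy
    exact (convex_Icc (0:ℝ) 1).norm_image_sub_le_of_norm_hasDerivWithin_le
      (f' := deriv Df) (fun z hz => (hDderiv z (hUsub hz)).hasDerivWithinAt)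
      (fun z hz => hLD z hz) hy hx
  -- constants
  obtain ⟨M3, hM30, hM3def⟩ : ∃ M3 : ℝ, 0 ≤ M3 ∧
      M3 = 9 * ((8 * M^2 * (m+1) + m₀) / (m₀/2))^3 :=
    ⟨_, by positivity, rfl⟩
  refine ⟨M3 + LD + 1, by linarith, 2 + ⌈(2*CL + 1)/m₀⌉₊, by omega, ?_⟩
  intro N hN
  have hN1 : 1 ≤ N := by omega
  have hN0 : (0:ℝ) < N := by exact_mod_cast hN1
  have hNR : (2*CL + 1)/m₀ ≤ (N:ℝ) := by
    have h1 : ((2 + ⌈(2*CL + 1)/m₀⌉₊ : ℕ) : ℝ) ≤ (N:ℝ) := by exact_mod_cast hN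
    have h2 := Nat.le_ceil ((2*CL + 1)/m₀)
    push_cast at h1
    linarith
  have hhN : 1/(N:ℝ) ≤ m₀/(2*CL + 1) := by
    rw [div_le_div_iff₀ hN0 (by linarith)]
    have := (div_le_iff₀ hm₀pos).1 hNR
    linarith
  -- the positivity window
  have hwin : ∀ t ∈ Icc (0:ℝ) 1, t - 1/(N:ℝ) ∈ Icc (0:ℝ) 1 →
      ∀ x ∈ Icc (t - 1/(N:ℝ)) t, m₀/2 ≤ α x * α t * m + σ x * σ t := by
    intro t ht hth x hx
    have hx01 : x ∈ Icc (0:ℝ) 1 := ⟨le_trans hth.1 hx.1, le_trans hx.2 ht.2⟩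
    have hxt : |x - t| ≤ 1/(N:ℝ) := by
      rw [abs_of_nonpos (by linarith [hx.2])]
      linarith [hx.1]
    have h1 := hlipα x hx01 t ht
    have h2 := hlipσ x hx01 t ht
    obtain ⟨bα, bσ, _⟩ := hbM t ht
    have key : |(α x - α t) * α t * m + (σ x - σ t) * σ t| ≤ CL * (1/(N:ℝ)) := by
      refine (abs_add_le _ _).trans ?_
      rw [abs_mul, abs_mul, abs_mul, abs_of_nonneg hm.le]
      have e1 : |α x - α t| ≤ M * (1/(N:ℝ)) :=
        h1.trans (mul_le_mul_of_nonneg_left hxt hM0.le)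
      have e2 : |σ x - σ t| ≤ M * (1/(N:ℝ)) :=
        h2.trans (mul_le_mul_of_nonneg_left hxt hM0.le)
      have t1 : |α x - α t| * |α t| * m ≤ (M * (1/(N:ℝ))) * M * m := by
        have := mul_le_mul e1 bα (abs_nonneg (α t)) (by positivity)
        exact mul_le_mul_of_nonneg_right this hm.le
      have t2 : |σ x - σ t| * |σ t| ≤ (M * (1/(N:ℝ))) * M :=
        mul_le_mul e2 bσ (abs_nonneg (σ t)) (by positivity)
      have e3 : CL * (1/(N:ℝ)) = (M * (1/(N:ℝ))) * M * m + (M * (1/(N:ℝ))) * M := by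
        rw [hCLdef]; ring
      rw [e3]
      linarith
    have hCLN : CL * (1/(N:ℝ)) ≤ m₀/2 := by
      have h3 : CL * (1/(N:ℝ)) ≤ CL * (m₀/(2*CL+1)) := mul_le_mul_of_nonneg_left hhN hCL0.le
      have h4 : CL * (m₀/(2*CL+1)) ≤ m₀/2 := by
        rw [mul_div_assoc', div_le_div_iff₀ (by linarith) (by norm_num : (0:ℝ) < 2)]
        nlinarith [hm₀pos, hCL0]
      linarith
    have e : α x * α t * m + σ x * σ t
        = ((α t)^2 * m + (σ t)^2) + ((α x - α t) * α t * m + (σ x - σ t) * σ t) := by ring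
    have hφt := hφlow t ht
    have := abs_le.1 key
    rw [e]
    linarith [this.1]
  -- Step A : telescoping identity
  have hreindex : (∑ j ∈ Finset.Icc 1 N, Real.log
          ((α (((j:ℝ)-1)/(N:ℝ)) * α ((j:ℝ)/(N:ℝ)) * m
            + σ (((j:ℝ)-1)/(N:ℝ)) * σ ((j:ℝ)/(N:ℝ)))
          / ((α ((j:ℝ)/(N:ℝ)))^2 * m + (σ ((j:ℝ)/(N:ℝ)))^2)))
      = ∑ i ∈ Finset.range N, Real.log
          ((α (((1+i:ℕ):ℝ)/(N:ℝ) - 1/(N:ℝ)) * α (((1+i:ℕ):ℝ)/(N:ℝ)) * m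
            + σ (((1+i:ℕ):ℝ)/(N:ℝ) - 1/(N:ℝ)) * σ (((1+i:ℕ):ℝ)/(N:ℝ)))
          / ((α (((1+i:ℕ):ℝ)/(N:ℝ)))^2 * m + (σ (((1+i:ℕ):ℝ)/(N:ℝ)))^2)) := by
    rw [← Finset.Ico_add_one_right_eq_Icc, Finset.sum_Ico_eq_sum_range]
    refine Finset.sum_congr (by norm_num) fun i _ => ?_
    have harg : (((1+i:ℕ):ℝ) - 1)/(N:ℝ) = ((1+i:ℕ):ℝ)/(N:ℝ) - 1/(N:ℝ) := by
      push_cast; ring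
    rw [harg]
  -- cast helpers
  have hTh : ∀ i : ℕ, ((1+i:ℕ):ℝ)/(N:ℝ) - 1/(N:ℝ) = (i:ℝ)/(N:ℝ) := by
    intro i; push_cast; field_simp; ring
  have hT01 : ∀ i : ℕ, i < N → ((1+i:ℕ):ℝ)/(N:ℝ) ∈ Icc (0:ℝ) 1 := by
    intro i hi
    constructor
    · positivity
    · rw [div_le_one hN0]
      have : (1+i) ≤ N := by omega
      exact_mod_cast this
  have ht01 : ∀ i : ℕ, i ≤ N → ((i:ℕ):ℝ)/(N:ℝ) ∈ Icc (0:ℝ) 1 := by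
    intro i hi
    constructor
    · positivity
    · rw [div_le_one hN0]; exact_mod_cast hi
  have hnumpos : ∀ i : ℕ, i < N → m₀/2 ≤ α ((i:ℝ)/(N:ℝ)) * α (((1+i:ℕ):ℝ)/(N:ℝ)) * m
      + σ ((i:ℝ)/(N:ℝ)) * σ (((1+i:ℕ):ℝ)/(N:ℝ)) := by
    intro i hi
    have h1 := hT01 i hi
    have h2 : ((1+i:ℕ):ℝ)/(N:ℝ) - 1/(N:ℝ) ∈ Icc (0:ℝ) 1 := by
      rw [hTh i]; exact ht01 i hi.le
    have h3 : (i:ℝ)/(N:ℝ) ∈ Icc (((1+i:ℕ):ℝ)/(N:ℝ) - 1/(N:ℝ)) (((1+i:ℕ):ℝ)/(N:ℝ)) := by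
      rw [hTh i]
      refine ⟨le_rfl, ?_⟩
      rw [div_le_div_iff₀ hN0 hN0]
      have : (i:ℝ) ≤ ((1+i:ℕ):ℝ) := by push_cast; linarith
      nlinarith
    exact hwin _ h1 h2 _ h3
  -- the F telescoping function
  obtain ⟨F, hF⟩ : ∃ F : ℕ → ℝ, F = fun i : ℕ =>
      (1/2) * Real.log ((α ((i:ℝ)/(N:ℝ)))^2 * m + (σ ((i:ℝ)/(N:ℝ)))^2) := ⟨_, rfl⟩
  have expand : ∀ i ∈ Finset.range N, Real.log
      ((α (((1+i:ℕ):ℝ)/(N:ℝ) - 1/(N:ℝ)) * α (((1+i:ℕ):ℝ)/(N:ℝ)) * m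
        + σ (((1+i:ℕ):ℝ)/(N:ℝ) - 1/(N:ℝ)) * σ (((1+i:ℕ):ℝ)/(N:ℝ)))
      / ((α (((1+i:ℕ):ℝ)/(N:ℝ)))^2 * m + (σ (((1+i:ℕ):ℝ)/(N:ℝ)))^2))
      = (Real.log (α ((i:ℝ)/(N:ℝ)) * α (((1+i:ℕ):ℝ)/(N:ℝ)) * m
          + σ ((i:ℝ)/(N:ℝ)) * σ (((1+i:ℕ):ℝ)/(N:ℝ)))
        - (1/2) * Real.log ((α ((i:ℝ)/(N:ℝ)))^2 * m + (σ ((i:ℝ)/(N:ℝ)))^2)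
        - (1/2) * Real.log ((α (((1+i:ℕ):ℝ)/(N:ℝ)))^2 * m + (σ (((1+i:ℕ):ℝ)/(N:ℝ)))^2))
        + (F i - F (i+1)) := by
    intro i hi
    have hi' := Finset.mem_range.mp hi
    have h1 : (0:ℝ) < α ((i:ℝ)/(N:ℝ)) * α (((1+i:ℕ):ℝ)/(N:ℝ)) * m
        + σ ((i:ℝ)/(N:ℝ)) * σ (((1+i:ℕ):ℝ)/(N:ℝ)) :=
      lt_of_lt_of_le (by positivity) (hnumpos i hi')
    have h2 : (0:ℝ) < (α (((1+i:ℕ):ℝ)/(N:ℝ)))^2 * m + (σ (((1+i:ℕ):ℝ)/(N:ℝ)))^2 :=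
      hpos _ (hT01 i hi')
    rw [hTh i, Real.log_div h1.ne' h2.ne', hF]
    simp only
    rw [show ((i+1:ℕ):ℝ) = ((1+i:ℕ):ℝ) by push_cast; ring]
    ring
  have hF0 : F 0 = (1/2) * Real.log m := by
    rw [hF]
    norm_num [hα0, hσ0]
  have hFN : F N = 0 := by
    rw [hF]
    simp only [div_self hN0.ne']
    rw [hα1, hσ1]
    norm_num
  have stepA : (∑ j ∈ Finset.Icc 1 N, Real.log
          ((α (((j:ℝ)-1)/(N:ℝ)) * α ((j:ℝ)/(N:ℝ)) * m
            + σ (((j:ℝ)-1)/(N:ℝ)) * σ ((j:ℝ)/(N:ℝ)))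
          / ((α ((j:ℝ)/(N:ℝ)))^2 * m + (σ ((j:ℝ)/(N:ℝ)))^2)))
        - (1/2) * Real.log m
      = ∑ i ∈ Finset.range N,
        (Real.log (α ((i:ℝ)/(N:ℝ)) * α (((1+i:ℕ):ℝ)/(N:ℝ)) * m
          + σ ((i:ℝ)/(N:ℝ)) * σ (((1+i:ℕ):ℝ)/(N:ℝ)))
        - (1/2) * Real.log ((α ((i:ℝ)/(N:ℝ)))^2 * m + (σ ((i:ℝ)/(N:ℝ)))^2)
        - (1/2) * Real.log ((α (((1+i:ℕ):ℝ)/(N:ℝ)))^2 * m + (σ (((1+i:ℕ):ℝ)/(N:ℝ)))^2)) := by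
    rw [hreindex, Finset.sum_congr rfl expand, Finset.sum_add_distrib,
      Finset.sum_range_sub' F N, hF0, hFN]
    ring
  -- Step B : Taylor estimates
  have taylor_i : ∀ i ∈ Finset.range N,
      |(Real.log (α ((i:ℝ)/(N:ℝ)) * α (((1+i:ℕ):ℝ)/(N:ℝ)) * m
          + σ ((i:ℝ)/(N:ℝ)) * σ (((1+i:ℕ):ℝ)/(N:ℝ)))
        - (1/2) * Real.log ((α ((i:ℝ)/(N:ℝ)))^2 * m + (σ ((i:ℝ)/(N:ℝ)))^2)
        - (1/2) * Real.log ((α (((1+i:ℕ):ℝ)/(N:ℝ)))^2 * m + (σ (((1+i:ℕ):ℝ)/(N:ℝ)))^2))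
        - Df (((1+i:ℕ):ℝ)/(N:ℝ)) * (1/(N:ℝ))^2 / 2|
      ≤ M3 * (1/(N:ℝ))^3 := by
    intro i hi
    have hi' := Finset.mem_range.mp hi
    have h2 : ((1+i:ℕ):ℝ)/(N:ℝ) - 1/(N:ℝ) ∈ Icc (0:ℝ) 1 := by
      rw [hTh i]; exact ht01 i hi'.le
    have key := psi_taylor hm hsub hder hM1 hm₀pos hbM hφlow (hT01 i hi') h2
      (by positivity) (hwin _ (hT01 i hi') h2)
    rw [hTh i] at key
    rw [hDdef, hM3def]
    simp only
    exact key
  have stepB : |(∑ i ∈ Finset.range N,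
        (Real.log (α ((i:ℝ)/(N:ℝ)) * α (((1+i:ℕ):ℝ)/(N:ℝ)) * m
          + σ ((i:ℝ)/(N:ℝ)) * σ (((1+i:ℕ):ℝ)/(N:ℝ)))
        - (1/2) * Real.log ((α ((i:ℝ)/(N:ℝ)))^2 * m + (σ ((i:ℝ)/(N:ℝ)))^2)
        - (1/2) * Real.log ((α (((1+i:ℕ):ℝ)/(N:ℝ)))^2 * m + (σ (((1+i:ℕ):ℝ)/(N:ℝ)))^2)))
      - ∑ i ∈ Finset.range N, Df (((1+i:ℕ):ℝ)/(N:ℝ)) * (1/(N:ℝ))^2 / 2|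
      ≤ M3 / (N:ℝ)^2 := by
    rw [← Finset.sum_sub_distrib]
    refine (Finset.abs_sum_le_sum_abs _ _).trans ?_
    refine (Finset.sum_le_sum taylor_i).trans ?_
    rw [Finset.sum_const, Finset.card_range, nsmul_eq_mul]
    rw [show (N:ℝ) * (M3 * (1/(N:ℝ))^3) = M3 / (N:ℝ)^2 * ((N:ℝ) * (1/(N:ℝ))) by ring,
      mul_one_div, div_self hN0.ne', mul_one]
  have hsum2 : (∑ i ∈ Finset.range N, Df (((1+i:ℕ):ℝ)/(N:ℝ)) * (1/(N:ℝ))^2 / 2)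
      = (1/(2*(N:ℝ))) * (∑ i ∈ Finset.range N, (1/(N:ℝ)) * Df (((i:ℝ)+1)/(N:ℝ))) := by
    rw [Finset.mul_sum]
    refine Finset.sum_congr rfl fun i _ => ?_
    rw [show ((1+i:ℕ):ℝ) = (i:ℝ)+1 by push_cast; ring]
    ring
  have stepC := riemann_bound hLD0 hDcont hDlip hN1
  have hInt : (∫ t in (0:ℝ)..1, Df t) = -m * ∫ t in (0:ℝ)..1,
      (α t * deriv σ t - σ t * deriv α t)^2 / ((α t)^2 * m + (σ t)^2)^2 := by
    rw [hDdef]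
    exact intervalIntegral.integral_const_mul _ _
  have hEt : (-(m/2) * ∫ t in (0:ℝ)..1,
        (α t * deriv σ t - σ t * deriv α t)^2 / ((α t)^2 * m + (σ t)^2)^2) / (N:ℝ)
      = (1/(2*(N:ℝ))) * ∫ t in (0:ℝ)..1, Df t := by
    rw [hInt]
    field_simp
  rw [stepA, hEt]
  have tri := abs_sub_le
    (∑ i ∈ Finset.range N,
        (Real.log (α ((i:ℝ)/(N:ℝ)) * α (((1+i:ℕ):ℝ)/(N:ℝ)) * m
          + σ ((i:ℝ)/(N:ℝ)) * σ (((1+i:ℕ):ℝ)/(N:ℝ)))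
        - (1/2) * Real.log ((α ((i:ℝ)/(N:ℝ)))^2 * m + (σ ((i:ℝ)/(N:ℝ)))^2)
        - (1/2) * Real.log ((α (((1+i:ℕ):ℝ)/(N:ℝ)))^2 * m + (σ (((1+i:ℕ):ℝ)/(N:ℝ)))^2)))
    (∑ i ∈ Finset.range N, Df (((1+i:ℕ):ℝ)/(N:ℝ)) * (1/(N:ℝ))^2 / 2)
    ((1/(2*(N:ℝ))) * ∫ t in (0:ℝ)..1, Df t)
  refine tri.trans ?_
  have part2 : |(∑ i ∈ Finset.range N, Df (((1+i:ℕ):ℝ)/(N:ℝ)) * (1/(N:ℝ))^2 / 2)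
      - (1/(2*(N:ℝ))) * ∫ t in (0:ℝ)..1, Df t| ≤ (1/(2*(N:ℝ))) * (LD/(N:ℝ)) := by
    rw [hsum2, ← mul_sub, abs_mul, abs_of_pos (by positivity : (0:ℝ) < 1/(2*(N:ℝ)))]
    exact mul_le_mul_of_nonneg_left stepC (by positivity)
  refine (add_le_add stepB part2).trans ?_
  have e : M3 / (N:ℝ)^2 + (1/(2*(N:ℝ))) * (LD/(N:ℝ)) = (M3 + LD/2) / (N:ℝ)^2 := by
    field_simp
  rw [e]
  exact div_le_div₀ (by linarith) (by linarith) (by positivity) le_rfl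


/-- Under variance-preserving boundary conditions, the KL divergence
`(1/2)·Σ_ℓ (exp(2r_ℓ(N)) − 2r_ℓ(N) − 1)` between the reverse-sampling output
distribution and the source distribution equals `(1/N²)·Σ_ℓ E¹(μ_ℓ)²` up to an
`O(1/N³)` error; in particular it is of order `1/N²`. -/
theorem stmt_8 (k : ℕ) (hk : 1 ≤ k) (μ : Fin k → ℝ) (hμ : ∀ ℓ, 0 < μ ℓ)
    (α σ : ℝ → ℝ) (s : Set ℝ) (hs : IsOpen s)
    (hsub : Set.Icc (0 : ℝ) 1 ⊆ s)
    (hα : ContDiffOn ℝ 3 α s) (hσ : ContDiffOn ℝ 3 σ s)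
    (hpos : ∀ t ∈ Set.Icc (0 : ℝ) 1, ∀ ℓ, 0 < (α t) ^ 2 * μ ℓ + (σ t) ^ 2)
    (hα0 : α 0 = 1) (hσ0 : σ 0 = 0) (hα1 : α 1 = 0) (hσ1 : σ 1 = 1)
    (S : ℝ → ℕ → ℝ)
    (hS : ∀ (m : ℝ) (N : ℕ), S m N = ∑ j ∈ Finset.Icc 1 N,
      Real.log ((α (((j : ℝ) - 1) / (N : ℝ)) * α ((j : ℝ) / (N : ℝ)) * m
          + σ (((j : ℝ) - 1) / (N : ℝ)) * σ ((j : ℝ) / (N : ℝ)))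
        / ((α ((j : ℝ) / (N : ℝ))) ^ 2 * m + (σ ((j : ℝ) / (N : ℝ))) ^ 2)))
    (r : Fin k → ℕ → ℝ)
    (hr : ∀ ℓ N, r ℓ N = S (μ ℓ) N - (1 / 2) * Real.log (μ ℓ))
    (E : Fin k → ℝ)
    (hE : ∀ ℓ, E ℓ = -(μ ℓ / 2) * ∫ t in (0 : ℝ)..1,
        (α t * deriv σ t - σ t * deriv α t) ^ 2 / ((α t) ^ 2 * μ ℓ + (σ t) ^ 2) ^ 2) :
    ∃ C > 0, ∃ N₀ : ℕ, ∀ N ≥ N₀,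
      |(1 / 2) * ∑ ℓ : Fin k, (Real.exp (2 * r ℓ N) - 2 * r ℓ N - 1)
        - (1 / (N : ℝ) ^ 2) * ∑ ℓ : Fin k, (E ℓ) ^ 2|
      ≤ C / (N : ℝ) ^ 3 := by
  have key : ∀ ℓ : Fin k, ∃ C > 0, ∃ N₀ : ℕ, 1 ≤ N₀ ∧ ∀ N, N₀ ≤ N →
      |r ℓ N - E ℓ / (N:ℝ)| ≤ C / (N:ℝ)^2 := by
    intro ℓ
    obtain ⟨C, hC, N₀, hN₀1, hbound⟩ := key_estimate (μ ℓ) (hμ ℓ) α σ s hs hsub hα hσ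
      (fun t ht => hpos t ht ℓ) hα0 hσ0 hα1 hσ1
    refine ⟨C, hC, N₀, hN₀1, fun N hN => ?_⟩
    have h2 := hbound N hN
    rw [hr ℓ N, hS (μ ℓ) N, hE ℓ]
    exact h2
  choose C hC N₀ hN₀1 hbound using key
  refine ⟨(∑ ℓ : Fin k, (4*(|E ℓ| + C ℓ)^3 + C ℓ*(2*|E ℓ| + C ℓ))) + 1, ?_,
    ∑ ℓ : Fin k, (N₀ ℓ + ⌈2*(|E ℓ| + C ℓ)⌉₊ + 1), fun N hN => ?_⟩
  · have hnn : ∀ ℓ ∈ Finset.univ (α := Fin k),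
        0 ≤ 4*(|E ℓ| + C ℓ)^3 + C ℓ*(2*|E ℓ| + C ℓ) := by
      intro ℓ _
      have := hC ℓ
      have := abs_nonneg (E ℓ)
      positivity
    have := Finset.sum_nonneg hnn
    linarith
  have hperl : ∀ ℓ : Fin k, N₀ ℓ + ⌈2*(|E ℓ| + C ℓ)⌉₊ + 1 ≤ N := by
    intro ℓ
    refine le_trans ?_ hN
    exact Finset.single_le_sum (f := fun ℓ => N₀ ℓ + ⌈2*(|E ℓ| + C ℓ)⌉₊ + 1)
      (fun _ _ => Nat.zero_le _) (Finset.mem_univ ℓ)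
  have hN1 : 1 ≤ N := by
    have := hperl ⟨0, by omega⟩
    omega
  have hN1R : (1:ℝ) ≤ (N:ℝ) := by exact_mod_cast hN1
  have hN0R : (0:ℝ) < (N:ℝ) := by linarith
  -- rewrite the goal as a single sum
  have hgoal : (1 / 2) * ∑ ℓ : Fin k, (Real.exp (2 * r ℓ N) - 2 * r ℓ N - 1)
        - (1 / (N : ℝ) ^ 2) * ∑ ℓ : Fin k, (E ℓ) ^ 2
      = ∑ ℓ : Fin k, ((1/2)*(Real.exp (2 * r ℓ N) - 2 * r ℓ N - 1) - (E ℓ)^2/(N:ℝ)^2) := by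
    rw [Finset.mul_sum, Finset.mul_sum, ← Finset.sum_sub_distrib]
    refine Finset.sum_congr rfl fun ℓ _ => ?_
    ring
  rw [hgoal]
  refine (Finset.abs_sum_le_sum_abs _ _).trans ?_
  have hterm : ∀ ℓ : Fin k,
      |(1/2)*(Real.exp (2 * r ℓ N) - 2 * r ℓ N - 1) - (E ℓ)^2/(N:ℝ)^2|
      ≤ (4*(|E ℓ| + C ℓ)^3 + C ℓ*(2*|E ℓ| + C ℓ))/(N:ℝ)^3 := by
    intro ℓ
    have h1 : |r ℓ N - E ℓ/(N:ℝ)| ≤ C ℓ/(N:ℝ)^2 := hbound ℓ N (by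
      have := hperl ℓ; omega)
    have hbig : 2*(|E ℓ| + C ℓ) ≤ (N:ℝ) := by
      have h2 : (⌈2*(|E ℓ| + C ℓ)⌉₊ : ℝ) ≤ (N:ℝ) := by
        have := hperl ℓ
        exact_mod_cast by omega
      exact (Nat.le_ceil _).trans h2
    exact kl_term_bound hN1R (hC ℓ) h1 hbig
  refine (Finset.sum_le_sum fun ℓ _ => hterm ℓ).trans ?_
  rw [← Finset.sum_div]
  apply div_le_div₀ ?_ ?_ (by positivity) le_rfl
  · have hnn : ∀ ℓ ∈ Finset.univ (α := Fin k),
        0 ≤ 4*(|E ℓ| + C ℓ)^3 + C ℓ*(2*|E ℓ| + C ℓ) := by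
      intro ℓ _
      have := hC ℓ
      have := abs_nonneg (E ℓ)
      positivity
    have := Finset.sum_nonneg hnn
    linarith
  · linarith
end
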